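/- arXiv:1908.07266 — 6 statements merged into one kernel-verified Lean document; each statement's English description precedes it below -/
import Mathlib

section
/- Let Ω be a subset of ℂ and let Ψ : ℂ³ × D → ℂ satisfy the admissibility condition: Ψ(r,s,t;z) ∉ Ω whenever z ∈ D, θ ∈ [0,2π), m ≥ 1, r = e^{e^{iθ}}, s = m e^{iθ} e^{e^{iθ}}, and Re(1 + t/s) ≥ m(1 + cos θ). If p is analytic on D with p(0) = 1 and Ψ(p(z), z p'(z), z² p''(z); z) ∈ Ω for all z ∈ D, then p belongs to the class P_e. -/
open Complex Metric Set

noncomputable def poch (x : ℂ) (n : ℕ) : ℂ := ∏ k ∈ Finset.range n, (x + k)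

/-- The class `P_e`: `p` is analytic on the unit disk, `p 0 = 1`, and `p` maps the
unit disk into `exp(𝔻)` (equivalently, `p` is subordinate to `exp`). -/
def memPe (p : ℂ → ℂ) : Prop :=
  AnalyticOnNhd ℂ p (Metric.ball 0 1) ∧ p 0 = 1 ∧
    ∀ z ∈ Metric.ball (0:ℂ) 1, p z ∈ Complex.exp '' Metric.ball 0 1

/-- The class `K_e` of exponential convex functions. -/
def memKe (f : ℂ → ℂ) : Prop :=
  AnalyticOnNhd ℂ f (Metric.ball 0 1) ∧ f 0 = 0 ∧ deriv f 0 = 1 ∧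
    (∀ z ∈ Metric.ball (0:ℂ) 1, deriv f z ≠ 0) ∧
    memPe (fun z => 1 + z * deriv (deriv f) z / deriv f z)

/-- The class `S*_e` of exponential starlike functions. -/
def memSe (f : ℂ → ℂ) : Prop :=
  AnalyticOnNhd ℂ f (Metric.ball 0 1) ∧ f 0 = 0 ∧ deriv f 0 = 1 ∧
    (∀ z ∈ Metric.ball (0:ℂ) 1, z ≠ 0 → f z ≠ 0) ∧
    memPe (fun z => if z = 0 then 1 else z * deriv f z / f z)


/-- Second-derivative test at a global max. -/
lemma aux_second_deriv_nonpos {g g' : ℝ → ℝ} {L : ℝ}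
    (hg : ∀ s, HasDerivAt g (g' s) s) (hg' : HasDerivAt g' L 0)
    (hmax : ∀ s, g s ≤ g 0) (h0 : g' 0 = 0) : L ≤ 0 := by
  by_contra hL
  push_neg at hL
  have hslope : Filter.Tendsto (slope g' 0) (nhdsWithin 0 {(0:ℝ)}ᶜ) (nhds L) :=
    hasDerivAt_iff_tendsto_slope.mp hg'
  have hev : ∀ᶠ s in nhdsWithin 0 {(0:ℝ)}ᶜ, 0 < slope g' 0 s :=
    hslope.eventually (eventually_gt_nhds hL)
  have hev' : ∀ᶠ s in nhdsWithin (0:ℝ) (Set.Ioi 0), 0 < slope g' 0 s :=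
    hev.filter_mono (nhdsWithin_mono 0 (fun x hx => ne_of_gt hx))
  obtain ⟨u, hu, hu0, hu'⟩ := mem_nhdsWithin.mp hev'
  obtain ⟨ε, hε, hball⟩ := Metric.isOpen_iff.mp hu 0 hu0
  have hgpos : ∀ s ∈ Set.Ioo (0:ℝ) ε, 0 < g' s := by
    intro s hs
    have hsu : s ∈ u := hball (by rw [Metric.mem_ball, Real.dist_eq, sub_zero, abs_of_pos hs.1]; exact hs.2)
    have h1 : 0 < slope g' 0 s := hu' ⟨hsu, hs.1⟩
    rw [slope_def_field, h0, sub_zero, sub_zero, div_pos_iff] at h1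
    rcases h1 with ⟨h, _⟩ | ⟨_, h⟩
    · exact h
    · linarith [hs.1]
  have hmono : StrictMonoOn g (Set.Icc 0 ε) := by
    apply strictMonoOn_of_deriv_pos (convex_Icc 0 ε)
    · exact fun x _ => (hg x).continuousAt.continuousWithinAt
    · intro x hx
      rw [interior_Icc] at hx
      rw [(hg x).deriv]
      exact hgpos x hx
  have : g 0 < g ε := hmono ⟨le_refl 0, le_of_lt hε⟩ ⟨le_of_lt hε, le_refl ε⟩ hε
  exact absurd (hmax ε) (not_le.mpr this)

/-- Lower bound for the derivative at 1 of a function with `G t ≤ t ^ 2` and `G 1 = 1`. -/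
lemma aux_deriv_ge_two {G : ℝ → ℝ} {d : ℝ}
    (hG : HasDerivAt G d 1) (hle : ∀ t, 0 ≤ t → t < 1 → G t ≤ t ^ 2) (h1 : G 1 = 1) : 2 ≤ d := by
  have hslope : Filter.Tendsto (slope G 1) (nhdsWithin 1 {(1:ℝ)}ᶜ) (nhds d) :=
    hasDerivAt_iff_tendsto_slope.mp hG
  have hslope' : Filter.Tendsto (slope G 1) (nhdsWithin 1 (Set.Iio 1)) (nhds d) :=
    hslope.mono_left (nhdsWithin_mono 1 (fun x hx => ne_of_lt hx))
  have htend : Filter.Tendsto (fun t : ℝ => t + 1) (nhdsWithin 1 (Set.Iio 1)) (nhds 2) := by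
    have h : Filter.Tendsto (fun t : ℝ => t + 1) (nhds (1:ℝ)) (nhds (1 + 1)) :=
      Filter.Tendsto.add_const 1 Filter.tendsto_id
    norm_num at h
    exact h.mono_left (nhdsWithin_le_nhds (s := Set.Iio 1))
  refine le_of_tendsto_of_tendsto htend hslope' ?_
  have hev : ∀ᶠ t in nhdsWithin (1:ℝ) (Set.Iio 1), t ∈ Set.Ioo (0:ℝ) 1 :=
    Filter.eventually_mem_set.mpr (Ioo_mem_nhdsLT (by norm_num))
  filter_upwards [hev] with t ht
  have h2 : G t ≤ t ^ 2 := hle t (le_of_lt ht.1) ht.2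
  have h3 : t - 1 < 0 := by linarith [ht.2]
  show t + 1 ≤ slope G 1 t
  rw [slope_def_field, h1]
  rw [le_div_iff_of_neg h3]
  nlinarith [h2]

lemma aux_hasDerivAt_re {F : ℝ → ℂ} {F' : ℂ} {t : ℝ} (h : HasDerivAt F F' t) :
    HasDerivAt (fun s => (F s).re) F'.re t :=
  (Complex.reCLM.hasFDerivAt.comp_hasDerivAt t h)

lemma aux_hasDerivAt_im {F : ℝ → ℂ} {F' : ℂ} {t : ℝ} (h : HasDerivAt F F' t) :
    HasDerivAt (fun s => (F s).im) F'.im t :=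
  (Complex.imCLM.hasFDerivAt.comp_hasDerivAt t h)

/-- Derivative of `normSq ∘ F` for a curve `F : ℝ → ℂ`. -/
lemma aux_hasDerivAt_normSq {F : ℝ → ℂ} {F' : ℂ} {t : ℝ} (h : HasDerivAt F F' t) :
    HasDerivAt (fun s => Complex.normSq (F s)) (2 * ((starRingEnd ℂ) (F t) * F').re) t := by
  have h1 := ((aux_hasDerivAt_re h).mul (aux_hasDerivAt_re h)).add
    ((aux_hasDerivAt_im h).mul (aux_hasDerivAt_im h))
  have : (fun s => (F s).re * (F s).re + (F s).im * (F s).im)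
      = fun s => Complex.normSq (F s) := by
    funext s; rw [Complex.normSq_apply]
  change HasDerivAt (fun s => (F s).re * (F s).re + (F s).im * (F s).im) _ t at h1
  rw [this] at h1
  convert h1 using 1
  simp [Complex.mul_re, Complex.conj_re, Complex.conj_im]
  ring

/-- **Jack–Miller–Mocanu lemma** (second order form), for a disk of radius `r₀`. -/
lemma jack_lemma {φ : ℂ → ℂ} {z₀ : ℂ} {r₀ : ℝ} (hr₀ : 0 < r₀) (hz₀ : ‖z₀‖ = r₀)
    (hφ : AnalyticOnNhd ℂ φ (Metric.closedBall (0:ℂ) r₀))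
    (hφ0 : φ 0 = 0)
    (hle : ∀ z ∈ Metric.closedBall (0:ℂ) r₀, ‖φ z‖ ≤ 1)
    (hlt : ∀ z ∈ Metric.ball (0:ℂ) r₀, ‖φ z‖ < 1)
    (ha : ‖φ z₀‖ = 1) :
    ∃ m : ℝ, 1 ≤ m ∧ z₀ * deriv φ z₀ = (m : ℂ) * φ z₀ ∧
      m ^ 2 - m ≤ (z₀ ^ 2 * deriv (deriv φ) z₀ * (starRingEnd ℂ) (φ z₀)).re := by
  set a := φ z₀ with ha_def
  set A := deriv φ z₀ with hA_def
  set B := deriv (deriv φ) z₀ with hB_def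
  set c := z₀ * A with hc_def
  have hz₀cb : z₀ ∈ Metric.closedBall (0:ℂ) r₀ := by
    simp [Metric.mem_closedBall, dist_eq_norm, hz₀]
  have hz₀ne : z₀ ≠ 0 := by
    intro h; rw [h, norm_zero] at hz₀; exact absurd hz₀.symm (ne_of_gt hr₀)
  -- Step 1: the radial curve, giving 1 ≤ (conj a * c).re
  have step1 : 1 ≤ ((starRingEnd ℂ) a * c).re := by
    have hC : HasDerivAt (fun t : ℝ => (t : ℂ) * z₀) z₀ 1 := by
      have h1 : HasDerivAt (fun w : ℂ => w * z₀) (1 * z₀) ((1:ℝ) : ℂ) :=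
        (hasDerivAt_id _).mul_const z₀
      rw [one_mul] at h1
      exact h1.comp_ofReal
    have hφz₀ : HasDerivAt φ A z₀ := (hφ z₀ hz₀cb).differentiableAt.hasDerivAt
    have hF : HasDerivAt (fun t : ℝ => φ ((t : ℂ) * z₀)) c 1 := by
      have h1 : HasDerivAt (fun w : ℂ => w * z₀) (1 * z₀) (1:ℂ) := (hasDerivAt_id _).mul_const z₀
      rw [one_mul] at h1
      have hφz₀' : HasDerivAt φ A ((fun w : ℂ => w * z₀) 1) := by simpa using hφz₀
      have h2 := (hφz₀'.comp (1:ℂ) h1).comp_ofReal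
      have h3 : A * z₀ = c := mul_comm A z₀
      rw [h3] at h2
      exact h2
    have hG : HasDerivAt (fun t : ℝ => Complex.normSq (φ ((t : ℂ) * z₀)))
        (2 * ((starRingEnd ℂ) (φ (((1:ℝ) : ℂ) * z₀)) * c).re) 1 := aux_hasDerivAt_normSq hF
    have h1z : (((1:ℝ) : ℂ) * z₀) = z₀ := by push_cast; rw [one_mul]
    rw [h1z] at hG
    have hbound : ∀ t : ℝ, 0 ≤ t → t < 1 →
        Complex.normSq (φ ((t : ℂ) * z₀)) ≤ t ^ 2 := by
      intro t ht0 ht1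
      have hmem : (t : ℂ) * z₀ ∈ Metric.ball (0:ℂ) r₀ := by
        rw [Metric.mem_ball, dist_eq_norm, sub_zero, norm_mul, Complex.norm_real,
          Real.norm_eq_abs, _root_.abs_of_nonneg ht0, hz₀]
        calc t * r₀ < 1 * r₀ := by exact mul_lt_mul_of_pos_right ht1 hr₀
        _ = r₀ := one_mul r₀
      have hd : DifferentiableOn ℂ φ (Metric.ball 0 r₀) := fun z hz =>
        (hφ z (Metric.ball_subset_closedBall hz)).differentiableAt.differentiableWithinAt
      have hmaps : Set.MapsTo φ (Metric.ball 0 r₀) (Metric.ball (φ 0) 1) := by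
        intro z hz
        rw [hφ0, Metric.mem_ball, dist_eq_norm, sub_zero]
        exact hlt z hz
      have := Complex.dist_le_div_mul_dist_of_mapsTo_ball hd (hmaps.mono_right Metric.ball_subset_closedBall) hmem
      rw [hφ0, dist_eq_norm, sub_zero, dist_eq_norm, sub_zero, norm_mul, Complex.norm_real,
        Real.norm_eq_abs, _root_.abs_of_nonneg ht0, hz₀] at this
      have h2 : ‖φ ((t : ℂ) * z₀)‖ ≤ t := by
        calc ‖φ ((t : ℂ) * z₀)‖ ≤ 1 / r₀ * (t * r₀) := this
        _ = t := by field_simp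
      calc Complex.normSq (φ ((t : ℂ) * z₀)) = ‖φ ((t : ℂ) * z₀)‖ ^ 2 := by
            rw [Complex.normSq_eq_norm_sq]
      _ ≤ t ^ 2 := by
            apply pow_le_pow_left₀ (norm_nonneg _) h2
    have hG1 : Complex.normSq (φ (((1:ℝ) : ℂ) * z₀)) = 1 := by
      rw [h1z, ← ha_def, Complex.normSq_eq_norm_sq, ha, one_pow]
    have h2le := aux_deriv_ge_two hG (by intro t h1 h2; exact hbound t h1 h2) (by
      have := hG1; rw [h1z] at this ⊢; simpa using this)
    linarith
  -- Step 2: the circular curve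
  set E : ℝ → ℂ := fun s => Complex.exp ((s : ℂ) * I) * z₀ with hE_def
  have hEmem : ∀ s : ℝ, E s ∈ Metric.closedBall (0:ℂ) r₀ := by
    intro s
    simp only [hE_def, Metric.mem_closedBall, dist_eq_norm, sub_zero, norm_mul]
    rw [Complex.norm_exp_ofReal_mul_I, one_mul, hz₀]
  have hE0 : E 0 = z₀ := by simp [hE_def]
  -- derivative of the inner complex map  w ↦ exp (w I) * z₀
  have hinner : ∀ s : ℝ, HasDerivAt (fun w : ℂ => Complex.exp (w * I) * z₀)
      (Complex.exp ((s : ℂ) * I) * I * z₀) ((s : ℝ) : ℂ) := by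
    intro s
    have h1 : HasDerivAt (fun w : ℂ => Complex.exp (w * I))
        (Complex.exp (((s:ℝ):ℂ) * I) * (1 * I)) (((s:ℝ):ℂ)) :=
      ((hasDerivAt_id _).mul_const I).cexp
    rw [one_mul] at h1
    exact h1.mul_const z₀
  -- derivative of φ ∘ E and of (deriv φ) ∘ E
  have hcomp : ∀ (ψ : ℂ → ℂ), (∀ z ∈ Metric.closedBall (0:ℂ) r₀, AnalyticAt ℂ ψ z) →
      ∀ s : ℝ, HasDerivAt (fun u : ℝ => ψ (E u))
        (deriv ψ (E s) * (Complex.exp ((s : ℂ) * I) * I * z₀)) s := by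
    intro ψ hψ s
    have hψE : HasDerivAt ψ (deriv ψ (E s)) ((fun w : ℂ => Complex.exp (w * I) * z₀) ((s:ℝ):ℂ)) := by
      simpa [hE_def] using (hψ (E s) (hEmem s)).differentiableAt.hasDerivAt
    have h2 := (hψE.comp (((s:ℝ):ℂ)) (hinner s)).comp_ofReal
    simpa [hE_def, Function.comp] using h2
  set Hd : ℝ → ℂ := fun s => deriv φ (E s) * (Complex.exp ((s : ℂ) * I) * I * z₀) with hHd_def
  have hH : ∀ s : ℝ, HasDerivAt (fun u : ℝ => φ (E u)) (Hd s) s :=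
    hcomp φ (fun z hz => hφ z hz)
  have hφ' : AnalyticOnNhd ℂ (deriv φ) (Metric.closedBall (0:ℂ) r₀) := hφ.deriv
  -- second derivative of the curve at 0
  have hfac2 : HasDerivAt (fun u : ℝ => Complex.exp ((u : ℂ) * I) * I * z₀)
      (Complex.exp ((0 : ℂ) * I) * I * (I * z₀)) 0 := by
    have h1 : HasDerivAt (fun w : ℂ => Complex.exp (w * I))
        (Complex.exp (((0:ℝ):ℂ) * I) * (1 * I)) (((0:ℝ):ℂ)) :=
      ((hasDerivAt_id _).mul_const I).cexp
    rw [one_mul] at h1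
    have h2 := (h1.mul_const (I * z₀)).comp_ofReal
    have h3 : (fun y : ℝ => Complex.exp ((y:ℂ) * I) * (I * z₀))
        = fun u : ℝ => Complex.exp ((u : ℂ) * I) * I * z₀ := by
      funext u; ring
    rw [h3] at h2
    simpa using h2
  have hHd0 : HasDerivAt Hd
      (deriv (deriv φ) z₀ * (Complex.exp ((0 : ℂ) * I) * I * z₀) *
          (Complex.exp ((0 : ℂ) * I) * I * z₀)
        + deriv φ z₀ * (Complex.exp ((0 : ℂ) * I) * I * (I * z₀))) 0 := by
    have h1 := hcomp (deriv φ) (fun z hz => hφ' z hz) 0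
    have h2 := h1.mul hfac2
    simp only [hE0] at h2 ⊢
    convert h2 using 2 <;> norm_num <;> rfl
  set H2 : ℂ := deriv (deriv φ) z₀ * (Complex.exp ((0 : ℂ) * I) * I * z₀) *
          (Complex.exp ((0 : ℂ) * I) * I * z₀)
        + deriv φ z₀ * (Complex.exp ((0 : ℂ) * I) * I * (I * z₀)) with hH2_def
  have hH2val : H2 = -(z₀ ^ 2 * B) - c := by
    rw [hH2_def, hc_def, hA_def, hB_def]
    simp only [Complex.exp_zero, zero_mul, one_mul]
    ring_nf
    simp [Complex.I_sq]
    ring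
  -- the function g and its derivative function g'
  set g' : ℝ → ℝ := fun s => 2 * ((starRingEnd ℂ) (φ (E s)) * Hd s).re with hg'_def
  have hg : ∀ s : ℝ, HasDerivAt (fun u : ℝ => Complex.normSq (φ (E u))) (g' s) s :=
    fun s => aux_hasDerivAt_normSq (hH s)
  have hmax : ∀ s : ℝ, Complex.normSq (φ (E s)) ≤ Complex.normSq (φ (E 0)) := by
    intro s
    have h1 := hle (E s) (hEmem s)
    rw [hE0, ← ha_def, Complex.normSq_eq_norm_sq, Complex.normSq_eq_norm_sq,
      ha, one_pow]
    nlinarith [norm_nonneg (φ (E s))]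
  have hg'0 : g' 0 = 0 := by
    have hlm : IsLocalMax (fun u : ℝ => Complex.normSq (φ (E u))) 0 :=
      Filter.Eventually.of_forall hmax
    have := hlm.deriv_eq_zero
    rw [(hg 0).deriv] at this
    exact this
  -- derivative of g' at 0
  have hg'deriv : HasDerivAt g'
      (2 * (Complex.normSq (Hd 0) + ((starRingEnd ℂ) (φ (E 0)) * H2).re)) 0 := by
    have hre1 := aux_hasDerivAt_re (hH 0)
    have him1 := aux_hasDerivAt_im (hH 0)
    have hre2 := aux_hasDerivAt_re hHd0
    have him2 := aux_hasDerivAt_im hHd0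
    have h1 := (((hre1.mul hre2).add (him1.mul him2)).const_mul (2:ℝ))
    have h2 : (fun s => 2 * ((φ (E s)).re * (Hd s).re + (φ (E s)).im * (Hd s).im)) = g' := by
      funext s
      rw [hg'_def]
      simp [Complex.mul_re, Complex.conj_re, Complex.conj_im]
      try ring
    change HasDerivAt (fun s => 2 * ((φ (E s)).re * (Hd s).re + (φ (E s)).im * (Hd s).im)) _ 0 at h1
    rw [h2] at h1
    convert h1 using 1
    simp [Complex.normSq_apply, Complex.mul_re, Complex.conj_re, Complex.conj_im, hH2_def]
    ring
  have hL := aux_second_deriv_nonpos hg hg'deriv hmax hg'0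
  -- extract the conclusions
  set m : ℝ := ((starRingEnd ℂ) a * c).re with hm_def
  have hm1 : 1 ≤ m := step1
  have him0 : ((starRingEnd ℂ) a * c).im = 0 := by
    have hHd0v : Hd 0 = I * c := by
      rw [hHd_def]; simp only [hE0]
      rw [hc_def, hA_def]
      simp [Complex.exp_zero]
      ring
    have h00 : g' 0 = 2 * ((starRingEnd ℂ) (φ (E 0)) * Hd 0).re := rfl
    rw [hg'0, hHd0v, hE0, ← ha_def] at h00
    have : ((starRingEnd ℂ) a * (I * c)).re = 0 := by linarith [h00.symm]
    rw [show (starRingEnd ℂ) a * (I * c) = I * ((starRingEnd ℂ) a * c) by ring] at this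
    rw [Complex.mul_re] at this
    simp only [Complex.I_re, Complex.I_im, zero_mul, one_mul, zero_sub, neg_eq_zero] at this
    rw [Complex.mul_im] at this ⊢
    simp only [Complex.conj_re, Complex.conj_im] at this ⊢
    linarith [this]
  have hca : (starRingEnd ℂ) a * c = (m : ℂ) := by
    apply Complex.ext
    · simp [hm_def]
    · simp [him0]
  have hnsa : Complex.normSq a = 1 := by
    rw [Complex.normSq_eq_norm_sq, ha, one_pow]
  have hcm : c = (m : ℂ) * a := by
    have h1 : a * (starRingEnd ℂ) a = 1 := by
      rw [Complex.mul_conj, hnsa, Complex.ofReal_one]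
    calc c = (a * (starRingEnd ℂ) a) * c := by rw [h1, one_mul]
    _ = a * ((starRingEnd ℂ) a * c) := by ring
    _ = a * (m : ℂ) := by rw [hca]
    _ = (m : ℂ) * a := mul_comm _ _
  refine ⟨m, hm1, ?_, ?_⟩
  · exact hcm
  · -- use hL
    have hHd0v : Hd 0 = I * c := by
      rw [hHd_def]; simp only [hE0]
      rw [hc_def, hA_def]
      simp [Complex.exp_zero]
      ring
    have hnsHd : Complex.normSq (Hd 0) = m ^ 2 := by
      rw [hHd0v, Complex.normSq_mul, Complex.normSq_I, one_mul, hcm, Complex.normSq_mul,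
        hnsa, mul_one, Complex.normSq_ofReal, sq]
    have hreH2 : ((starRingEnd ℂ) (φ (E 0)) * H2).re
        = -((z₀ ^ 2 * B * (starRingEnd ℂ) a).re) - m := by
      rw [hE0, ← ha_def, hH2val]
      have : (starRingEnd ℂ) a * (-(z₀ ^ 2 * B) - c)
          = -(z₀ ^ 2 * B * (starRingEnd ℂ) a) - (starRingEnd ℂ) a * c := by ring
      rw [this, hca]
      simp
    rw [hnsHd, hreH2] at hL
    nlinarith [hL]

/-- **Admissibility lemma for the exponential function.**
If `Ψ(r,s,t;z) ∉ Ω` whenever `z ∈ 𝔻`, `θ ∈ [0,2π)`, `m ≥ 1`, `r = e^{e^{iθ}}`,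
`s = m e^{iθ} r` and `Re(1 + t/s) ≥ m(1 + cos θ)`, and `p` is analytic on `𝔻` with
`p(0) = 1` and `Ψ(p(z), z p'(z), z² p''(z); z) ∈ Ω` on `𝔻`, then `p ∈ P_e`. -/
theorem admissibility_exponential (Ω : Set ℂ) (Ψ : ℂ → ℂ → ℂ → ℂ → ℂ)
    (hΨ : ∀ z ∈ Metric.ball (0:ℂ) 1, ∀ θ ∈ Set.Ico (0:ℝ) (2 * Real.pi), ∀ m : ℝ, 1 ≤ m →
      ∀ r s t : ℂ, r = Complex.exp (Complex.exp (θ * I)) →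
        s = (m : ℂ) * Complex.exp (θ * I) * r →
        m * (1 + Real.cos θ) ≤ (1 + t / s).re → Ψ r s t z ∉ Ω)
    (p : ℂ → ℂ) (hp : AnalyticOnNhd ℂ p (Metric.ball 0 1)) (hp0 : p 0 = 1)
    (hmem : ∀ z ∈ Metric.ball (0:ℂ) 1,
      Ψ (p z) (z * deriv p z) (z ^ 2 * deriv (deriv p) z) z ∈ Ω) :
    memPe p := by

  refine ⟨hp, hp0, ?_⟩
  by_contra hcon
  push_neg at hcon
  obtain ⟨z₁, hz₁, hz₁'⟩ := hcon
  have hz₁n : ‖z₁‖ < 1 := by rwa [Metric.mem_ball, dist_eq_norm, sub_zero] at hz₁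
  -- the set of points (within radius ‖z₁‖) mapped outside exp '' ball
  set K : Set ℂ := Metric.closedBall 0 ‖z₁‖ ∩ p ⁻¹' (Complex.exp '' Metric.ball 0 1)ᶜ with hK_def
  have hsub : Metric.closedBall (0:ℂ) ‖z₁‖ ⊆ Metric.ball 0 1 := by
    intro z hz
    rw [Metric.mem_closedBall, dist_eq_norm, sub_zero] at hz
    rw [Metric.mem_ball, dist_eq_norm, sub_zero]
    exact lt_of_le_of_lt hz hz₁n
  have hopen : IsOpen (Complex.exp '' Metric.ball (0:ℂ) 1) :=
    Complex.isOpenMap_exp _ Metric.isOpen_ball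
  have hKclosed : IsClosed K :=
    ContinuousOn.preimage_isClosed_of_isClosed
      (fun z hz => (hp z (hsub hz)).continuousAt.continuousWithinAt)
      Metric.isClosed_closedBall hopen.isClosed_compl
  have hKc : IsCompact K :=
    Metric.isCompact_of_isClosed_isBounded hKclosed
      (Metric.isBounded_closedBall.subset Set.inter_subset_left)
  have hz₁K : z₁ ∈ K := ⟨by rw [Metric.mem_closedBall, dist_eq_norm, sub_zero], hz₁'⟩
  obtain ⟨z₀, hz₀K, hz₀min⟩ := hKc.exists_isMinOn ⟨z₁, hz₁K⟩ continuous_norm.continuousOn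
  set r₀ : ℝ := ‖z₀‖ with hr₀_def
  have hz₀le : r₀ ≤ ‖z₁‖ := by
    have := hz₀K.1
    rwa [Metric.mem_closedBall, dist_eq_norm, sub_zero] at this
  have hz₀lt1 : r₀ < 1 := lt_of_le_of_lt hz₀le hz₁n
  have hz₀ball : z₀ ∈ Metric.ball (0:ℂ) 1 := by
    rw [Metric.mem_ball, dist_eq_norm, sub_zero]; exact hz₀lt1
  have h1exp : (1 : ℂ) ∈ Complex.exp '' Metric.ball 0 1 :=
    ⟨0, Metric.mem_ball_self one_pos, Complex.exp_zero⟩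
  have hr₀pos : 0 < r₀ := by
    rcases eq_or_lt_of_le (norm_nonneg z₀) with h | h
    · exfalso
      have hz₀0 : z₀ = 0 := norm_eq_zero.mp h.symm
      have := hz₀K.2
      rw [hz₀0] at this
      exact this (by rw [hp0]; exact h1exp)
    · exact h
  have hcb_sub : Metric.closedBall (0:ℂ) r₀ ⊆ Metric.ball 0 1 := by
    intro z hz
    rw [Metric.mem_closedBall, dist_eq_norm, sub_zero] at hz
    rw [Metric.mem_ball, dist_eq_norm, sub_zero]
    exact lt_of_le_of_lt hz hz₀lt1
  -- strictly inside radius r₀, p lands in exp '' ball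
  have hlt_mem : ∀ z : ℂ, ‖z‖ < r₀ → p z ∈ Complex.exp '' Metric.ball 0 1 := by
    intro z hz
    by_contra hcontra
    have hzK : z ∈ K := ⟨by
      rw [Metric.mem_closedBall, dist_eq_norm, sub_zero]
      exact le_of_lt (lt_of_lt_of_le hz hz₀le), hcontra⟩
    exact absurd (hz₀min hzK) (not_le.mpr hz)
  -- on the closed ball of radius r₀, p lands in exp '' closedBall
  have hclosure : ∀ z ∈ Metric.closedBall (0:ℂ) r₀,
      p z ∈ Complex.exp '' Metric.closedBall 0 1 := by
    intro z hz
    have h1 : z ∈ closure (Metric.ball (0:ℂ) r₀) := by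
      rw [closure_ball (0:ℂ) (ne_of_gt hr₀pos)]; exact hz
    have h2 : ContinuousWithinAt p (Metric.ball (0:ℂ) r₀) z :=
      (hp z (hcb_sub hz)).continuousAt.continuousWithinAt
    have h3 : p z ∈ closure (p '' Metric.ball 0 r₀) := h2.mem_closure_image h1
    have h4 : p '' Metric.ball 0 r₀ ⊆ Complex.exp '' Metric.closedBall 0 1 := by
      rintro w ⟨x, hx, rfl⟩
      rw [Metric.mem_ball, dist_eq_norm, sub_zero] at hx
      obtain ⟨v, hv, hvx⟩ := hlt_mem x hx
      exact ⟨v, Metric.ball_subset_closedBall hv, hvx⟩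
    have h5 : IsClosed (Complex.exp '' Metric.closedBall (0:ℂ) 1) :=
      ((isCompact_closedBall (0:ℂ) 1).image Complex.continuous_exp).isClosed
    exact closure_minimal h4 h5 h3
  set φ : ℂ → ℂ := fun z => Complex.log (p z) with hφ_def
  have hπ : (1:ℝ) < Real.pi / 2 := by
    have := Real.pi_gt_three; linarith
  -- key facts on the closed ball
  have hkey : ∀ z ∈ Metric.closedBall (0:ℂ) r₀,
      0 < (p z).re ∧ ‖φ z‖ ≤ 1 ∧ Complex.exp (φ z) = p z := by
    intro z hz
    obtain ⟨w, hw, hpw⟩ := hclosure z hz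
    rw [Metric.mem_closedBall, dist_eq_norm, sub_zero] at hw
    have him : |w.im| ≤ 1 := le_trans (Complex.abs_im_le_norm w) hw
    have habs := abs_le.mp him
    have hre : 0 < (p z).re := by
      rw [← hpw, Complex.exp_re]
      apply mul_pos (Real.exp_pos _)
      apply Real.cos_pos_of_mem_Ioo
      constructor <;> [linarith; linarith]
    have hφw : φ z = w := by
      rw [hφ_def]
      simp only
      rw [← hpw, Complex.log_exp (by linarith [Real.pi_gt_three]) (by linarith [Real.pi_gt_three])]
    refine ⟨hre, ?_, ?_⟩
    · rw [hφw]; exact hw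
    · rw [hφw, hpw]
  have hkeylt : ∀ z : ℂ, ‖z‖ < r₀ → ‖φ z‖ < 1 := by
    intro z hz
    obtain ⟨w, hw, hpw⟩ := hlt_mem z hz
    rw [Metric.mem_ball, dist_eq_norm, sub_zero] at hw
    have him : |w.im| ≤ 1 := le_trans (Complex.abs_im_le_norm w)
      (le_of_lt hw)
    have habs := abs_le.mp him
    have hφw : φ z = w := by
      rw [hφ_def]
      simp only
      rw [← hpw, Complex.log_exp (by linarith [Real.pi_gt_three]) (by linarith [Real.pi_gt_three])]
    rw [hφw]; exact hw
  have hslit : ∀ z ∈ Metric.closedBall (0:ℂ) r₀, p z ∈ Complex.slitPlane :=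
    fun z hz => Or.inl (hkey z hz).1
  have hφanal : AnalyticOnNhd ℂ φ (Metric.closedBall (0:ℂ) r₀) :=
    fun z hz => ((hp z (hcb_sub hz)).clog (hslit z hz))
  have hφ0 : φ 0 = 0 := by rw [hφ_def]; simp only; rw [hp0, Complex.log_one]
  have hz₀cb : z₀ ∈ Metric.closedBall (0:ℂ) r₀ := by
    rw [Metric.mem_closedBall, dist_eq_norm, sub_zero]
  have ha1 : ‖φ z₀‖ = 1 := by
    rcases lt_or_eq_of_le (hkey z₀ hz₀cb).2.1 with h | h
    · exfalso
      refine hz₀K.2 ⟨φ z₀, ?_, (hkey z₀ hz₀cb).2.2⟩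
      rw [Metric.mem_ball, dist_eq_norm, sub_zero]; exact h
    · exact h
  obtain ⟨m, hm1, hmc, hmineq⟩ := jack_lemma hr₀pos hr₀_def.symm hφanal hφ0
      (fun z hz => (hkey z hz).2.1)
      (fun z hz => hkeylt z (by rwa [Metric.mem_ball, dist_eq_norm, sub_zero] at hz)) ha1
  set a : ℂ := φ z₀ with ha_def
  set T : ℂ := z₀ ^ 2 * deriv (deriv φ) z₀ with hT_def
  have hane : ‖a‖ = 1 := by exact ha1
  have hane' : a ≠ 0 := by
    intro h; rw [h] at hane; simp at hane
  have harg := Complex.arg_mem_Ioc a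
  have haexp : Complex.exp (↑(Complex.arg a) * I) = a := by
    have h := Complex.norm_mul_exp_arg_mul_I a
    rwa [hane, Complex.ofReal_one, one_mul] at h
  set θ : ℝ := if 0 ≤ Complex.arg a then Complex.arg a else Complex.arg a + 2 * Real.pi
    with hθ_def
  have hθIco : θ ∈ Set.Ico (0:ℝ) (2 * Real.pi) := by
    rw [hθ_def]
    split_ifs with h
    · exact ⟨h, by linarith [harg.2, Real.pi_pos]⟩
    · push_neg at h
      exact ⟨by linarith [harg.1], by linarith⟩
  have hθexp : Complex.exp (↑θ * I) = a := by
    rw [hθ_def]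
    split_ifs with h
    · exact haexp
    · rw [Complex.ofReal_add, add_mul, Complex.exp_add, haexp]
      have h2 : Complex.exp (↑(2 * Real.pi) * I) = 1 := by
        push_cast
        exact Complex.exp_two_pi_mul_I
      rw [h2, mul_one]
  have hacos : a.re = Real.cos θ := by
    rw [← hθexp, Complex.exp_re]
    simp
  -- derivative identities for p in terms of φ
  have hφz₀anal : AnalyticAt ℂ φ z₀ := hφanal z₀ hz₀cb
  have hφ'anal : AnalyticAt ℂ (deriv φ) z₀ := hφanal.deriv z₀ hz₀cb
  have hslit₀ : p z₀ ∈ Complex.slitPlane := hslit z₀ hz₀cb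
  have hev : ∀ᶠ z in nhds z₀, p z ∈ Complex.slitPlane :=
    (hp z₀ hz₀ball).continuousAt.eventually_mem (Complex.isOpen_slitPlane.mem_nhds hslit₀)
  have hpeq : p =ᶠ[nhds z₀] fun z => Complex.exp (φ z) :=
    hev.mono (fun z hz => (Complex.exp_log (Complex.slitPlane_ne_zero hz)).symm)
  have hφev : ∀ᶠ z in nhds z₀, AnalyticAt ℂ φ z := hφz₀anal.eventually_analyticAt
  have hderiv1 : deriv p =ᶠ[nhds z₀] fun z => Complex.exp (φ z) * deriv φ z := by
    refine hpeq.deriv.trans ?_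
    filter_upwards [hφev] with z hz
    exact (hz.differentiableAt.hasDerivAt.cexp).deriv
  have hd1 : deriv p z₀ = Complex.exp a * deriv φ z₀ := hderiv1.eq_of_nhds
  have hprod : HasDerivAt (fun z => Complex.exp (φ z) * deriv φ z)
      (Complex.exp a * deriv φ z₀ * deriv φ z₀ + Complex.exp a * deriv (deriv φ) z₀) z₀ := by
    have h1 := hφz₀anal.differentiableAt.hasDerivAt.cexp
    have h2 := hφ'anal.differentiableAt.hasDerivAt
    have h3 := h1.mul h2
    convert h3 using 1 <;> rfl
  have hd2 : deriv (deriv p) z₀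
      = Complex.exp a * deriv φ z₀ * deriv φ z₀ + Complex.exp a * deriv (deriv φ) z₀ := by
    rw [hderiv1.deriv_eq, hprod.deriv]
  have hpz₀ : p z₀ = Complex.exp a := ((hkey z₀ hz₀cb).2.2).symm
  -- the three quantities
  have hrval : p z₀ = Complex.exp (Complex.exp (↑θ * I)) := by rw [hpz₀, hθexp]
  have hsval : z₀ * deriv p z₀ = ↑m * a * Complex.exp a := by
    calc z₀ * deriv p z₀ = (z₀ * deriv φ z₀) * Complex.exp a := by rw [hd1]; ring
    _ = ↑m * a * Complex.exp a := by rw [hmc]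
  have hsval' : z₀ * deriv p z₀ = ↑m * Complex.exp (↑θ * I) * p z₀ := by
    rw [hsval, hθexp, hpz₀]
  have htval : z₀ ^ 2 * deriv (deriv p) z₀
      = (↑m * a) ^ 2 * Complex.exp a + T * Complex.exp a := by
    calc z₀ ^ 2 * deriv (deriv p) z₀
        = (z₀ * deriv φ z₀) ^ 2 * Complex.exp a + T * Complex.exp a := by
          rw [hd2, hT_def]; ring
    _ = (↑m * a) ^ 2 * Complex.exp a + T * Complex.exp a := by rw [hmc]
  have hm0 : (0:ℝ) < m := lt_of_lt_of_le one_pos hm1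
  have hmne : (m : ℂ) ≠ 0 := by
    simp only [ne_eq, Complex.ofReal_eq_zero]
    exact ne_of_gt hm0
  have hexpne : Complex.exp a ≠ 0 := Complex.exp_ne_zero a
  have hsne : z₀ * deriv p z₀ ≠ 0 := by
    rw [hsval]
    exact mul_ne_zero (mul_ne_zero hmne hane') hexpne
  have hnsa : a * (starRingEnd ℂ) a = 1 := by
    rw [Complex.mul_conj]
    rw [Complex.normSq_eq_norm_sq, hane]
    norm_num
  have hdiv : (z₀ ^ 2 * deriv (deriv p) z₀) / (z₀ * deriv p z₀)
      = ↑m * a + (T * (starRingEnd ℂ) a) / ↑m := by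
    rw [htval, hsval, div_eq_iff (mul_ne_zero (mul_ne_zero hmne hane') hexpne)]
    field_simp
    linear_combination (-(z₀ ^ 2 * deriv (deriv φ) z₀)) * hnsa
  have hreineq : m * (1 + Real.cos θ)
      ≤ (1 + (z₀ ^ 2 * deriv (deriv p) z₀) / (z₀ * deriv p z₀)).re := by
    rw [hdiv]
    have h1 : (1 + (↑m * a + T * (starRingEnd ℂ) a / ↑m)).re
        = 1 + m * a.re + (T * (starRingEnd ℂ) a).re / m := by
      simp [Complex.add_re, Complex.one_re, Complex.re_ofReal_mul, Complex.div_ofReal_re]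
      ring
    rw [h1]
    have h3 : (m ^ 2 - m) / m = m - 1 := by field_simp
    have h2 : m - 1 ≤ (T * (starRingEnd ℂ) a).re / m := by
      rw [← h3]
      apply (div_le_div_iff_of_pos_right hm0).mpr
      rw [hT_def]
      rw [ha_def] at hmineq ⊢
      exact hmineq
    rw [hacos]
    linarith [h2]
  exact hΨ z₀ hz₀ball θ hθIco m hm1 (p z₀) (z₀ * deriv p z₀) (z₀ ^ 2 * deriv (deriv p) z₀)
    hrval hsval' hreineq (hmem z₀ hz₀ball)
end

section
/- Let a, c ∈ ℂ with c not zero or a negative integer and Re(c) ≥ |a| + 2. Then the function z ↦ Φ(a;c;z) belongs to the class P_e. -/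
open Complex Metric Set

/-- The confluent (Kummer) hypergeometric function `Φ(a;c;z)`. -/
noncomputable def Phi (a c z : ℂ) : ℂ :=
  ∑' n : ℕ, poch a n / poch c n * z ^ n / (n.factorial : ℂ)

/-! ### Auxiliary lemmas -/

lemma poch_zero' (x : ℂ) : poch x 0 = 1 := by simp [poch]

lemma poch_succ (x : ℂ) (n : ℕ) : poch x (n+1) = poch x n * (x + n) := by
  simp [poch, Finset.prod_range_succ]

section series

variable {D : ℕ → ℂ} {K : ℝ}

lemma summable_aux (hD : ∀ n, ‖D n‖ ≤ K / n.factorial) (hK : 0 ≤ K) (z : ℂ) :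
    Summable (fun n => D n * z ^ n) := by
  apply Summable.of_norm
  have h : ∀ n, ‖D n * z ^ n‖ ≤ K * (‖z‖ ^ n / n.factorial) := by
    intro n
    rw [norm_mul, norm_pow]
    calc ‖D n‖ * ‖z‖ ^ n ≤ (K / n.factorial) * ‖z‖ ^ n :=
          mul_le_mul_of_nonneg_right (hD n) (by positivity)
      _ = K * (‖z‖ ^ n / n.factorial) := by ring
  exact Summable.of_nonneg_of_le (fun n => norm_nonneg _) h
    (((Real.summable_pow_div_factorial ‖z‖)).mul_left K)

lemma norm_term2_le (hD : ∀ n, ‖D n‖ ≤ K / n.factorial) (hK : 0 ≤ K) {R : ℝ}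
    (h1R : 1 ≤ R) {y : ℂ} (hy : ‖y‖ ≤ R) (n : ℕ) :
    ‖D n * ((n:ℂ) * y ^ (n-1))‖ ≤ K * ((2*R) ^ n / n.factorial) := by
  have hR0 : 0 ≤ R := le_trans zero_le_one h1R
  rw [norm_mul, norm_mul, Complex.norm_natCast, norm_pow]
  have h1 : ‖y‖ ^ (n-1) ≤ R ^ n :=
    le_trans (pow_le_pow_left₀ (norm_nonneg y) hy _) (pow_le_pow_right₀ h1R (Nat.sub_le n 1))
  have h2 : (n:ℝ) ≤ 2 ^ n := by
    exact_mod_cast (Nat.lt_two_pow_self (n := n)).le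
  calc ‖D n‖ * ((n:ℝ) * ‖y‖ ^ (n-1)) ≤ (K / n.factorial) * ((2:ℝ) ^ n * R ^ n) := by
        apply mul_le_mul (hD n) _ (by positivity) (by positivity)
        exact mul_le_mul h2 h1 (by positivity) (by positivity)
    _ = K * ((2*R) ^ n / n.factorial) := by rw [mul_pow]; ring

lemma summable_aux2 (hD : ∀ n, ‖D n‖ ≤ K / n.factorial) (hK : 0 ≤ K) (z : ℂ) :
    Summable (fun n => D n * ((n:ℂ) * z ^ (n-1))) := by
  apply Summable.of_norm
  apply Summable.of_nonneg_of_le (fun n => norm_nonneg _)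
    (norm_term2_le hD hK (le_add_of_nonneg_left (norm_nonneg z))
      (le_add_of_nonneg_right zero_le_one : ‖z‖ ≤ ‖z‖ + 1))
  exact ((Real.summable_pow_div_factorial (2*(‖z‖+1)))).mul_left K

lemma summable_aux3 (hD : ∀ n, ‖D n‖ ≤ K / n.factorial) (hK : 0 ≤ K) (z : ℂ) :
    Summable (fun n : ℕ => (n:ℂ) * D n * z ^ n) := by
  apply Summable.of_norm
  have h : ∀ n : ℕ, ‖(n:ℂ) * D n * z ^ n‖ ≤ K * ((2*(‖z‖+1)) ^ n / n.factorial) := by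
    intro n
    rw [norm_mul, norm_mul, Complex.norm_natCast, norm_pow]
    have h2 : (n:ℝ) ≤ 2 ^ n := by exact_mod_cast (Nat.lt_two_pow_self (n := n)).le
    have h3 : ‖z‖ ^ n ≤ (‖z‖+1) ^ n := pow_le_pow_left₀ (norm_nonneg z) (by linarith) n
    calc (n:ℝ) * ‖D n‖ * ‖z‖ ^ n ≤ 2^n * (K / n.factorial) * (‖z‖+1) ^ n := by
          apply mul_le_mul (mul_le_mul h2 (hD n) (norm_nonneg _) (by positivity)) h3
            (by positivity) (by positivity)
      _ = K * ((2*(‖z‖+1)) ^ n / n.factorial) := by rw [mul_pow]; ring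
  exact Summable.of_nonneg_of_le (fun n => norm_nonneg _) h
    (((Real.summable_pow_div_factorial (2*(‖z‖+1)))).mul_left K)

lemma shift_bound (hD : ∀ n, ‖D n‖ ≤ K / n.factorial) :
    ∀ n : ℕ, ‖((n:ℂ)+1) * D (n+1)‖ ≤ K / n.factorial := by
  intro n
  rw [norm_mul]
  have h1 : ‖((n:ℂ)+1)‖ = ((n:ℝ)+1) := by
    rw [show ((n:ℂ)+1) = ((n+1 : ℕ) : ℂ) by push_cast; ring, Complex.norm_natCast]
    push_cast; ring
  rw [h1]
  calc ((n:ℝ)+1) * ‖D (n+1)‖ ≤ ((n:ℝ)+1) * (K / (n+1).factorial) :=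
        mul_le_mul_of_nonneg_left (hD (n+1)) (by positivity)
    _ = K / n.factorial := by
        rw [Nat.factorial_succ]
        push_cast
        rw [eq_div_iff (by positivity)]
        field_simp

lemma shift_eq (hD : ∀ n, ‖D n‖ ≤ K / n.factorial) (hK : 0 ≤ K) (z : ℂ) :
    ∑' n : ℕ, (n:ℂ) * D n * z ^ n = z * ∑' n : ℕ, ((n:ℂ)+1) * D (n+1) * z ^ n := by
  rw [(summable_aux3 hD hK z).tsum_eq_zero_add, ← tsum_mul_left]
  simp only [Nat.cast_zero, zero_mul, mul_zero, zero_add, pow_zero]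
  apply tsum_congr
  intro n
  push_cast
  ring

lemma hasDerivAt_aux (hD : ∀ n, ‖D n‖ ≤ K / n.factorial) (hK : 0 ≤ K) (z : ℂ) :
    HasDerivAt (fun w => ∑' n, D n * w ^ n)
      (∑' n : ℕ, ((n:ℂ)+1) * D (n+1) * z ^ n) z := by
  set R : ℝ := ‖z‖ + 1 with hR
  have h1R : 1 ≤ R := le_add_of_nonneg_left (norm_nonneg z)
  have hzR : z ∈ ball (0:ℂ) R := by simp [hR, mem_ball_zero_iff]
  have hRpos : (0:ℝ) < R := lt_of_lt_of_le zero_lt_one h1R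
  have husum : Summable (fun n => K * ((2*R) ^ n / n.factorial)) :=
    ((Real.summable_pow_div_factorial (2*R))).mul_left K
  have key := hasDerivAt_tsum_of_isPreconnected husum isOpen_ball
    ((convex_ball (0:ℂ) R).isPreconnected)
    (g := fun n w => D n * w ^ n)
    (g' := fun n w => D n * ((n:ℂ) * w ^ (n-1)))
    (fun n y _ => (hasDerivAt_pow n y).const_mul (D n))
    (fun n y hy => norm_term2_le hD hK h1R (le_of_lt (by simpa [mem_ball_zero_iff] using hy)) n)
    (mem_ball_self hRpos : (0:ℂ) ∈ ball 0 R)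
    (summable_aux hD hK 0) hzR
  refine key.congr_deriv ?_
  rw [(summable_aux2 hD hK z).tsum_eq_zero_add]
  simp only [Nat.cast_zero, zero_mul, mul_zero, zero_add, pow_zero]
  apply tsum_congr
  intro n
  push_cast
  ring

end series

section coeffs

lemma cn_ne {c : ℂ} (hc : ∀ n : ℕ, c ≠ -(n : ℂ)) (n : ℕ) : c + n ≠ 0 := by
  intro hh
  exact hc n (by linear_combination hh)

lemma pochc_ne {c : ℂ} (hc : ∀ n : ℕ, c ≠ -(n : ℂ)) (n : ℕ) : poch c n ≠ 0 := by
  induction n with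
  | zero => simp [poch_zero']
  | succ k ih => rw [poch_succ]; exact mul_ne_zero ih (cn_ne hc k)

lemma norm_poch_le {a c : ℂ} (h : ‖a‖ + 2 ≤ c.re) (n : ℕ) :
    ‖poch a n‖ ≤ ‖poch c n‖ := by
  induction n with
  | zero => simp [poch_zero']
  | succ k ih =>
    rw [poch_succ, poch_succ, norm_mul, norm_mul]
    apply mul_le_mul ih _ (norm_nonneg _) (norm_nonneg _)
    have h1 : ‖a + (k:ℂ)‖ ≤ ‖a‖ + k := by
      calc ‖a + (k:ℂ)‖ ≤ ‖a‖ + ‖(k:ℂ)‖ := norm_add_le _ _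
        _ = ‖a‖ + k := by rw [Complex.norm_natCast]
    have h2 : (c + (k:ℂ)).re ≤ ‖c + (k:ℂ)‖ := Complex.re_le_norm _
    have h3 : (c + (k:ℂ)).re = c.re + k := by simp
    have h4 : ‖a‖ = ‖a‖ := rfl
    linarith

/-- the Taylor coefficients of `Φ(a;c;·)` -/
noncomputable def Bc (a c : ℂ) (n : ℕ) : ℂ := poch a n / poch c n / n.factorial

lemma hBc {a c : ℂ} (hc : ∀ n : ℕ, c ≠ -(n : ℂ)) (h : ‖a‖ + 2 ≤ c.re) :
    ∀ n, ‖Bc a c n‖ ≤ 1 / n.factorial := by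
  intro n
  rw [Bc, norm_div, norm_div, Complex.norm_natCast]
  have h2 : (0:ℝ) < ‖poch c n‖ := norm_pos_iff.2 (pochc_ne hc n)
  gcongr
  · exact (div_le_one h2).2 (norm_poch_le h n)

lemma Bc_rec {a c : ℂ} (hc : ∀ n : ℕ, c ≠ -(n : ℂ)) (n : ℕ) :
    ((n:ℂ)+1) * (c + n) * Bc a c (n+1) = (a + n) * Bc a c n := by
  rw [Bc, Bc, poch_succ, poch_succ, Nat.factorial_succ]
  have h1 : poch c n ≠ 0 := pochc_ne hc n
  have h3 : (n.factorial : ℂ) ≠ 0 := by exact_mod_cast Nat.cast_ne_zero.2 n.factorial_ne_zero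
  have h4 : c + n ≠ 0 := cn_ne hc n
  have h2 : ((n:ℂ)+1) ≠ 0 := Nat.cast_add_one_ne_zero (R := ℂ) n
  push_cast
  field_simp

end coeffs

section ode

noncomputable def FF (a c : ℂ) (z : ℂ) : ℂ := ∑' n : ℕ, Bc a c n * z ^ n
noncomputable def FF1 (a c : ℂ) (z : ℂ) : ℂ := ∑' n : ℕ, ((n:ℂ)+1) * Bc a c (n+1) * z ^ n
noncomputable def FF2 (a c : ℂ) (z : ℂ) : ℂ :=
  ∑' n : ℕ, ((n:ℂ)+1) * (((n:ℂ)+1+1) * Bc a c (n+1+1)) * z ^ n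

variable {a c : ℂ} (hc : ∀ n : ℕ, c ≠ -(n : ℂ)) (h : ‖a‖ + 2 ≤ c.re)
include hc h

lemma hasDerivAt_FF (z : ℂ) : HasDerivAt (FF a c) (FF1 a c z) z :=
  hasDerivAt_aux (hBc hc h) zero_le_one z

lemma hasDerivAt_FF1 (z : ℂ) : HasDerivAt (FF1 a c) (FF2 a c z) z := by
  have := hasDerivAt_aux (D := fun n => ((n:ℂ)+1) * Bc a c (n+1)) (shift_bound (hBc hc h))
    zero_le_one z
  refine this.congr_deriv ?_
  apply tsum_congr
  intro n
  push_cast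
  ring

lemma ode (z : ℂ) : z * FF2 a c z + (c - z) * FF1 a c z - a * FF a c z = 0 := by
  have hB : ∀ n, ‖Bc a c n‖ ≤ 1 / n.factorial := hBc hc h
  have hB1 : ∀ n : ℕ, ‖((n:ℂ)+1) * Bc a c (n+1)‖ ≤ 1 / n.factorial := shift_bound hB
  have e1 : z * FF1 a c z = ∑' n : ℕ, (n:ℂ) * Bc a c n * z ^ n := (shift_eq hB zero_le_one z).symm
  have e2 : z * FF2 a c z = ∑' n : ℕ, (n:ℂ) * (((n:ℂ)+1) * Bc a c (n+1)) * z ^ n := by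
    rw [shift_eq hB1 zero_le_one z]
    congr 1
    apply tsum_congr
    intro n
    push_cast
    ring
  have e3 : c * FF1 a c z = ∑' n : ℕ, c * (((n:ℂ)+1) * Bc a c (n+1) * z ^ n) :=
    (tsum_mul_left).symm
  have e4 : a * FF a c z = ∑' n : ℕ, a * (Bc a c n * z ^ n) := (tsum_mul_left).symm
  have key : z * FF2 a c z + c * FF1 a c z = a * FF a c z + z * FF1 a c z := by
    rw [e1, e2, e3, e4]
    rw [← Summable.tsum_add (by
        have := summable_aux3 (D := fun n => ((n:ℂ)+1) * Bc a c (n+1)) hB1 zero_le_one z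
        exact this) ((summable_aux hB1 zero_le_one z).mul_left c),
      ← Summable.tsum_add ((summable_aux hB zero_le_one z).mul_left a) (summable_aux3 hB zero_le_one z)]
    apply tsum_congr
    intro n
    have := Bc_rec (a := a) hc n
    linear_combination z ^ n * this
  linear_combination key

end ode

/-! ### Lemmas about the image of the unit disk under `exp` -/

lemma log_mem_of_exp_ball {w : ℂ} (hw : w ∈ Complex.exp '' ball 0 1) :
    ‖Complex.log w‖ < 1 ∧ w ≠ 0 := by
  obtain ⟨ζ, hζ, rfl⟩ := hw
  rw [mem_ball_zero_iff] at hζ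
  have him : |ζ.im| < 1 := lt_of_le_of_lt (Complex.abs_im_le_norm ζ) hζ
  have hπ : (1:ℝ) < Real.pi := by linarith [Real.pi_gt_three]
  rw [Complex.log_exp (by cases abs_lt.1 him; linarith) (by cases abs_lt.1 him; linarith)]
  exact ⟨hζ, Complex.exp_ne_zero ζ⟩

lemma mem_exp_ball {w : ℂ} (h0 : w ≠ 0) (hl : ‖Complex.log w‖ < 1) :
    w ∈ Complex.exp '' ball 0 1 :=
  ⟨Complex.log w, mem_ball_zero_iff.2 hl, Complex.exp_log h0⟩

lemma log_mem_of_exp_closedBall {w : ℂ} (hw : w ∈ Complex.exp '' closedBall 0 1) :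
    ‖Complex.log w‖ ≤ 1 ∧ 0 < w.re := by
  obtain ⟨ζ, hζ, rfl⟩ := hw
  rw [mem_closedBall_zero_iff] at hζ
  have him : |ζ.im| ≤ 1 := le_trans (Complex.abs_im_le_norm ζ) hζ
  have hπ : (3:ℝ) < Real.pi := Real.pi_gt_three
  constructor
  · rw [Complex.log_exp (by cases abs_le.1 him; linarith) (by cases abs_le.1 him; linarith)]
    exact hζ
  · rw [Complex.exp_re]
    apply mul_pos (Real.exp_pos _)
    apply Real.cos_pos_of_mem_Ioo
    constructor
    · cases abs_le.1 him; linarith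
    · cases abs_le.1 him; linarith

lemma hasDerivAt_normSq {F : ℝ → ℂ} {F' : ℂ} {t : ℝ} (hF : HasDerivAt F F' t) :
    HasDerivAt (fun s => Complex.normSq (F s)) (2 * (F' * (starRingEnd ℂ) (F t)).re) t := by
  have h1 : HasDerivAt (fun s => (starRingEnd ℂ) (F s)) ((starRingEnd ℂ) F') t := by
    simpa only [RCLike.star_def] using hF.star
  have h2 := hF.mul h1
  have h3 := Complex.reCLM.hasFDerivAt.comp_hasDerivAt t h2
  have h4 : ∀ s, Complex.normSq (F s) = Complex.reCLM (F s * (starRingEnd ℂ) (F s)) := by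
    intro s
    simp [Complex.mul_conj]
  rw [show (fun s => Complex.normSq (F s)) = fun s => Complex.reCLM (F s * (starRingEnd ℂ) (F s))
    from funext h4]
  refine h3.congr_deriv ?_
  have : (F t * (starRingEnd ℂ) F').re = (F' * (starRingEnd ℂ) (F t)).re := by
    simp [Complex.mul_re, Complex.conj_re, Complex.conj_im]
    ring
  simp [Complex.add_re, this]
  ring

lemma second_deriv_test {h k : ℝ → ℝ} {κ : ℝ} (hh : ∀ θ, HasDerivAt h (k θ) θ)
    (hk : HasDerivAt k κ 0) (hmax : ∀ θ, h θ ≤ h 0) : κ ≤ 0 := by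
  have hk0 : k 0 = 0 := by
    have h1 : IsLocalMax h 0 := Filter.Eventually.of_forall hmax
    have h2 := h1.deriv_eq_zero
    rw [(hh 0).deriv] at h2
    exact h2
  by_contra hκ
  push_neg at hκ
  have hts : Filter.Tendsto (slope k 0) (nhdsWithin 0 (Set.Ioi 0)) (nhds κ) :=
    (hasDerivAt_iff_tendsto_slope.1 hk).mono_left
      (nhdsWithin_mono 0 (fun x hx => ne_of_gt hx))
  have hev : ∀ᶠ θ in nhdsWithin 0 (Set.Ioi 0), 0 < slope k 0 θ :=
    hts.eventually (eventually_gt_nhds hκ)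
  obtain ⟨u, hu, huo⟩ := mem_nhdsGT_iff_exists_Ioo_subset.1 hev
  have hu0 : 0 < u := hu
  have hkpos : ∀ θ ∈ Ioo 0 u, 0 < k θ := by
    intro θ hθ
    have := huo hθ
    rw [mem_setOf_eq, slope_def_field, hk0, sub_zero, sub_zero] at this
    have := mul_pos this hθ.1
    rwa [div_mul_cancel₀ _ (ne_of_gt hθ.1)] at this
  have hmono : StrictMonoOn h (Icc 0 (u/2)) := by
    apply strictMonoOn_of_deriv_pos (convex_Icc _ _)
    · exact fun θ _ => ((hh θ).differentiableAt.continuousAt).continuousWithinAt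
    · intro θ hθ
      rw [interior_Icc, mem_Ioo] at hθ
      rw [(hh θ).deriv]
      exact hkpos θ ⟨hθ.1, by linarith [hθ.2]⟩
  have h1 : h 0 < h (u/2) := hmono (by constructor <;> [linarith; linarith] : (0:ℝ) ∈ Icc 0 (u/2))
    (by constructor <;> linarith : u/2 ∈ Icc 0 (u/2)) (by linarith)
  linarith [hmax (u/2)]

set_option maxHeartbeats 1000000 in
/-- If `c` is not zero or a negative integer and `Re(c) ≥ |a| + 2`, then
`z ↦ Φ(a;c;z)` belongs to `P_e`. -/
theorem confluent_memPe (a c : ℂ) (hc : ∀ n : ℕ, c ≠ -(n : ℂ))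
    (h : ‖a‖ + 2 ≤ c.re) :
    memPe (fun z => Phi a c z) := by
  classical
  have hB : ∀ n, ‖Bc a c n‖ ≤ 1 / n.factorial := hBc hc h
  have hdF : ∀ z, HasDerivAt (FF a c) (FF1 a c z) z := hasDerivAt_FF hc h
  have hdF1 : ∀ z, HasDerivAt (FF1 a c) (FF2 a c z) z := hasDerivAt_FF1 hc h
  have hdiff : Differentiable ℂ (FF a c) := fun z => (hdF z).differentiableAt
  have hcontF : Continuous (FF a c) := hdiff.continuous
  have hPhi : (fun z => Phi a c z) = FF a c := by
    funext z
    apply tsum_congr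
    intro n
    rw [Bc]
    ring
  have hF0 : FF a c 0 = 1 := by
    rw [FF, tsum_eq_single 0 (by intro n hn; simp [zero_pow hn])]
    simp [Bc, poch_zero']
  rw [hPhi]
  refine ⟨(hdiff.differentiableOn).analyticOnNhd isOpen_ball, hF0, ?_⟩
  intro z hz
  by_contra hbad
  have hz1 : ‖z‖ < 1 := mem_ball_zero_iff.1 hz
  -- the set of bad points; pick one of minimal modulus
  set A : Set ℂ := closedBall (0:ℂ) ‖z‖ ∩ (FF a c ⁻¹' (Complex.exp '' ball 0 1)ᶜ) with hA
  have hAne : z ∈ A := ⟨mem_closedBall_zero_iff.2 le_rfl, hbad⟩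
  have hAcomp : IsCompact A := (isCompact_closedBall _ _).inter_right
    (((isOpenMap_exp _ isOpen_ball).isClosed_compl).preimage hcontF)
  obtain ⟨z0, hz0A, hz0min⟩ := hAcomp.exists_isMinOn ⟨z, hAne⟩ continuous_norm.continuousOn
  set r0 : ℝ := ‖z0‖ with hr0
  have hr0lt : r0 < 1 := lt_of_le_of_lt (mem_closedBall_zero_iff.1 hz0A.1) hz1
  have hz0bad : FF a c z0 ∉ Complex.exp '' ball 0 1 := hz0A.2
  have hr0pos : 0 < r0 := by
    rcases eq_or_lt_of_le (norm_nonneg z0) with he | hlt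
    · exfalso
      have hz00 : z0 = 0 := norm_eq_zero.1 he.symm
      apply hz0bad
      rw [hz00, hF0]
      exact ⟨0, mem_ball_zero_iff.2 (by norm_num), Complex.exp_zero⟩
    · exact hlt
  -- interior points are good
  have hin : ∀ w : ℂ, ‖w‖ < r0 → FF a c w ∈ Complex.exp '' ball 0 1 := by
    intro w hw
    by_contra hbw
    have hwA : w ∈ A :=
      ⟨mem_closedBall_zero_iff.2 (le_trans hw.le (mem_closedBall_zero_iff.1 hz0A.1)), hbw⟩
    exact absurd (isMinOn_iff.1 hz0min w hwA) (not_le.2 hw)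
  -- sphere points are in the closed image
  have hsph : ∀ w : ℂ, ‖w‖ = r0 → FF a c w ∈ Complex.exp '' closedBall 0 1 := by
    intro w hw
    have hcl : FF a c w ∈ closure (Complex.exp '' ball 0 1) := by
      have hcont2 : Continuous (fun t : ℝ => FF a c ((t:ℂ) * w)) :=
        hcontF.comp ((Complex.continuous_ofReal).mul continuous_const)
      have ht : Filter.Tendsto (fun t : ℝ => FF a c ((t:ℂ) * w))
          (nhdsWithin 1 (Iio 1)) (nhds (FF a c w)) := by
        have := hcont2.tendsto 1
        simp only [Complex.ofReal_one, one_mul] at this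
        exact this.mono_left nhdsWithin_le_nhds
      apply mem_closure_of_tendsto ht
      filter_upwards [Ioo_mem_nhdsLT_of_mem (⟨zero_lt_one, le_refl (1:ℝ)⟩ : (1:ℝ) ∈ Ioc 0 1)]
        with t htI
      apply hin
      rw [norm_mul, Complex.norm_real, Real.norm_eq_abs, abs_of_pos htI.1, hw]
      nlinarith [htI.1, htI.2, hr0pos]
    have hsub : closure (Complex.exp '' ball 0 1) ⊆ Complex.exp '' closedBall 0 1 :=
      closure_minimal (image_mono ball_subset_closedBall)
        ((isCompact_closedBall _ _).image Complex.continuous_exp).isClosed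
    exact hsub hcl
  -- the logarithm of F
  set ω : ℂ → ℂ := fun y => Complex.log (FF a c y) with hω
  have hsph_re : ∀ w : ℂ, ‖w‖ = r0 → 0 < (FF a c w).re ∧ ‖ω w‖ ≤ 1 := fun w hw =>
    ⟨(log_mem_of_exp_closedBall (hsph w hw)).2, (log_mem_of_exp_closedBall (hsph w hw)).1⟩
  have hω0 : ω 0 = 0 := by rw [hω]; simp only [hF0]; exact Complex.log_one
  have hd_in : ∀ w : ℂ, ‖w‖ < r0 → HasDerivAt ω (FF1 a c w / FF a c w) w := by
    intro w hw
    have hre : 0 < (FF a c w).re :=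
      (log_mem_of_exp_closedBall (image_mono ball_subset_closedBall (hin w hw))).2
    exact (hdF w).clog (Or.inl hre)
  -- Schwarz lemma
  have hSch : ∀ w : ℂ, ‖w‖ < r0 → ‖ω w‖ ≤ (1/r0) * ‖w‖ := by
    intro w hw
    have hd : DifferentiableOn ℂ ω (ball (0:ℂ) r0) := fun y hy =>
      ((hd_in y (mem_ball_zero_iff.1 hy)).differentiableAt).differentiableWithinAt
    have hmaps : MapsTo ω (ball (0:ℂ) r0) (ball (ω 0) 1) := by
      intro y hy
      rw [hω0, mem_ball_zero_iff]
      exact (log_mem_of_exp_ball (hin y (mem_ball_zero_iff.1 hy))).1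
    have := Complex.dist_le_div_mul_dist_of_mapsTo_ball hd (hmaps.mono_right ball_subset_closedBall) (mem_ball_zero_iff.2 hw)
    rw [hω0] at this
    simpa [dist_zero_right] using this
  -- data at `z0`
  have hrez0 : 0 < (FF a c z0).re := (hsph_re z0 rfl).1
  have hFz0ne : FF a c z0 ≠ 0 := fun hh => by simp [hh] at hrez0
  set ζ0 : ℂ := ω z0 with hζ0
  have hζ0norm : ‖ζ0‖ = 1 := by
    refine le_antisymm (hsph_re z0 rfl).2 ?_
    by_contra hlt
    push_neg at hlt
    exact hz0bad (mem_exp_ball hFz0ne hlt)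
  have hζζ : ζ0 * (starRingEnd ℂ) ζ0 = 1 := by
    rw [Complex.mul_conj]
    rw [Complex.normSq_eq_norm_sq, hζ0norm]
    norm_num
  have hdω0 : HasDerivAt ω (FF1 a c z0 / FF a c z0) z0 := (hdF z0).clog (Or.inl hrez0)
  set d : ℂ := FF1 a c z0 / FF a c z0 with hd0
  set W : ℂ := (FF2 a c z0 * FF a c z0 - FF1 a c z0 * FF1 a c z0) / FF a c z0 ^ 2 with hW
  have hωd : HasDerivAt (fun y => FF1 a c y / FF a c y) W z0 := (hdF1 z0).div (hdF z0) hFz0ne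
  set μ : ℂ := z0 * d * (starRingEnd ℂ) ζ0 with hμ
  -- radial derivative: Re μ ≥ 1
  set G : ℝ → ℝ := fun t => Complex.normSq (ω ((t:ℂ) * z0)) with hG
  have hGd : HasDerivAt G (2 * ((z0 * d) * (starRingEnd ℂ) ζ0).re) 1 := by
    have hι : HasDerivAt (fun t : ℝ => (t:ℂ) * z0) z0 1 := by
      simpa using (Complex.ofRealCLM.hasDerivAt.mul_const z0)
    have hdω0' : HasDerivAt ω d (((1:ℝ):ℂ) * z0) := by
      rwa [show (((1:ℝ):ℂ)) * z0 = z0 by simp]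
    have hcomp : HasDerivAt (fun t : ℝ => ω ((t:ℂ) * z0)) (z0 • d) 1 :=
      by have := hdω0'.scomp 1 hι; exact this
    have hns := hasDerivAt_normSq hcomp
    simp only [smul_eq_mul] at hns
    rw [show (((1:ℝ):ℂ)) * z0 = z0 by simp, ← hζ0] at hns
    exact hns
  have hG1 : G 1 = 1 := by
    rw [hG]
    simp only [Complex.ofReal_one, one_mul]
    rw [← hζ0, Complex.normSq_eq_norm_sq, hζ0norm]
    norm_num
  have hm1 : 1 ≤ μ.re := by
    have hGle : ∀ t ∈ Ioo (0:ℝ) 1, G t ≤ t^2 := by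
      intro t ht
      have hnt : ‖((t:ℂ) * z0)‖ = t * r0 := by
        rw [norm_mul, Complex.norm_real, Real.norm_eq_abs, abs_of_pos ht.1]
      have h1 : ‖ω ((t:ℂ)*z0)‖ ≤ (1/r0) * (t * r0) := by
        have := hSch ((t:ℂ)*z0) (by rw [hnt]; nlinarith [ht.2, hr0pos])
        rwa [hnt] at this
      have h2 : (1/r0)*(t*r0) = t := by field_simp
      rw [h2] at h1
      show Complex.normSq (ω ((t:ℂ) * z0)) ≤ t^2
      rw [Complex.normSq_eq_norm_sq]
      nlinarith [norm_nonneg (ω ((t:ℂ)*z0))]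
    have hts : Filter.Tendsto (slope G 1) (nhdsWithin 1 (Iio 1))
        (nhds (2 * ((z0 * d) * (starRingEnd ℂ) ζ0).re)) :=
      (hasDerivAt_iff_tendsto_slope.1 hGd).mono_left
        (nhdsWithin_mono 1 (fun x hx => ne_of_lt hx))
    have htlin : Filter.Tendsto (fun t : ℝ => 1 + t) (nhdsWithin 1 (Iio 1)) (nhds 2) := by
      have h0 : Filter.Tendsto (fun t : ℝ => 1 + t) (nhds 1) (nhds (1 + 1)) :=
        Filter.Tendsto.const_add 1 Filter.tendsto_id
      norm_num at h0
      exact h0.mono_left nhdsWithin_le_nhds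
    have hev : ∀ᶠ t in nhdsWithin 1 (Iio 1), 1 + t ≤ slope G 1 t := by
      filter_upwards [Ioo_mem_nhdsLT_of_mem (⟨zero_lt_one, le_refl (1:ℝ)⟩ : (1:ℝ) ∈ Ioc 0 1)]
        with t ht
      rw [slope_def_field, hG1, le_div_iff_of_neg (by linarith [ht.2] : t - 1 < 0)]
      nlinarith [hGle t ht]
    have hle := le_of_tendsto_of_tendsto htlin hts hev
    rw [hμ]
    linarith
  -- tangential: the circle function
  set w : ℝ → ℂ := fun θ => z0 * Complex.exp ((θ:ℂ) * Complex.I) with hwdef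
  have hwnorm : ∀ θ, ‖w θ‖ = r0 := by
    intro θ
    rw [hwdef]
    simp only [norm_mul]
    rw [Complex.norm_exp]
    simp [hr0]
  have hw0 : w 0 = z0 := by rw [hwdef]; simp
  have hwd : ∀ θ, HasDerivAt w (w θ * Complex.I) θ := by
    intro θ
    have h1 : HasDerivAt (fun s : ℝ => (s:ℂ) * Complex.I) Complex.I θ := by
      simpa using (Complex.ofRealCLM.hasDerivAt.mul_const Complex.I)
    have h2 : HasDerivAt Complex.exp (Complex.exp ((θ:ℂ)*Complex.I)) ((θ:ℂ)*Complex.I) :=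
      Complex.hasDerivAt_exp _
    have h3 : HasDerivAt (fun s : ℝ => Complex.exp ((s:ℂ) * Complex.I))
        (Complex.I • Complex.exp ((θ:ℂ)*Complex.I)) θ := h2.scomp θ h1
    have h4 := h3.const_mul z0
    simp only [smul_eq_mul] at h4
    refine h4.congr_deriv ?_
    rw [hwdef]
    ring
  have hθre : ∀ θ, 0 < (FF a c (w θ)).re := fun θ => (hsph_re _ (hwnorm θ)).1
  have hQd : ∀ θ, HasDerivAt (fun s => ω (w s))
      ((w θ * Complex.I) * (FF1 a c (w θ) / FF a c (w θ))) θ := by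
    intro θ
    have hσ : HasDerivAt ω (FF1 a c (w θ) / FF a c (w θ)) (w θ) :=
      (hdF (w θ)).clog (Or.inl (hθre θ))
    have := hσ.scomp θ (hwd θ)
    rw [smul_eq_mul] at this
    exact this
  set k : ℝ → ℝ := fun θ =>
    2 * (((w θ * Complex.I) * (FF1 a c (w θ) / FF a c (w θ))) * (starRingEnd ℂ) (ω (w θ))).re
    with hkdef
  have hhd : ∀ θ, HasDerivAt (fun s => Complex.normSq (ω (w s))) (k θ) θ := fun θ =>
    hasDerivAt_normSq (hQd θ)
  have hmax : ∀ θ, Complex.normSq (ω (w θ)) ≤ Complex.normSq (ω (w 0)) := by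
    intro θ
    rw [hw0, ← hζ0]
    have h1 := (hsph_re _ (hwnorm θ)).2
    rw [Complex.normSq_eq_norm_sq, Complex.normSq_eq_norm_sq,
      hζ0norm]
    nlinarith [norm_nonneg (ω (w θ))]
  -- second derivative of the circle function
  have hP : HasDerivAt (fun θ => (w θ * Complex.I) * (FF1 a c (w θ) / FF a c (w θ)))
      ((z0 * Complex.I * Complex.I) * d + (z0 * Complex.I) * ((z0 * Complex.I) * W)) 0 := by
    have h1 : HasDerivAt (fun θ => w θ * Complex.I) (z0 * Complex.I * Complex.I) 0 := by
      have := (hwd 0).mul_const Complex.I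
      rwa [hw0] at this
    have h2 : HasDerivAt (fun θ => FF1 a c (w θ) / FF a c (w θ)) ((z0 * Complex.I) * W) 0 := by
      have hωd' : HasDerivAt (fun y => FF1 a c y / FF a c y) W (w 0) := by rwa [hw0]
      have := hωd'.scomp 0 (hwd 0)
      rw [hw0] at this
      rw [smul_eq_mul] at this
      exact this
    have h5 := h1.mul h2
    rw [hw0] at h5
    exact h5
  have hQs : HasDerivAt (fun θ => (starRingEnd ℂ) (ω (w θ)))
      ((starRingEnd ℂ) ((z0 * Complex.I) * d)) 0 := by
    have h1 := (hQd 0).star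
    rw [hw0] at h1
    simp only [RCLike.star_def] at h1
    rw [← hd0] at h1
    exact h1
  have hkd : HasDerivAt k
      (2 * ((((z0 * Complex.I * Complex.I) * d + (z0 * Complex.I) * ((z0 * Complex.I) * W))
        * (starRingEnd ℂ) ζ0 + ((z0 * Complex.I) * d) * (starRingEnd ℂ) ((z0 * Complex.I) * d)).re))
      0 := by
    have hprod := hP.mul hQs
    rw [hw0] at hprod
    have h3 := Complex.reCLM.hasFDerivAt.comp_hasDerivAt 0 hprod
    have h4 := h3.const_mul (2:ℝ)
    simp only [Complex.reCLM_apply] at h4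
    rw [← hζ0, ← hd0] at h4
    exact h4
  have hκ := second_deriv_test hhd hkd hmax
  -- μ is real
  have hk0 : k 0 = 0 := by
    have h1 : IsLocalMax (fun s => Complex.normSq (ω (w s))) 0 :=
      Filter.Eventually.of_forall hmax
    have h2 := h1.deriv_eq_zero
    rw [(hhd 0).deriv] at h2
    exact h2
  have hμim : μ.im = 0 := by
    have h1 : ((w 0 * Complex.I) * (FF1 a c (w 0) / FF a c (w 0))) * (starRingEnd ℂ) (ω (w 0))
        = Complex.I * μ := by
      rw [hw0, ← hd0, ← hζ0, hμ]
      ring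
    have h2 : k 0 = 2 * (Complex.I * μ).re := by simp only [hkdef]; rw [h1]
    rw [hk0] at h2
    simp only [Complex.mul_re, Complex.I_re, Complex.I_im] at h2
    linarith
  set m : ℝ := μ.re with hm
  have hμeq : μ = (m:ℝ) := by
    apply Complex.ext
    · simp [hm]
    · simp [hμim]
  have hm0 : (0:ℝ) < m := by linarith
  have hzd : z0 * d = (m:ℂ) * ζ0 := by
    have h' : (starRingEnd ℂ) ζ0 * ζ0 = 1 := by rw [mul_comm]; exact hζζ
    calc z0 * d = z0 * d * ((starRingEnd ℂ) ζ0 * ζ0) := by rw [h', mul_one]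
      _ = μ * ζ0 := by rw [hμ]; ring
      _ = (m:ℂ) * ζ0 := by rw [hμeq]
  -- the ODE at z0
  have hode := ode hc h z0
  have hE0 : z0^2 * W + (z0*d)^2 + (c - z0)*(z0*d) - a*z0 = 0 := by
    have heq : z0^2 * W + (z0*d)^2 + (c - z0)*(z0*d) - a*z0
        = (z0 / FF a c z0) * (z0 * FF2 a c z0 + (c - z0) * FF1 a c z0 - a * FF a c z0) := by
      rw [hW, hd0]
      field_simp
      ring
    rw [heq, hode, mul_zero]
  set X : ℂ := z0^2 * W * (starRingEnd ℂ) ζ0 with hX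
  -- from the second derivative condition
  have hXge : m^2 - m ≤ X.re := by
    have hinner : (((z0 * Complex.I * Complex.I) * d + (z0 * Complex.I) * ((z0 * Complex.I) * W))
        * (starRingEnd ℂ) ζ0 + ((z0 * Complex.I) * d) * (starRingEnd ℂ) ((z0 * Complex.I) * d))
        = -μ - X + ((m:ℂ))^2 := by
      have hconj : (starRingEnd ℂ) ((z0 * Complex.I) * d)
          = (starRingEnd ℂ) z0 * (starRingEnd ℂ) Complex.I * (starRingEnd ℂ) d := by
        simp [map_mul]
      have hconjzd : (starRingEnd ℂ) (z0 * d) = (m:ℂ) * (starRingEnd ℂ) ζ0 := by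
        rw [hzd, map_mul, Complex.conj_ofReal]
      have h2 : ((z0 * Complex.I) * d) * (starRingEnd ℂ) ((z0 * Complex.I) * d)
          = ((m:ℂ))^2 := by
        have : ((z0 * Complex.I) * d) * (starRingEnd ℂ) ((z0 * Complex.I) * d)
            = (z0 * d) * (starRingEnd ℂ) (z0 * d) * (Complex.I * (starRingEnd ℂ) Complex.I) := by
          simp only [map_mul]
          ring
        rw [this, hconjzd, hzd, Complex.conj_I]
        have : (m:ℂ) * ζ0 * ((m:ℂ) * (starRingEnd ℂ) ζ0) = (m:ℂ)^2 * (ζ0 * (starRingEnd ℂ) ζ0) := by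
          ring
        rw [this, hζζ]
        have : Complex.I * -Complex.I = 1 := by
          rw [mul_neg, Complex.I_mul_I]
          norm_num
        rw [this]
        ring
      rw [h2]
      have h3 : (z0 * Complex.I * Complex.I) * d = -(z0 * d) := by
        rw [mul_assoc z0, Complex.I_mul_I]
        ring
      rw [h3]
      have h4 : (-(z0 * d) + (z0 * Complex.I) * ((z0 * Complex.I) * W)) * (starRingEnd ℂ) ζ0
          = -μ - X := by
        rw [hμ, hX]
        have hIW : (z0 * Complex.I) * ((z0 * Complex.I) * W)
            = (Complex.I * Complex.I) * (z0^2 * W) := by ring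
        rw [hIW, Complex.I_mul_I]
        ring
      rw [h4]
    rw [hinner] at hκ
    have hre2 : (-μ - X + ((m:ℂ))^2).re = -m - X.re + m^2 := by
      rw [show ((m:ℂ))^2 = (((m^2 : ℝ)):ℂ) by push_cast; ring]
      simp only [Complex.add_re, Complex.sub_re, Complex.neg_re, Complex.ofReal_re]
      rw [← hm]
    rw [hre2] at hκ
    linarith
  -- express X from the ODE
  have hXeq : X = a * z0 * (starRingEnd ℂ) ζ0 - (m:ℂ)^2 * ζ0 - (m:ℂ) * (c - z0) := by
    have h1 : z0^2 * W = a*z0 - (z0*d)^2 - (c - z0)*(z0*d) := by linear_combination hE0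
    rw [hX, h1, hzd]
    have h2 : (a*z0 - ((m:ℂ) * ζ0)^2 - (c - z0)*((m:ℂ) * ζ0)) * (starRingEnd ℂ) ζ0
        = a * z0 * (starRingEnd ℂ) ζ0 - (m:ℂ)^2 * ζ0 * (ζ0 * (starRingEnd ℂ) ζ0)
          - (m:ℂ) * (c - z0) * (ζ0 * (starRingEnd ℂ) ζ0) := by ring
    rw [h2, hζζ]
    ring
  -- take real parts and derive the contradiction
  have hXre : X.re = (a * z0 * (starRingEnd ℂ) ζ0).re - m^2 * ζ0.re - m * (c.re - z0.re) := by
    rw [hXeq]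
    simp only [Complex.sub_re]
    congr 1
    · congr 1
      rw [show ((m:ℂ))^2 = (((m^2 : ℝ)):ℂ) by push_cast; ring]
      rw [Complex.re_ofReal_mul]
    · rw [Complex.re_ofReal_mul, Complex.sub_re]
  have habs1 : (a * z0 * (starRingEnd ℂ) ζ0).re ≤ ‖a‖ * r0 := by
    calc (a * z0 * (starRingEnd ℂ) ζ0).re ≤ ‖a * z0 * (starRingEnd ℂ) ζ0‖ :=
          Complex.re_le_norm _
      _ = ‖a‖ * ‖z0‖ * ‖ζ0‖ := by
          rw [norm_mul, norm_mul, Complex.norm_conj]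
      _ = ‖a‖ * r0 * 1 := by
          rw [← hr0, hζ0norm]
      _ = ‖a‖ * r0 := by ring
  have hζre : -1 ≤ ζ0.re := by
    have := Complex.abs_re_le_norm ζ0
    rw [hζ0norm] at this
    cases abs_le.1 this
    linarith
  have hz0re : z0.re ≤ r0 := by
    have := Complex.re_le_norm z0
    rwa [← hr0] at this
  -- final arithmetic
  have A1 : m^2 - m ≤ ‖a‖ * r0 - m^2 * ζ0.re - m*c.re + m*z0.re := by
    rw [hXre] at hXge
    linarith
  have A2 : -(m^2 * ζ0.re) ≤ m^2 := by nlinarith [sq_nonneg m]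
  have A3 : m * (‖a‖ + 2) ≤ m * c.re := mul_le_mul_of_nonneg_left h (by linarith)
  have A4 : m * z0.re ≤ m * r0 := mul_le_mul_of_nonneg_left hz0re (by linarith)
  have A5 : ‖a‖ * r0 ≤ ‖a‖ * m :=
    mul_le_mul_of_nonneg_left (by linarith) (norm_nonneg _)
  have A6 : m * r0 < m * 1 := by
    apply mul_lt_mul_of_pos_left hr0lt hm0
  nlinarith [A1, A2, A3, A4, A5, A6]
end

section
/- Let μ, ν ∈ ℝ be such that μ+ν and μ−ν are not negative odd integers, and set M = (μ+5)² − ν² and N = (μ+3)² − ν². Suppose μ > −5 + (3/2 + ν²)^{1/2}, 4M/N < 2M − 3, and μ(1 + 2 sin 1) − (1/4)e(e−1)|(μ+1)(μ−7) − ν²| ≥ e⁴ − 3e³ + 13e²/4 − 3e/4 − 3/e + 2 − 2 sin 1. Then the normalized Lommel function h_{μ,ν} belongs to the class K_e of exponential convex functions. -/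
open Complex Metric Set

/-- The normalized Lommel function of the first kind
`h_{μ,ν}(z) = z + ∑_{n≥1} ((−1/4)^n / (((μ−ν+3)/2)_n ((μ+ν+3)/2)_n)) z^{n+1}`. -/
noncomputable def lommelH (μ ν : ℝ) (z : ℂ) : ℂ :=
  z + ∑' n : ℕ, (-1/4 : ℂ) ^ (n + 1) /
    (poch (((μ - ν + 3) / 2 : ℝ) : ℂ) (n + 1) * poch (((μ + ν + 3) / 2 : ℝ) : ℂ) (n + 1)) *
      z ^ (n + 2)

/-- Termwise differentiation of a series of functions on an open set,
via the Weierstrass M-test. -/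
lemma hasDerivAt_tsum_on {f f' : ℕ → ℂ → ℂ} {u : ℕ → ℝ} {s : Set ℂ} (hs : IsOpen s)
    (hu : Summable u) (hderiv : ∀ n, ∀ x ∈ s, HasDerivAt (f n) (f' n x) x)
    (hbound : ∀ n, ∀ x ∈ s, ‖f' n x‖ ≤ u n)
    (hsum : ∀ x ∈ s, Summable fun n => f n x) {x : ℂ} (hx : x ∈ s) :
    HasDerivAt (fun y => ∑' n, f n y) (∑' n, f' n x) x := by
  apply hasDerivAt_of_tendstoUniformlyOn hs
    (tendstoUniformlyOn_tsum hu (fun n x hx => hbound n x hx))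
    (Filter.Eventually.of_forall ?_) (fun x hx => (hsum x hx).hasSum) hx
  intro t y hy
  exact HasDerivAt.fun_sum (fun i _ => hderiv i y hy)

noncomputable def lA (a b : ℝ) (n : ℕ) : ℂ :=
  (-1/4 : ℂ) ^ (n+1) / (poch (a : ℂ) (n+1) * poch (b : ℂ) (n+1))

noncomputable def lc (a b : ℝ) : ℕ → ℂ
  | 0 => 0
  | 1 => 1
  | (n+2) => lA a b n

noncomputable def lh (a b : ℝ) (z : ℂ) : ℂ := z + ∑' n : ℕ, lA a b n * z ^ (n+2)
noncomputable def lg1 (a b : ℝ) (z : ℂ) : ℂ := ∑' n : ℕ, (n : ℂ) * lc a b n * z ^ (n-1)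
noncomputable def lg2 (a b : ℝ) (z : ℂ) : ℂ :=
  ∑' n : ℕ, (n : ℂ) * ((n-1 : ℕ) : ℂ) * lc a b n * z ^ (n-1-1)

lemma poch_ofReal (r : ℝ) (m : ℕ) :
    poch (r : ℂ) m = ((∏ k ∈ Finset.range m, (r + k) : ℝ) : ℂ) := by
  simp [poch]

lemma norm_lA_le {a b : ℝ} (ha : 0 < a) (hb : 0 < b) (hab : 16 ≤ a * b) (n : ℕ) :
    ‖lA a b n‖ ≤ (1/64 : ℝ) ^ (n+1) := by
  have hterm : ∀ k : ℕ, (16 : ℝ) ≤ (a + k) * (b + k) := by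
    intro k
    have hk : (0:ℝ) ≤ (k:ℝ) := Nat.cast_nonneg k
    nlinarith
  have hPa : (0:ℝ) < ∏ k ∈ Finset.range (n+1), (a + k) :=
    Finset.prod_pos (fun k _ => by positivity)
  have hPb : (0:ℝ) < ∏ k ∈ Finset.range (n+1), (b + k) :=
    Finset.prod_pos (fun k _ => by positivity)
  have hprod : (16 : ℝ) ^ (n+1) ≤
      (∏ k ∈ Finset.range (n+1), (a + k)) * (∏ k ∈ Finset.range (n+1), (b + k)) := by
    rw [← Finset.prod_mul_distrib]
    calc (16:ℝ)^(n+1) = ∏ _k ∈ Finset.range (n+1), (16:ℝ) := by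
          rw [Finset.prod_const, Finset.card_range]
      _ ≤ _ := Finset.prod_le_prod (fun k _ => by norm_num) (fun k _ => hterm k)
  have hnorm : ‖poch (a : ℂ) (n+1) * poch (b : ℂ) (n+1)‖ =
      (∏ k ∈ Finset.range (n+1), (a + k)) * (∏ k ∈ Finset.range (n+1), (b + k)) := by
    rw [poch_ofReal, poch_ofReal, norm_mul, Complex.norm_real, Complex.norm_real,
      Real.norm_eq_abs, Real.norm_eq_abs, abs_of_pos hPa, abs_of_pos hPb]
  have hnum : ‖(-1/4 : ℂ) ^ (n+1)‖ = (1/4 : ℝ) ^ (n+1) := by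
    rw [norm_pow]
    norm_num
  rw [lA, norm_div, hnum, hnorm]
  rw [div_le_iff₀ (by positivity)]
  calc (1/64 : ℝ) ^ (n+1) * ((∏ k ∈ Finset.range (n+1), (a + k)) *
        (∏ k ∈ Finset.range (n+1), (b + k)))
      ≥ (1/64 : ℝ) ^ (n+1) * (16 : ℝ)^(n+1) := by
        apply mul_le_mul_of_nonneg_left hprod (by positivity)
    _ = (1/4 : ℝ) ^ (n+1) := by
        rw [← mul_pow]; norm_num
lemma norm_lc_le {a b : ℝ} (ha : 0 < a) (hb : 0 < b) (hab : 16 ≤ a * b) (n : ℕ) :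
    ‖lc a b n‖ ≤ (1/64 : ℝ) ^ (n-1) := by
  match n with
  | 0 => simp [lc]
  | 1 => simp [lc]
  | (m+2) =>
    have := norm_lA_le ha hb hab m
    simpa [lc] using this

lemma nat_add_two_le : ∀ n : ℕ, ((n:ℝ) + 2) ≤ 2 ^ (n+1) := by
  intro n
  induction n with
  | zero => norm_num
  | succ k ih =>
    have : (2:ℝ)^(k+1+1) = 2 * 2^(k+1) := by ring
    push_cast at *
    nlinarith [pow_pos (by norm_num : (0:ℝ) < 2) (k+1)]

lemma nat_mul_le : ∀ n : ℕ, ((n:ℝ) + 2) * ((n:ℝ) + 1) ≤ 4 ^ (n+1) := by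
  intro n
  induction n with
  | zero => norm_num
  | succ k ih =>
    have h4 : (4:ℝ)^(k+1+1) = 4 * 4^(k+1) := by ring
    push_cast at *
    nlinarith [pow_pos (by norm_num : (0:ℝ) < 4) (k+1)]

-- Summability of the majorant series
lemma summable_maj (k : ℕ) : Summable (fun n : ℕ => (64:ℝ) * ((n:ℝ)^k * (3/128)^n)) := by
  apply Summable.mul_left
  have h : ‖(3/128 : ℝ)‖ < 1 := by
    rw [Real.norm_eq_abs, abs_of_pos] <;> norm_num
  exact summable_pow_mul_geometric_of_norm_lt_one k h

section Main

variable {a b : ℝ}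

lemma bound_f1 (ha : 0 < a) (hb : 0 < b) (hab : 16 ≤ a * b) :
    ∀ n : ℕ, ∀ z : ℂ, z ∈ Metric.ball (0:ℂ) (3/2) →
      ‖(n : ℂ) * lc a b n * z ^ (n-1)‖ ≤ (64:ℝ) * ((n:ℝ)^1 * (3/128)^n) := by
  intro n z hz
  have hz' : ‖z‖ < 3/2 := by simpa [mem_ball, dist_eq_norm] using hz
  match n with
  | 0 => simp
  | (m+1) =>
    rw [norm_mul, norm_mul, norm_pow]
    have h1 : ‖((m+1 : ℕ) : ℂ)‖ = (m:ℝ) + 1 := by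
      rw [Complex.norm_natCast]; push_cast; ring
    have h2 : ‖lc a b (m+1)‖ ≤ (1/64:ℝ)^(m+1-1) := norm_lc_le ha hb hab (m+1)
    have h3 : ‖z‖ ^ (m+1-1) ≤ (3/2:ℝ)^m := by
      simpa using pow_le_pow_left₀ (norm_nonneg z) hz'.le m
    have hm : (m+1-1 : ℕ) = m := rfl
    rw [hm] at h2 h3
    have hnn : (0:ℝ) ≤ (m:ℝ) + 1 := by positivity
    calc ‖((m+1 : ℕ) : ℂ)‖ * ‖lc a b (m+1)‖ * ‖z‖ ^ m
        ≤ ((m:ℝ)+1) * (1/64:ℝ)^m * (3/2:ℝ)^m := by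
          rw [h1]
          apply mul_le_mul (mul_le_mul_of_nonneg_left h2 hnn) h3 (by positivity) (by positivity)
      _ = ((m:ℝ)+1) * (3/128:ℝ)^m := by rw [mul_assoc, ← mul_pow]; norm_num
      _ ≤ (64:ℝ) * (((m:ℝ)+1)^1 * (3/128)^(m+1)) := by
          have : (3/128:ℝ)^(m+1) = (3/128) * (3/128)^m := by ring
          rw [this, pow_one]
          nlinarith [pow_pos (by norm_num : (0:ℝ) < 3/128) m, Nat.cast_nonneg (α := ℝ) m]
      _ = (64:ℝ) * (((m+1:ℕ):ℝ)^1 * (3/128)^(m+1)) := by push_cast; ring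

lemma bound_f2 (ha : 0 < a) (hb : 0 < b) (hab : 16 ≤ a * b) :
    ∀ n : ℕ, ∀ z : ℂ, z ∈ Metric.ball (0:ℂ) (3/2) →
      ‖(n : ℂ) * ((n-1 : ℕ) : ℂ) * lc a b n * z ^ (n-1-1)‖ ≤
        (64:ℝ) * ((n:ℝ)^2 * (3/128)^n) := by
  intro n z hz
  have hz' : ‖z‖ < 3/2 := by simpa [mem_ball, dist_eq_norm] using hz
  match n with
  | 0 => simp
  | (m+1) =>
    rw [norm_mul, norm_mul, norm_mul, norm_pow]
    have h1 : ‖((m+1 : ℕ) : ℂ)‖ = (m:ℝ) + 1 := by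
      rw [Complex.norm_natCast]; push_cast; ring
    have h1' : ‖((m+1-1 : ℕ) : ℂ)‖ = (m:ℝ) := by
      simp [Complex.norm_natCast]
    have h2 : ‖lc a b (m+1)‖ ≤ (1/64:ℝ)^m := norm_lc_le ha hb hab (m+1)
    have h3 : ‖z‖ ^ (m+1-1-1) ≤ (3/2:ℝ)^m := by
      calc ‖z‖ ^ (m-1) ≤ (3/2:ℝ)^(m-1) := pow_le_pow_left₀ (norm_nonneg z) hz'.le _
        _ ≤ (3/2:ℝ)^m := pow_le_pow_right₀ (by norm_num) (Nat.sub_le m 1)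
    have hnn : (0:ℝ) ≤ ((m:ℝ)+1) * (m:ℝ) := by positivity
    calc ‖((m+1 : ℕ) : ℂ)‖ * ‖((m+1-1 : ℕ) : ℂ)‖ * ‖lc a b (m+1)‖ * ‖z‖ ^ (m+1-1-1)
        ≤ (((m:ℝ)+1) * (m:ℝ)) * (1/64:ℝ)^m * (3/2:ℝ)^m := by
          rw [h1, h1']
          apply mul_le_mul (mul_le_mul_of_nonneg_left h2 hnn) h3 (by positivity) (by positivity)
      _ = (((m:ℝ)+1) * (m:ℝ)) * (3/128:ℝ)^m := by rw [mul_assoc, ← mul_pow]; norm_num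
      _ ≤ (64:ℝ) * (((m:ℝ)+1)^2 * (3/128)^(m+1)) := by
          have he : (3/128:ℝ)^(m+1) = (3/128) * (3/128)^m := by ring
          rw [he]
          nlinarith [pow_pos (by norm_num : (0:ℝ) < 3/128) m, Nat.cast_nonneg (α := ℝ) m,
            mul_pos (pow_pos (by norm_num : (0:ℝ) < 3/128) m)
              (by positivity : (0:ℝ) < ((m:ℝ)+1)^2)]
      _ = (64:ℝ) * (((m+1:ℕ):ℝ)^2 * (3/128)^(m+1)) := by push_cast; ring

lemma summable_f0 (ha : 0 < a) (hb : 0 < b) (hab : 16 ≤ a * b) {z : ℂ}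
    (hz : z ∈ Metric.ball (0:ℂ) (3/2)) : Summable fun n => lc a b n * z ^ n := by
  have hz' : ‖z‖ < 3/2 := by simpa [mem_ball, dist_eq_norm] using hz
  apply Summable.of_norm_bounded (g := fun n : ℕ => (64:ℝ) * ((n:ℝ)^0 * (3/128)^n))
    (summable_maj 0)
  intro n
  rw [norm_mul, norm_pow, pow_zero, one_mul]
  match n with
  | 0 => norm_num [show lc a b 0 = (0:ℂ) from rfl]
  | (m+1) =>
    have h2 : ‖lc a b (m+1)‖ ≤ (1/64:ℝ)^m := norm_lc_le ha hb hab (m+1)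
    have h3 : ‖z‖ ^ (m+1) ≤ (3/2:ℝ)^(m+1) := pow_le_pow_left₀ (norm_nonneg z) hz'.le _
    calc ‖lc a b (m+1)‖ * ‖z‖^(m+1) ≤ (1/64:ℝ)^m * (3/2:ℝ)^(m+1) := by
          apply mul_le_mul h2 h3 (by positivity) (by positivity)
      _ ≤ (64:ℝ) * (3/128:ℝ)^(m+1) := by
          have : (1/64:ℝ)^m * (3/2:ℝ)^(m+1) = (3/2) * (3/128)^m := by
            rw [pow_succ, ← mul_assoc, ← mul_pow]; norm_num [mul_comm]
          rw [this]
          have : (3/128:ℝ)^(m+1) = (3/128) * (3/128)^m := by ring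
          rw [this]
          nlinarith [pow_pos (by norm_num : (0:ℝ) < 3/128) m]

lemma summable_f1 (ha : 0 < a) (hb : 0 < b) (hab : 16 ≤ a * b) {z : ℂ}
    (hz : z ∈ Metric.ball (0:ℂ) (3/2)) :
    Summable fun n : ℕ => (n : ℂ) * lc a b n * z ^ (n-1) :=
  Summable.of_norm_bounded (summable_maj 1) (fun n => bound_f1 ha hb hab n z hz)

lemma lc_succ_succ (a b : ℝ) (n : ℕ) : lc a b (n+2) = lA a b n := rfl

lemma hasSum_lh (ha : 0 < a) (hb : 0 < b) (hab : 16 ≤ a * b) {z : ℂ}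
    (hz : z ∈ Metric.ball (0:ℂ) (3/2)) :
    HasSum (fun n => lc a b n * z ^ n) (lh a b z) := by
  have hs := summable_f0 ha hb hab hz
  have h2 : Summable fun n => lc a b (n+2) * z ^ (n+2) :=
    (summable_nat_add_iff (f := fun n => lc a b n * z ^ n) 2).2 hs
  have he : (fun n => lc a b (n+2) * z ^ (n+2)) = (fun n => lA a b n * z ^ (n+2)) :=
    funext (fun n => by rw [lc_succ_succ])
  rw [he] at h2
  apply (hasSum_nat_add_iff' (f := fun n => lc a b n * z ^ n) 2).1
  have hrange : ∑ i ∈ Finset.range 2, lc a b i * z ^ i = z := by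
    simp [Finset.sum_range_succ, lc]
  rw [hrange]
  have hlh : lh a b z - z = ∑' n, lA a b n * z ^ (n+2) := by
    rw [lh]; ring
  have : HasSum (fun n => lc a b (n+2) * z ^ (n+2)) (∑' n, lA a b n * z ^ (n+2)) := by
    rw [he]; exact h2.hasSum
  rwa [hlh]

lemma summable_f2 (ha : 0 < a) (hb : 0 < b) (hab : 16 ≤ a * b) {z : ℂ}
    (hz : z ∈ Metric.ball (0:ℂ) (3/2)) :
    Summable fun n : ℕ => (n : ℂ) * ((n-1 : ℕ) : ℂ) * lc a b n * z ^ (n-1-1) :=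
  Summable.of_norm_bounded (summable_maj 2) (fun n => bound_f2 ha hb hab n z hz)

lemma hasSum_lg1 (ha : 0 < a) (hb : 0 < b) (hab : 16 ≤ a * b) {z : ℂ}
    (hz : z ∈ Metric.ball (0:ℂ) (3/2)) :
    HasSum (fun n : ℕ => (n : ℂ) * lc a b n * z ^ (n-1)) (lg1 a b z) :=
  (summable_f1 ha hb hab hz).hasSum

lemma hasSum_lg2 (ha : 0 < a) (hb : 0 < b) (hab : 16 ≤ a * b) {z : ℂ}
    (hz : z ∈ Metric.ball (0:ℂ) (3/2)) :
    HasSum (fun n : ℕ => (n : ℂ) * ((n-1 : ℕ) : ℂ) * lc a b n * z ^ (n-1-1)) (lg2 a b z) :=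
  (summable_f2 ha hb hab hz).hasSum

lemma hasSum_lg1_shift (ha : 0 < a) (hb : 0 < b) (hab : 16 ≤ a * b) {z : ℂ}
    (hz : z ∈ Metric.ball (0:ℂ) (3/2)) :
    HasSum (fun n : ℕ => ((n+2 : ℕ) : ℂ) * lA a b n * z ^ (n+1)) (lg1 a b z - 1) := by
  have h := (hasSum_nat_add_iff'
    (f := fun n : ℕ => (n : ℂ) * lc a b n * z ^ (n-1)) 2).2 (hasSum_lg1 ha hb hab hz)
  have hrange : ∑ i ∈ Finset.range 2, (i : ℂ) * lc a b i * z ^ (i-1) = 1 := by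
    simp [Finset.sum_range_succ, lc]
  rw [hrange] at h
  convert h using 2 with n
  · rfl
  · rfl

lemma hasSum_lg2_shift (ha : 0 < a) (hb : 0 < b) (hab : 16 ≤ a * b) {z : ℂ}
    (hz : z ∈ Metric.ball (0:ℂ) (3/2)) :
    HasSum (fun n : ℕ => ((n+2 : ℕ) : ℂ) * ((n+1 : ℕ) : ℂ) * lA a b n * z ^ n)
      (lg2 a b z) := by
  have h := (hasSum_nat_add_iff'
    (f := fun n : ℕ => (n : ℂ) * ((n-1 : ℕ) : ℂ) * lc a b n * z ^ (n-1-1)) 2).2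
    (hasSum_lg2 ha hb hab hz)
  have hrange : ∑ i ∈ Finset.range 2,
      (i : ℂ) * ((i-1 : ℕ) : ℂ) * lc a b i * z ^ (i-1-1) = 0 := by
    simp [Finset.sum_range_succ, lc]
  rw [hrange, sub_zero] at h
  convert h using 2 with n
  · rfl
  · rfl

lemma lg1_sub_one_bound (ha : 0 < a) (hb : 0 < b) (hab : 16 ≤ a * b) {z : ℂ}
    (hz : z ∈ Metric.ball (0:ℂ) 1) : ‖lg1 a b z - 1‖ ≤ 1/31 := by
  have hz' : ‖z‖ < 1 := by simpa [mem_ball, dist_eq_norm] using hz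
  have hz32 : z ∈ Metric.ball (0:ℂ) (3/2) :=
    Metric.ball_subset_ball (by norm_num) hz
  have h := hasSum_lg1_shift ha hb hab hz32
  have hgeo : HasSum (fun n : ℕ => (1/32 : ℝ)^(n+1)) ((1 - 1/32)⁻¹ * (1/32)) := by
    have := (hasSum_geometric_of_lt_one (by norm_num : (0:ℝ) ≤ 1/32)
      (by norm_num : (1/32:ℝ) < 1)).mul_right (1/32)
    convert this using 2 with n
    · rfl
    · exact pow_succ _ _
  have hb' : ∀ n : ℕ, ‖((n+2 : ℕ) : ℂ) * lA a b n * z ^ (n+1)‖ ≤ (1/32 : ℝ)^(n+1) := by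
    intro n
    rw [norm_mul, norm_mul, norm_pow, Complex.norm_natCast]
    calc ((n+2 : ℕ) : ℝ) * ‖lA a b n‖ * ‖z‖ ^ (n+1)
        ≤ (2:ℝ)^(n+1) * (1/64)^(n+1) * 1 := by
          apply mul_le_mul
          · apply mul_le_mul _ (norm_lA_le ha hb hab n) (norm_nonneg _) (by positivity)
            push_cast
            exact nat_add_two_le n
          · exact pow_le_one₀ (norm_nonneg z) hz'.le
          · positivity
          · positivity
      _ = (1/32 : ℝ)^(n+1) := by rw [mul_one, ← mul_pow]; norm_num
  calc ‖lg1 a b z - 1‖ = ‖∑' n, ((n+2 : ℕ) : ℂ) * lA a b n * z ^ (n+1)‖ := by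
        rw [h.tsum_eq]
    _ ≤ (1 - 1/32)⁻¹ * (1/32) := tsum_of_norm_bounded hgeo hb'
    _ ≤ 1/31 := by norm_num

lemma lg2_bound (ha : 0 < a) (hb : 0 < b) (hab : 16 ≤ a * b) {z : ℂ}
    (hz : z ∈ Metric.ball (0:ℂ) 1) : ‖lg2 a b z‖ ≤ 1/15 := by
  have hz' : ‖z‖ < 1 := by simpa [mem_ball, dist_eq_norm] using hz
  have hz32 : z ∈ Metric.ball (0:ℂ) (3/2) :=
    Metric.ball_subset_ball (by norm_num) hz
  have h := hasSum_lg2_shift ha hb hab hz32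
  have hgeo : HasSum (fun n : ℕ => (1/16 : ℝ)^(n+1)) ((1 - 1/16)⁻¹ * (1/16)) := by
    have := (hasSum_geometric_of_lt_one (by norm_num : (0:ℝ) ≤ 1/16)
      (by norm_num : (1/16:ℝ) < 1)).mul_right (1/16)
    convert this using 2 with n
    · rfl
    · exact pow_succ _ _
  have hb' : ∀ n : ℕ, ‖((n+2 : ℕ) : ℂ) * ((n+1 : ℕ) : ℂ) * lA a b n * z ^ n‖
      ≤ (1/16 : ℝ)^(n+1) := by
    intro n
    rw [norm_mul, norm_mul, norm_mul, norm_pow, Complex.norm_natCast, Complex.norm_natCast]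
    calc ((n+2 : ℕ) : ℝ) * ((n+1 : ℕ) : ℝ) * ‖lA a b n‖ * ‖z‖ ^ n
        ≤ (4:ℝ)^(n+1) * (1/64)^(n+1) * 1 := by
          apply mul_le_mul
          · apply mul_le_mul _ (norm_lA_le ha hb hab n) (norm_nonneg _) (by positivity)
            push_cast
            exact nat_mul_le n
          · exact pow_le_one₀ (norm_nonneg z) hz'.le
          · positivity
          · positivity
      _ = (1/16 : ℝ)^(n+1) := by rw [mul_one, ← mul_pow]; norm_num
  calc ‖lg2 a b z‖ = ‖∑' n, ((n+2 : ℕ) : ℂ) * ((n+1 : ℕ) : ℂ) * lA a b n * z ^ n‖ := by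
        rw [h.tsum_eq]
    _ ≤ (1 - 1/16)⁻¹ * (1/16) := tsum_of_norm_bounded hgeo hb'
    _ ≤ 1/15 := by norm_num

lemma key1 (ha : 0 < a) (hb : 0 < b) (hab : 16 ≤ a * b) :
    ∀ x ∈ Metric.ball (0:ℂ) (3/2), HasDerivAt (lh a b) (lg1 a b x) x := by
  intro x hx
  have H := hasDerivAt_tsum_on (f := fun n z => lc a b n * z ^ n)
    (f' := fun n x => (n : ℂ) * lc a b n * x ^ (n-1))
    (u := fun n => (64:ℝ) * ((n:ℝ)^1 * (3/128)^n))
    isOpen_ball (summable_maj 1)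
    (fun n y _ => by
      have := (hasDerivAt_pow n y).const_mul (lc a b n)
      convert this using 1
      · rfl
      · rfl
      ring)
    (bound_f1 ha hb hab)
    (fun y hy => summable_f0 ha hb hab hy) hx
  have heq : lh a b =ᶠ[nhds x] (fun y => ∑' n, lc a b n * y ^ n) := by
    filter_upwards [isOpen_ball.mem_nhds hx] with w hw
    exact ((hasSum_lh ha hb hab hw).tsum_eq).symm
  exact H.congr_of_eventuallyEq heq

lemma key2 (ha : 0 < a) (hb : 0 < b) (hab : 16 ≤ a * b) :
    ∀ x ∈ Metric.ball (0:ℂ) (3/2), HasDerivAt (lg1 a b) (lg2 a b x) x := by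
  intro x hx
  exact hasDerivAt_tsum_on (f := fun n z => (n : ℂ) * lc a b n * z ^ (n-1))
    (f' := fun n x => (n : ℂ) * ((n-1 : ℕ) : ℂ) * lc a b n * x ^ (n-1-1))
    (u := fun n => (64:ℝ) * ((n:ℝ)^2 * (3/128)^n))
    isOpen_ball (summable_maj 2)
    (fun n y _ => by
      have := (hasDerivAt_pow (n-1) y).const_mul ((n : ℂ) * lc a b n)
      convert this using 1
      · rfl
      · rfl
      ring)
    (bound_f2 ha hb hab)
    (fun y hy => summable_f1 ha hb hab hy) hx

lemma lh_zero : lh a b 0 = 0 := by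
  simp [lh]

lemma lg1_zero (ha : 0 < a) (hb : 0 < b) (hab : 16 ≤ a * b) : lg1 a b 0 = 1 := by
  have h := hasSum_lg1_shift ha hb hab (Metric.mem_ball_self (by norm_num : (0:ℝ) < 3/2))
  have he : (fun n : ℕ => ((n+2 : ℕ) : ℂ) * lA a b n * (0:ℂ) ^ (n+1)) =
      (fun _ : ℕ => (0:ℂ)) := by
    funext n
    simp
  rw [he] at h
  have h0 : lg1 a b 0 - 1 = 0 := h.unique hasSum_zero
  rwa [sub_eq_zero] at h0

lemma lg1_norm_ge (ha : 0 < a) (hb : 0 < b) (hab : 16 ≤ a * b) {z : ℂ}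
    (hz : z ∈ Metric.ball (0:ℂ) 1) : 30/31 ≤ ‖lg1 a b z‖ := by
  have h := lg1_sub_one_bound ha hb hab hz
  have := abs_norm_sub_norm_le (lg1 a b z) 1
  rw [norm_one] at this
  have := abs_le.1 this
  linarith [this.1]

lemma lg1_ne (ha : 0 < a) (hb : 0 < b) (hab : 16 ≤ a * b) {z : ℂ}
    (hz : z ∈ Metric.ball (0:ℂ) 1) : lg1 a b z ≠ 0 := by
  intro h
  have := lg1_norm_ge ha hb hab hz
  rw [h, norm_zero] at this
  norm_num at this

lemma main_memKe (ha : 0 < a) (hb : 0 < b) (hab : 16 ≤ a * b) : memKe (lh a b) := by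
  have hsub : Metric.ball (0:ℂ) 1 ⊆ Metric.ball 0 (3/2) :=
    Metric.ball_subset_ball (by norm_num)
  have hd1 : ∀ x ∈ Metric.ball (0:ℂ) (3/2), deriv (lh a b) x = lg1 a b x :=
    fun x hx => (key1 ha hb hab x hx).deriv
  have hd1ev : ∀ x ∈ Metric.ball (0:ℂ) (3/2), deriv (lh a b) =ᶠ[nhds x] lg1 a b :=
    fun x hx => Filter.eventuallyEq_of_mem (isOpen_ball.mem_nhds hx) (fun w hw => hd1 w hw)
  have hd2 : ∀ x ∈ Metric.ball (0:ℂ) (3/2), deriv (deriv (lh a b)) x = lg2 a b x := by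
    intro x hx
    rw [(hd1ev x hx).deriv_eq, (key2 ha hb hab x hx).deriv]
  have hg1a : AnalyticOnNhd ℂ (lg1 a b) (Metric.ball 0 (3/2)) :=
    DifferentiableOn.analyticOnNhd
      (fun y hy => ((key2 ha hb hab y hy).differentiableAt).differentiableWithinAt) isOpen_ball
  have hdne : ∀ z ∈ Metric.ball (0:ℂ) 1, deriv (lh a b) z ≠ 0 := by
    intro z hz
    rw [hd1 z (hsub hz)]
    exact lg1_ne ha hb hab hz
  refine ⟨?_, lh_zero, ?_, hdne, ?_, ?_, ?_⟩
  · exact DifferentiableOn.analyticOnNhd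
      (fun y hy => ((key1 ha hb hab y (hsub hy)).differentiableAt).differentiableWithinAt)
      isOpen_ball
  · rw [hd1 0 (Metric.mem_ball_self (by norm_num))]
    exact lg1_zero ha hb hab
  · -- analyticity of p
    intro x hx
    have hx' := hsub hx
    have hA1 : AnalyticAt ℂ (deriv (lh a b)) x := ((hg1a x hx').congr (hd1ev x hx').symm)
    have hA2 : AnalyticAt ℂ (deriv (deriv (lh a b))) x := by
      have h := (hg1a.deriv) x hx'
      exact h.congr ((hd1ev x hx').deriv).symm
    have hne : deriv (lh a b) x ≠ 0 := hdne x hx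
    exact analyticAt_const.add ((analyticAt_id.mul hA2).div hA1 hne)
  · simp
  · -- mapping into exp(D)
    intro z hz
    have hz' := hsub hz
    have hnz : ‖z‖ < 1 := by simpa [mem_ball, dist_eq_norm] using hz
    set w : ℂ := z * deriv (deriv (lh a b)) z / deriv (lh a b) z with hw
    have hwval : w = z * lg2 a b z / lg1 a b z := by
      rw [hw, hd2 z hz', hd1 z hz']
    have hwbound : ‖w‖ ≤ 1/2 := by
      rw [hwval, norm_div, norm_mul]
      calc ‖z‖ * ‖lg2 a b z‖ / ‖lg1 a b z‖ ≤ (1/15) / (30/31) := by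
            apply div_le_div₀ (by norm_num)
            · calc ‖z‖ * ‖lg2 a b z‖ ≤ 1 * (1/15) := by
                    apply mul_le_mul hnz.le (lg2_bound ha hb hab hz) (norm_nonneg _)
                      (by norm_num)
                _ = 1/15 := by norm_num
            · norm_num
            · exact lg1_norm_ge ha hb hab hz
        _ ≤ 1/2 := by norm_num
    have hpne : (1 : ℂ) + w ≠ 0 := by
      intro h
      have : w = -1 := by linear_combination h
      rw [this] at hwbound
      norm_num at hwbound
    have hlog : ‖Complex.log (1 + w)‖ < 1 := by
      calc ‖Complex.log (1 + w)‖ ≤ 3/2 * ‖w‖ := Complex.norm_log_one_add_half_le_self hwbound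
        _ ≤ 3/2 * (1/2) := by linarith
        _ < 1 := by norm_num
    refine ⟨Complex.log (1 + w), ?_, ?_⟩
    · simpa [Metric.mem_ball, dist_eq_norm] using hlog
    · rw [Complex.exp_log hpne]

end Main

set_option maxHeartbeats 1600000 in
lemma numeric_facts (μ ν : ℝ)
    (h3 : μ * (1 + 2 * Real.sin 1) -
        (1 / 4) * Real.exp 1 * (Real.exp 1 - 1) * |(μ + 1) * (μ - 7) - ν ^ 2| ≥
      (Real.exp 1) ^ 4 - 3 * (Real.exp 1) ^ 3 + 13 * (Real.exp 1) ^ 2 / 4 -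
        3 * Real.exp 1 / 4 - 3 / Real.exp 1 + 2 - 2 * Real.sin 1) :
    0 < (μ - ν + 3)/2 ∧ 0 < (μ + ν + 3)/2 ∧ 16 ≤ ((μ - ν + 3)/2) * ((μ + ν + 3)/2) := by
  have hE1 : (2.7182818283:ℝ) < Real.exp 1 := Real.exp_one_gt_d9
  have hE2 : Real.exp 1 < 2.7182818286 := Real.exp_one_lt_d9
  have hEpos : (0:ℝ) < Real.exp 1 := by linarith
  have hs1 : Real.sin 1 ≤ 1 := Real.sin_le_one 1
  have hs0 : (0:ℝ) ≤ Real.sin 1 :=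
    Real.sin_nonneg_of_nonneg_of_le_pi (by norm_num) (by linarith [Real.pi_gt_three])
  have hX0 : (0:ℝ) ≤ |(μ + 1) * (μ - 7) - ν ^ 2| := abs_nonneg _
  have hXn : -((μ + 1) * (μ - 7) - ν ^ 2) ≤ |(μ + 1) * (μ - 7) - ν ^ 2| := neg_le_abs _
  have hEinv : 3 / Real.exp 1 ≤ 1.104 := by
    rw [div_le_iff₀ hEpos]; nlinarith
  have e2l : (7.389056:ℝ) ≤ (Real.exp 1)^2 := by
    nlinarith [sq_nonneg (Real.exp 1 - 2.7182818283)]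
  have e2u : (Real.exp 1)^2 ≤ 7.3890561 := by
    nlinarith [mul_lt_mul'' hE2 hE2 hEpos.le hEpos.le]
  have e3l : (20.085536:ℝ) ≤ (Real.exp 1)^3 := by
    nlinarith [mul_le_mul_of_nonneg_right e2l hEpos.le]
  have e3u : (Real.exp 1)^3 ≤ 20.085539 := by
    nlinarith [mul_le_mul_of_nonneg_right e2u hEpos.le]
  have e4l : (54.598148:ℝ) ≤ (Real.exp 1)^4 := by
    nlinarith [mul_le_mul_of_nonneg_right e3l hEpos.le]
  have e4u : (Real.exp 1)^4 ≤ 54.598159 := by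
    nlinarith [mul_le_mul_of_nonneg_right e3u hEpos.le]
  have hRHS : (Real.exp 1) ^ 4 - 3 * (Real.exp 1) ^ 3 + 13 * (Real.exp 1) ^ 2 / 4 -
      3 * Real.exp 1 / 4 - 3 / Real.exp 1 + 2 - 2 * Real.sin 1 ≥ 15.2 := by
    nlinarith
  have ht : (1.16:ℝ) ≤ (1/4) * Real.exp 1 * (Real.exp 1 - 1) := by nlinarith
  have hkey : (1/4) * Real.exp 1 * (Real.exp 1 - 1) * |(μ + 1) * (μ - 7) - ν ^ 2|
      ≤ μ * (1 + 2 * Real.sin 1) - 15.2 := by linarith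
  have hkey2 : (1.16:ℝ) * |(μ + 1) * (μ - 7) - ν ^ 2| ≤ μ * (1 + 2 * Real.sin 1) - 15.2 :=
    le_trans (mul_le_mul_of_nonneg_right ht hX0) hkey
  clear hkey ht h3 hRHS hEinv e2l e2u e3l e3u e4l e4u hE1 hE2 hEpos
  have hm15 : μ * (1 + 2 * Real.sin 1) ≥ 15.2 := by
    have := mul_nonneg (show (0:ℝ) ≤ 1.16 by norm_num) hX0
    linarith
  have hsp : (0:ℝ) < 1 + 2 * Real.sin 1 := by linarith
  have hmu0 : (0:ℝ) ≤ μ := by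
    by_contra h
    push_neg at h
    nlinarith [mul_pos (show (0:ℝ) < -μ by linarith) hsp]
  have hmu : (5:ℝ) ≤ μ := by
    by_contra h
    push_neg at h
    nlinarith [mul_pos (show (0:ℝ) < 5 - μ by linarith) hsp]
  have hmu3 : μ * (1 + 2 * Real.sin 1) ≤ 3 * μ := by
    nlinarith [mul_nonneg (show (0:ℝ) ≤ 1 - Real.sin 1 by linarith) hmu0]
  have hkey3 : (1.16:ℝ) * |(μ + 1) * (μ - 7) - ν ^ 2| ≤ 3 * μ - 15.2 := by linarith
  have h7 : (1.16:ℝ) * (-((μ + 1) * (μ - 7) - ν ^ 2)) ≤ 3 * μ - 15.2 :=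
    le_trans (mul_le_mul_of_nonneg_left hXn (by norm_num)) hkey3
  have hN : (64:ℝ) ≤ (μ + 3)^2 - ν^2 := by nlinarith
  refine ⟨?_, ?_, by nlinarith⟩
  · by_contra h
    push_neg at h
    nlinarith [mul_nonneg (show (0:ℝ) ≤ -((μ - ν + 3)/2) from by linarith)
      (show (0:ℝ) ≤ (μ + ν + 3)/2 from by linarith)]
  · by_contra h
    push_neg at h
    nlinarith [mul_nonneg (show (0:ℝ) ≤ (μ - ν + 3)/2 from by linarith)
      (show (0:ℝ) ≤ -((μ + ν + 3)/2) from by linarith)]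

/-- Sufficient condition for the normalized Lommel function `h_{μ,ν}` to be
exponential convex. -/
theorem lommel_exponential_convex (μ ν : ℝ)
    (hodd : ∀ k : ℕ, μ + ν ≠ -(2 * (k : ℝ) + 1) ∧ μ - ν ≠ -(2 * (k : ℝ) + 1))
    (h1 : μ > -5 + Real.sqrt (3 / 2 + ν ^ 2))
    (h2 : 4 * ((μ + 5) ^ 2 - ν ^ 2) / ((μ + 3) ^ 2 - ν ^ 2) < 2 * ((μ + 5) ^ 2 - ν ^ 2) - 3)
    (h3 : μ * (1 + 2 * Real.sin 1) -
        (1 / 4) * Real.exp 1 * (Real.exp 1 - 1) * |(μ + 1) * (μ - 7) - ν ^ 2| ≥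
      (Real.exp 1) ^ 4 - 3 * (Real.exp 1) ^ 3 + 13 * (Real.exp 1) ^ 2 / 4 -
        3 * Real.exp 1 / 4 - 3 / Real.exp 1 + 2 - 2 * Real.sin 1) :
    memKe (lommelH μ ν) := by
  obtain ⟨ha, hb, hab⟩ := numeric_facts μ ν h3
  have he : lommelH μ ν = lh ((μ - ν + 3)/2) ((μ + ν + 3)/2) := rfl
  rw [he]
  exact main_memKe ha hb hab
end

section
/- Let μ, ν ∈ ℝ be such that μ+ν and μ−ν are not negative odd integers, (μ+1)((μ+1)(μ+3) − ν²) ≥ 1/8, and μ(2e−1) − (1/4)e(e−1)|(μ−1)² − ν²| ≥ e³ − e² + 13e/4 − 4. Then the Alexander transform f_{μ,ν}(z) = ∫₀^z h_{μ,ν}(t)/t dt = z + ∑_{n≥1} ((−1/4)^n / ((n+1) ((μ−ν+3)/2)_n ((μ+ν+3)/2)_n)) z^{n+1} belongs to the class K_e of exponential convex functions. -/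
open Complex Metric Set
open scoped ENNReal NNReal

noncomputable def pochR (x : ℝ) (n : ℕ) : ℝ := ∏ k ∈ Finset.range n, (x + k)

lemma poch_ofReal_s8 (x : ℝ) (n : ℕ) : poch (x:ℂ) n = ((pochR x n : ℝ) : ℂ) := by
  unfold poch pochR; push_cast; rfl

lemma pochR_pos {x : ℝ} (hx : 0 < x) (n : ℕ) : 0 < pochR x n :=
  Finset.prod_pos fun k _ => by positivity

lemma pochR_key {x y : ℝ} (hx : 0 < x) (hy : 0 < y) (hxy : 3/2 ≤ x*y) (hs : 3 ≤ x+y) :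
    ∀ n : ℕ, 3/2 * ((Nat.factorial (n+1) : ℝ))^2 ≤ pochR x (n+1) * pochR y (n+1) := by
  intro n
  induction n with
  | zero =>
    simp only [pochR, Finset.prod_range_one, Nat.factorial_one]
    norm_num
    linarith
  | succ m ih =>
    have hpx : pochR x (m+2) = pochR x (m+1) * (x + (m+1)) := by
      unfold pochR; rw [Finset.prod_range_succ]; push_cast; ring
    have hpy : pochR y (m+2) = pochR y (m+1) * (y + (m+1)) := by
      unfold pochR; rw [Finset.prod_range_succ]; push_cast; ring
    have hm : (0:ℝ) ≤ (m:ℝ) := Nat.cast_nonneg m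
    have hfac : ((m:ℝ)+2)^2 ≤ (x+(m+1))*(y+(m+1)) := by nlinarith
    have hPpos : 0 < pochR x (m+1) * pochR y (m+1) :=
      mul_pos (pochR_pos hx _) (pochR_pos hy _)
    have hcast : (3/2 : ℝ) * ((Nat.factorial (m+2) : ℝ))^2
        = (3/2 * ((Nat.factorial (m+1) : ℝ))^2) * ((m:ℝ)+2)^2 := by
      rw [Nat.factorial_succ]
      push_cast
      ring
    rw [hpx, hpy, hcast]
    calc (3/2 * ((Nat.factorial (m+1) : ℝ))^2) * ((m:ℝ)+2)^2
        ≤ (pochR x (m+1) * pochR y (m+1)) * ((x+(m+1))*(y+(m+1))) := by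
          apply mul_le_mul ih hfac (by positivity) (le_of_lt hPpos)
      _ = pochR x (m+1) * (x+(m+1)) * (pochR y (m+1) * (y+(m+1))) := by ring

open FormalMultilinearSeries in
lemma ofScalars_derivSeries_apply_one (c : ℕ → ℂ) (n : ℕ) (z : ℂ) :
    ((ofScalars ℂ c).derivSeries n (fun _ ↦ z)) 1 = ((n : ℂ) + 1) * c (n + 1) * z ^ n := by
  rcases eq_or_ne z 0 with rfl | hz
  · cases n with
    | zero =>
      have h0 : (fun _ : Fin 0 ↦ (0:ℂ)) = (fun _ : Fin 0 ↦ (1:ℂ)) := funext fun i => i.elim0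
      rw [h0]
      have h := derivSeries_apply_diag (ofScalars ℂ c) 0 (1:ℂ)
      rw [ofScalars_apply_eq] at h
      simpa using h
    | succ m =>
      have h : (ofScalars ℂ c).derivSeries (m+1) (fun _ : Fin (m+1) ↦ (0:ℂ)) = 0 :=
        ContinuousMultilinearMap.map_coord_zero _ (0 : Fin (m+1)) rfl
      simp [h]
  · apply mul_left_cancel₀ hz
    have key := derivSeries_apply_diag (ofScalars ℂ c) n z
    have hL : ((ofScalars ℂ c).derivSeries n (fun _ ↦ z)) z
        = z * ((ofScalars ℂ c).derivSeries n (fun _ ↦ z)) 1 := by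
      conv_lhs => rw [show z = z • (1:ℂ) by simp]
      rw [ContinuousLinearMap.map_smul]; simp
    rw [← hL, key, ofScalars_apply_eq, nsmul_eq_mul, smul_eq_mul]
    push_cast
    ring

lemma mem_eball_two {z : ℂ} (hz : ‖z‖ < 2) : z ∈ Metric.eball (0:ℂ) 2 := by
  rw [EMetric.mem_ball, edist_zero_right, enorm_eq_nnnorm, show ((2:ℝ≥0∞)) = ((2:ℝ≥0):ℝ≥0∞) from rfl,
    ENNReal.coe_lt_coe, ← NNReal.coe_lt_coe]
  simpa using hz

lemma norm_lt_two_of_mem {z : ℂ} (hz : z ∈ Metric.eball (0:ℂ) 2) : ‖z‖ < 2 := by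
  rw [EMetric.mem_ball, edist_zero_right, enorm_eq_nnnorm, show ((2:ℝ≥0∞)) = ((2:ℝ≥0):ℝ≥0∞) from rfl,
    ENNReal.coe_lt_coe, ← NNReal.coe_lt_coe] at hz
  simpa using hz

lemma radius_ge_two (c : ℕ → ℂ) (C : ℝ) (h : ∀ n, ‖c n‖ * 2 ^ n ≤ C) :
    (2:ℝ≥0∞) ≤ (FormalMultilinearSeries.ofScalars ℂ c).radius := by
  have h2 := FormalMultilinearSeries.le_radius_of_bound
    (p := FormalMultilinearSeries.ofScalars ℂ c) C (r := 2) ?_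
  · simpa using h2
  · intro n
    rw [FormalMultilinearSeries.ofScalars_norm]
    simpa using h n

lemma hasFPS (c : ℕ → ℂ) (f : ℂ → ℂ) (hr : (2:ℝ≥0∞) ≤ (FormalMultilinearSeries.ofScalars ℂ c).radius)
    (h : ∀ z : ℂ, ‖z‖ < 2 → HasSum (fun n ↦ c n * z ^ n) (f z)) :
    HasFPowerSeriesOnBall f (FormalMultilinearSeries.ofScalars ℂ c) 0 2 := by
  refine ⟨hr, by norm_num, fun {y} hy => ?_⟩
  rw [zero_add]
  have hthis := h y (norm_lt_two_of_mem hy)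
  have hfun : (fun n => (FormalMultilinearSeries.ofScalars ℂ c) n fun _ => y)
      = fun n => c n * y ^ n := funext fun n => by
    rw [FormalMultilinearSeries.ofScalars_apply_eq, smul_eq_mul]
  rw [hfun]
  exact hthis

lemma hasSum_deriv_of_ball (c : ℕ → ℂ) (f : ℂ → ℂ)
    (hf : HasFPowerSeriesOnBall f (FormalMultilinearSeries.ofScalars ℂ c) 0 2)
    {z : ℂ} (hz : ‖z‖ < 2) :
    HasSum (fun n : ℕ ↦ (((n:ℂ)+1) * c (n+1)) * z ^ n) (deriv f z) := by
  have h1 := (hf.fderiv).hasSum (mem_eball_two hz)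
  have h2 := h1.mapL (ContinuousLinearMap.apply ℂ ℂ (1:ℂ))
  rw [zero_add] at h2
  simp only [ContinuousLinearMap.apply_apply] at h2
  rw [fderiv_apply_one_eq_deriv] at h2
  simp only [ofScalars_derivSeries_apply_one] at h2
  exact h2

lemma abs_arcsin_le_pi_div_five {t : ℝ} (ht : |t| ≤ 2/5) : |Real.arcsin t| ≤ Real.pi/5 := by
  have key : ∀ s : ℝ, 0 ≤ s → s ≤ 2/5 → Real.arcsin s ≤ Real.pi/5 := by
    intro s h0 h1
    have hs : (2/5 : ℝ) ≤ Real.sin (Real.pi/2 * (2/5)) :=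
      Real.le_sin_mul (by norm_num) (by norm_num)
    have h2 : Real.arcsin s ≤ Real.arcsin (Real.sin (Real.pi/2 * (2/5))) :=
      Real.monotone_arcsin (le_trans h1 hs)
    rwa [Real.arcsin_sin (by nlinarith [Real.pi_pos]) (by nlinarith [Real.pi_pos]),
      show Real.pi/2*(2/5) = Real.pi/5 by ring] at h2
  rcases le_or_gt 0 t with h | h
  · rw [_root_.abs_of_nonneg (Real.arcsin_nonneg.mpr h)]
    exact key t h ((le_abs_self t).trans ht)
  · have he : Real.arcsin t = -Real.arcsin (-t) := by rw [Real.arcsin_neg]; ring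
    rw [he, abs_neg, _root_.abs_of_nonneg (Real.arcsin_nonneg.mpr (by linarith))]
    rw [abs_of_neg h] at ht
    exact key (-t) (by linarith) ht

noncomputable def aL (x y : ℝ) (n : ℕ) : ℂ :=
  (-1/4 : ℂ) ^ (n + 1) / (((n : ℂ) + 2) * poch (x : ℂ) (n + 1) * poch (y : ℂ) (n + 1))

noncomputable def cL (x y : ℝ) : ℕ → ℂ
  | 0 => 0
  | 1 => 1
  | (n+2) => aL x y n

noncomputable def cL' (x y : ℝ) (n : ℕ) : ℂ := ((n:ℂ)+1) * cL x y (n+1)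
noncomputable def cL'' (x y : ℝ) (n : ℕ) : ℂ := ((n:ℂ)+1) * cL' x y (n+1)

lemma cL'_zero (x y : ℝ) : cL' x y 0 = 1 := by simp [cL', cL]

lemma cL'_succ (x y : ℝ) (n : ℕ) : cL' x y (n+1) = ((n:ℂ)+2) * aL x y n := by
  show ((((n+1 : ℕ)):ℂ)+1) * cL x y (n+2) = _
  push_cast
  show ((n:ℂ)+1+1) * aL x y n = _
  ring

lemma cL''_eq (x y : ℝ) (n : ℕ) : cL'' x y n = (((n:ℂ)+1)*((n:ℂ)+2)) * aL x y n := by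
  rw [cL'', cL'_succ]; ring

lemma norm_aL (x y : ℝ) (hx : 0 < x) (hy : 0 < y) (n : ℕ) :
    ‖aL x y n‖ = (1/4:ℝ)^(n+1) / (((n:ℝ)+2) * (pochR x (n+1) * pochR y (n+1))) := by
  have hP := pochR_pos hx (n+1)
  have hQ := pochR_pos hy (n+1)
  have hden : ((n:ℂ)+2) * poch (x:ℂ) (n+1) * poch (y:ℂ) (n+1)
      = (((((n:ℝ)+2) * (pochR x (n+1) * pochR y (n+1))) : ℝ) : ℂ) := by
    rw [poch_ofReal_s8, poch_ofReal_s8]; push_cast; ring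
  unfold aL
  rw [hden, norm_div, norm_pow, Complex.norm_real, Real.norm_eq_abs,
    _root_.abs_of_pos (by positivity)]
  have h14 : ‖(-1/4:ℂ)‖ = 1/4 := by
    rw [show (-1/4 : ℂ) = ((-1/4 : ℝ) : ℂ) by norm_cast, Complex.norm_real, Real.norm_eq_abs]
    rw [show (-1/4:ℝ) = -(1/4) by norm_num, abs_neg, _root_.abs_of_pos (by norm_num)]
  rw [h14]

lemma aL_bound (x y : ℝ) (hx : 0 < x) (hy : 0 < y)
    (hkey : ∀ n : ℕ, 3/2 * ((Nat.factorial (n+1) : ℝ))^2 ≤ pochR x (n+1) * pochR y (n+1))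
    (n : ℕ) : ((n:ℝ)+1) * (((n:ℝ)+2) * ‖aL x y n‖) ≤ (1/6)*(1/4:ℝ)^n := by
  have hP := pochR_pos hx (n+1)
  have hQ := pochR_pos hy (n+1)
  have hPQ : (3/2 : ℝ) * ((n:ℝ)+1) ≤ pochR x (n+1) * pochR y (n+1) := by
    refine le_trans ?_ (hkey n)
    have h2 : ((n:ℝ)+1) ≤ (Nat.factorial (n+1) : ℝ) := by
      exact_mod_cast Nat.self_le_factorial (n+1)
    have h3 : (1:ℝ) ≤ (Nat.factorial (n+1) : ℝ) := by
      exact_mod_cast Nat.one_le_iff_ne_zero.mpr (Nat.factorial_ne_zero (n+1))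
    nlinarith
  rw [norm_aL x y hx hy n]
  have heq : ((n:ℝ)+1) * (((n:ℝ)+2) * ((1/4:ℝ)^(n+1) / (((n:ℝ)+2) * (pochR x (n+1) * pochR y (n+1)))))
      = ((n:ℝ)+1) * (1/4:ℝ)^(n+1) / (pochR x (n+1) * pochR y (n+1)) := by
    have hn2 : ((n:ℝ)+2) ≠ 0 := by positivity
    field_simp
  rw [heq, div_le_iff₀ (by positivity)]
  calc ((n:ℝ)+1) * (1/4:ℝ)^(n+1) = (1/6)*(1/4:ℝ)^n * ((3/2)*((n:ℝ)+1)) := by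
        rw [pow_succ]; ring
    _ ≤ (1/6)*(1/4:ℝ)^n * (pochR x (n+1) * pochR y (n+1)) :=
        mul_le_mul_of_nonneg_left hPQ (by positivity)

lemma aL_bound2 (x y : ℝ) (hx : 0 < x) (hy : 0 < y)
    (hkey : ∀ n : ℕ, 3/2 * ((Nat.factorial (n+1) : ℝ))^2 ≤ pochR x (n+1) * pochR y (n+1))
    (n : ℕ) : ((n:ℝ)+2) * ‖aL x y n‖ ≤ (1/6)*(1/4:ℝ)^n := by
  have h := aL_bound x y hx hy hkey n
  have h0 : (0:ℝ) ≤ (n:ℝ) := Nat.cast_nonneg n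
  nlinarith [norm_nonneg (aL x y n),
    mul_nonneg h0 (mul_nonneg (by positivity : (0:ℝ) ≤ (n:ℝ)+2) (norm_nonneg (aL x y n)))]

lemma aL_bound1 (x y : ℝ) (hx : 0 < x) (hy : 0 < y)
    (hkey : ∀ n : ℕ, 3/2 * ((Nat.factorial (n+1) : ℝ))^2 ≤ pochR x (n+1) * pochR y (n+1))
    (n : ℕ) : ‖aL x y n‖ ≤ (1/6)*(1/4:ℝ)^n := by
  have h := aL_bound2 x y hx hy hkey n
  have h0 : (0:ℝ) ≤ (n:ℝ) := Nat.cast_nonneg n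
  nlinarith [norm_nonneg (aL x y n),
    mul_nonneg h0 (norm_nonneg (aL x y n))]

lemma hgeom29 : HasSum (fun n : ℕ ↦ (1/6:ℝ)*(1/4)^n) (2/9) := by
  have h := hasSum_geometric_of_lt_one (by norm_num : (0:ℝ) ≤ 1/4) (by norm_num : (1/4:ℝ) < 1)
  have h2 := h.mul_left (1/6:ℝ)
  have h3 : (1/6:ℝ) * (1-1/4)⁻¹ = 2/9 := by norm_num
  rwa [h3] at h2

theorem mainKe (x y : ℝ) (hx : 0 < x) (hy : 0 < y) (hxy : 3/2 ≤ x*y) (hs : 3 ≤ x+y) :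
    memKe (fun z => z + ∑' n : ℕ, aL x y n * z ^ (n + 2)) := by
  set F := (fun z : ℂ => z + ∑' n : ℕ, aL x y n * z ^ (n + 2)) with hF
  have hkey := pochR_key hx hy hxy hs
  have hb1 := aL_bound1 x y hx hy hkey
  have hb2' := aL_bound2 x y hx hy hkey
  -- coefficient bounds
  have hb2 : ∀ n : ℕ, ‖cL' x y (n+1)‖ ≤ (1/6)*(1/4:ℝ)^n := by
    intro n
    rw [cL'_succ, norm_mul]
    have hn2 : ‖((n:ℂ)+2)‖ = (n:ℝ)+2 := by
      rw [show ((n:ℂ)+2) = (((n:ℝ)+2 : ℝ):ℂ) by push_cast; ring, Complex.norm_real,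
        Real.norm_eq_abs, _root_.abs_of_pos (by positivity)]
    rw [hn2]
    exact hb2' n
  have hb3 : ∀ n : ℕ, ‖cL'' x y n‖ ≤ (1/6)*(1/4:ℝ)^n := by
    intro n
    rw [cL''_eq, norm_mul, norm_mul]
    have hn1 : ‖((n:ℂ)+1)‖ = (n:ℝ)+1 := by
      rw [show ((n:ℂ)+1) = (((n:ℝ)+1 : ℝ):ℂ) by push_cast; ring, Complex.norm_real,
        Real.norm_eq_abs, _root_.abs_of_pos (by positivity)]
    have hn2 : ‖((n:ℂ)+2)‖ = (n:ℝ)+2 := by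
      rw [show ((n:ℂ)+2) = (((n:ℝ)+2 : ℝ):ℂ) by push_cast; ring, Complex.norm_real,
        Real.norm_eq_abs, _root_.abs_of_pos (by positivity)]
    rw [hn1, hn2, mul_assoc]
    exact aL_bound x y hx hy hkey n
  have hcb : ∀ n : ℕ, ‖cL x y n‖ ≤ 2*(1/2:ℝ)^n := by
    intro n
    match n with
    | 0 => simp [cL]
    | 1 => rw [show cL x y 1 = 1 from rfl]; norm_num
    | (m+2) =>
      rw [show cL x y (m+2) = aL x y m from rfl]
      calc ‖aL x y m‖ ≤ (1/6)*(1/4:ℝ)^m := hb1 m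
        _ ≤ 2*(1/2:ℝ)^(m+2) := by
          rw [pow_succ, pow_succ]
          have h4 : ((1/4:ℝ))^m ≤ (1/2)^m := by
            apply pow_le_pow_left₀ (by norm_num) (by norm_num)
          nlinarith [pow_nonneg (show (0:ℝ) ≤ 1/2 by norm_num) m,
            pow_nonneg (show (0:ℝ) ≤ 1/4 by norm_num) m]
  -- radius bounds
  have hrc : (2:ℝ≥0∞) ≤ (FormalMultilinearSeries.ofScalars ℂ (cL x y)).radius := by
    apply radius_ge_two _ 2
    intro n
    calc ‖cL x y n‖ * 2^n ≤ 2*(1/2:ℝ)^n * 2^n := by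
          exact mul_le_mul_of_nonneg_right (hcb n) (by positivity)
      _ = 2 := by
          rw [mul_assoc, ← mul_pow]; norm_num
  have hrc' : (2:ℝ≥0∞) ≤ (FormalMultilinearSeries.ofScalars ℂ (cL' x y)).radius := by
    apply radius_ge_two _ 2
    intro n
    match n with
    | 0 => rw [cL'_zero]; norm_num
    | (m+1) =>
      calc ‖cL' x y (m+1)‖ * 2^(m+1) ≤ (1/6)*(1/4:ℝ)^m * 2^(m+1) := by
            exact mul_le_mul_of_nonneg_right (hb2 m) (by positivity)
        _ ≤ 2 := by
          rw [pow_succ]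
          have : ((1/4:ℝ))^m * 2^m ≤ 1 := by
            rw [← mul_pow]; norm_num
            exact pow_le_one₀ (by norm_num) (by norm_num)
          nlinarith [pow_nonneg (show (0:ℝ) ≤ 1/4 by norm_num) m,
            pow_nonneg (show (0:ℝ) ≤ 2 by norm_num) m]
  -- summability
  have hsum_of : ∀ (d : ℕ → ℂ) (z : ℂ), ‖z‖ < 2 → (∀ n, ‖d n‖ ≤ 2*(1/2:ℝ)^n) →
      Summable (fun n ↦ d n * z^n) := by
    intro d z hz hd
    apply Summable.of_norm_bounded (g := fun n ↦ 2 * (‖z‖/2)^n)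
    · apply Summable.mul_left
      exact summable_geometric_of_lt_one (by positivity) (by linarith [div_lt_one (show (0:ℝ) < 2 by norm_num) |>.mpr hz])
    · intro n
      rw [norm_mul, norm_pow]
      calc ‖d n‖ * ‖z‖^n ≤ 2*(1/2:ℝ)^n * ‖z‖^n := by
            exact mul_le_mul_of_nonneg_right (hd n) (by positivity)
        _ = 2 * (‖z‖/2)^n := by
            rw [div_pow, div_pow, one_pow]
            ring
  -- power series for F
  have hfsum : ∀ z : ℂ, ‖z‖ < 2 → HasSum (fun n ↦ cL x y n * z^n) (F z) := by
    intro z hz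
    have hs0 : Summable (fun n ↦ cL x y n * z^n) := hsum_of _ z hz hcb
    have hs2 : Summable (fun n : ℕ ↦ cL x y (n+2) * z^(n+2)) :=
      (summable_nat_add_iff (f := fun m : ℕ ↦ cL x y m * z^m) 2).mpr hs0
    have h2 : HasSum (fun n : ℕ ↦ cL x y (n+2) * z^(n+2)) (∑' n : ℕ, aL x y n * z^(n+2)) := by
      have he : (fun n : ℕ ↦ cL x y (n+2) * z^(n+2)) = fun n : ℕ ↦ aL x y n * z^(n+2) := rfl
      rw [he] at hs2 ⊢
      exact hs2.hasSum
    have h4 := (hasSum_nat_add_iff (f := fun n ↦ cL x y n * z^n) 2).mp h2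
    have h5 : ∑ i ∈ Finset.range 2, cL x y i * z^i = z := by
      rw [Finset.sum_range_succ, Finset.sum_range_one]
      rw [show cL x y 0 = 0 from rfl, show cL x y 1 = 1 from rfl]
      simp
    rw [h5] at h4
    have h6 : F z = ∑' n : ℕ, aL x y n * z^(n+2) + z := by rw [hF]; ring
    rw [h6]
    exact h4
  have hfb : HasFPowerSeriesOnBall F (FormalMultilinearSeries.ofScalars ℂ (cL x y)) 0 2 :=
    hasFPS _ _ hrc hfsum
  have hd1 : ∀ z : ℂ, ‖z‖ < 2 → HasSum (fun n : ℕ ↦ cL' x y n * z^n) (deriv F z) :=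
    fun z hz => hasSum_deriv_of_ball _ _ hfb hz
  have hfb' : HasFPowerSeriesOnBall (deriv F) (FormalMultilinearSeries.ofScalars ℂ (cL' x y)) 0 2 :=
    hasFPS _ _ hrc' hd1
  have hd2 : ∀ z : ℂ, ‖z‖ < 2 → HasSum (fun n : ℕ ↦ cL'' x y n * z^n) (deriv (deriv F) z) :=
    fun z hz => hasSum_deriv_of_ball _ _ hfb' hz
  -- basic values
  have hF0 : F 0 = 0 := by
    rw [hF]
    have h0 : (fun n : ℕ => aL x y n * (0:ℂ)^(n+2)) = fun _ => (0:ℂ) := funext fun n => by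
      rw [zero_pow (by omega : n+2 ≠ 0), mul_zero]
    simp only [h0, tsum_zero, add_zero]
  have hd0 : deriv F 0 = 1 := by
    have h := (hd1 0 (by norm_num)).tsum_eq
    rw [← h, tsum_eq_single 0 ?_]
    · rw [cL'_zero]; simp
    · intro b hb
      rw [zero_pow hb, mul_zero]
  -- bounds on the unit ball
  have hA : ∀ z : ℂ, ‖z‖ < 1 → ‖deriv F z - 1‖ ≤ 2/9 := by
    intro z hz
    have h := hd1 z (by linarith)
    have hsum1 : ∑ i ∈ Finset.range 1, cL' x y i * z^i = 1 := by
      rw [Finset.sum_range_one, cL'_zero]; simp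
    have hshift : HasSum (fun n : ℕ ↦ cL' x y (n+1) * z^(n+1)) (deriv F z - 1) := by
      apply (hasSum_nat_add_iff (f := fun n ↦ cL' x y n * z^n) 1).mpr
      rw [hsum1]
      simpa using h
    rw [← hshift.tsum_eq]
    apply tsum_of_norm_bounded hgeom29
    intro n
    rw [norm_mul, norm_pow]
    calc ‖cL' x y (n+1)‖ * ‖z‖^(n+1)
        ≤ (1/6)*(1/4:ℝ)^n * 1 := by
          apply mul_le_mul (hb2 n) (pow_le_one₀ (norm_nonneg z) hz.le) (by positivity) (by positivity)
      _ = (1/6)*(1/4:ℝ)^n := mul_one _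
  have hB : ∀ z : ℂ, ‖z‖ < 1 → ‖deriv (deriv F) z‖ ≤ 2/9 := by
    intro z hz
    rw [← (hd2 z (by linarith)).tsum_eq]
    apply tsum_of_norm_bounded hgeom29
    intro n
    rw [norm_mul, norm_pow]
    calc ‖cL'' x y n‖ * ‖z‖^n
        ≤ (1/6)*(1/4:ℝ)^n * 1 := by
          apply mul_le_mul (hb3 n) (pow_le_one₀ (norm_nonneg z) hz.le) (by positivity) (by positivity)
      _ = (1/6)*(1/4:ℝ)^n := mul_one _
  have hdlow : ∀ z : ℂ, ‖z‖ < 1 → 7/9 ≤ ‖deriv F z‖ := by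
    intro z hz
    have h := hA z hz
    have h3 := norm_sub_norm_le (1:ℂ) (deriv F z)
    rw [norm_sub_rev] at h3
    simp only [norm_one] at h3
    linarith
  have hne : ∀ z ∈ Metric.ball (0:ℂ) 1, deriv F z ≠ 0 := by
    intro z hz h0
    have hz1 : ‖z‖ < 1 := by rwa [mem_ball, dist_zero_right] at hz
    have := hdlow z hz1
    rw [h0, norm_zero] at this
    linarith
  -- analyticity
  have hFan : AnalyticOnNhd ℂ F (Metric.ball 0 1) := fun z hz =>
    hfb.analyticAt_of_mem (mem_eball_two (by rw [mem_ball, dist_zero_right] at hz; linarith))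
  have hdan : AnalyticOnNhd ℂ (deriv F) (Metric.ball 0 1) := fun z hz =>
    hfb'.analyticAt_of_mem (mem_eball_two (by rw [mem_ball, dist_zero_right] at hz; linarith))
  have hddan : AnalyticOnNhd ℂ (deriv (deriv F)) (Metric.ball 0 1) := hdan.deriv
  refine ⟨hFan, hF0, hd0, hne, ?_, ?_, ?_⟩
  · intro z hz
    exact (analyticAt_const).add (((analyticAt_id).mul (hddan z hz)).div (hdan z hz) (hne z hz))
  · simp
  · intro z hz
    have hz1 : ‖z‖ < 1 := by rwa [mem_ball, dist_zero_right] at hz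
    set w : ℂ := 1 + z * deriv (deriv F) z / deriv F z with hw
    have hu : ‖w - 1‖ ≤ 2/7 := by
      rw [hw, add_sub_cancel_left, norm_div, norm_mul]
      have hBz := hB z hz1
      have hdz := hdlow z hz1
      calc ‖z‖ * ‖deriv (deriv F) z‖ / ‖deriv F z‖ ≤ 1 * (2/9) / (7/9) := by
            gcongr
            all_goals first | exact hz1.le | norm_num
        _ ≤ 2/7 := by norm_num
    have hwlb : 5/7 ≤ ‖w‖ := by
      have h3 := norm_sub_norm_le (1:ℂ) w
      rw [norm_sub_rev] at h3
      simp only [norm_one] at h3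
      linarith
    have hwub : ‖w‖ ≤ 9/7 := by
      have h3 : w = 1 + (w - 1) := by ring
      calc ‖w‖ = ‖(1:ℂ) + (w-1)‖ := by rw [← h3]
        _ ≤ ‖(1:ℂ)‖ + ‖w-1‖ := norm_add_le _ _
        _ ≤ 9/7 := by rw [norm_one]; linarith
    have hw0 : w ≠ 0 := by
      intro h0
      rw [h0, norm_zero] at hwlb
      linarith
    have habs : ‖w‖ = ‖w‖ := rfl
    have hre : 5/7 ≤ w.re := by
      have h5 : |(w - 1).re| ≤ ‖w - 1‖ := by
        rw [show ‖w-1‖ = ‖w-1‖ from rfl]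
        exact Complex.abs_re_le_norm (w-1)
      have h6 : (w - 1).re = w.re - 1 := by simp
      rw [h6] at h5
      have h7 := (abs_le.mp h5).1
      linarith
    have him : |w.im| ≤ 2/7 := by
      have h5 : |(w - 1).im| ≤ ‖w - 1‖ := by
        rw [show ‖w-1‖ = ‖w-1‖ from rfl]
        exact Complex.abs_im_le_norm (w-1)
      have h6 : (w - 1).im = w.im := by simp
      rw [h6] at h5
      linarith
    have habspos : 0 < ‖w‖ := by rw [habs]; linarith
    have hL1 : Real.log (‖w‖) ≤ 2/5 := by
      have h7 := Real.log_le_sub_one_of_pos habspos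
      have h8 : ‖w‖ ≤ 9/7 := by rw [habs]; exact hwub
      linarith
    have hL2 : -(2/5) ≤ Real.log (‖w‖) := by
      have h7 := Real.log_le_sub_one_of_pos (inv_pos.mpr habspos)
      rw [Real.log_inv] at h7
      have h8 : (‖w‖)⁻¹ ≤ 7/5 := by
        rw [habs, inv_le_comm₀ (by linarith) (by norm_num)]
        linarith
      linarith
    have harg : |Complex.arg w| ≤ Real.pi/5 := by
      have hargeq : Complex.arg w = Real.arcsin (w.im / ‖w‖) := by
        rw [Complex.arg, if_pos (by linarith : 0 ≤ w.re)]
      rw [hargeq]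
      apply abs_arcsin_le_pi_div_five
      rw [abs_div, _root_.abs_of_pos habspos]
      calc |w.im| / ‖w‖ ≤ (2/7)/(5/7) := by
            rw [habs]
            gcongr
            all_goals first | exact him | norm_num
        _ = 2/5 := by norm_num
    refine ⟨Complex.log w, ?_, Complex.exp_log hw0⟩
    rw [mem_ball, dist_zero_right]
    have hsq : ‖Complex.log w‖^2 = (Real.log (‖w‖))^2 + (Complex.arg w)^2 := by
      rw [Complex.sq_norm, Complex.normSq_apply, Complex.log_re, Complex.log_im]
      ring
    have hpi : Real.pi < 3.15 := Real.pi_lt_d2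
    have hpi0 : 0 < Real.pi := Real.pi_pos
    have hπ5 : (Complex.arg w)^2 ≤ (3.15/5)^2 := by
      have h8 : |Complex.arg w| ≤ 3.15/5 := by linarith
      nlinarith [abs_nonneg (Complex.arg w), _root_.sq_abs (Complex.arg w)]
    have hlsq : (Real.log (‖w‖))^2 ≤ (2/5)^2 := by nlinarith
    have hfin : ‖Complex.log w‖^2 < 1 := by
      rw [hsq]
      nlinarith
    exact (pow_lt_one_iff_of_nonneg (norm_nonneg _) (by norm_num)).mp hfin

/-- Sufficient condition for the Alexander transform
`f_{μ,ν}(z) = ∫₀^z h_{μ,ν}(t)/t dt = z + ∑_{n≥1} ((−1/4)^n / ((n+1)((μ−ν+3)/2)_n ((μ+ν+3)/2)_n)) z^{n+1}`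
of the normalized Lommel function to be exponential convex. -/
theorem lommel_alexander_exponential_convex (μ ν : ℝ)
    (hodd : ∀ k : ℕ, μ + ν ≠ -(2 * (k : ℝ) + 1) ∧ μ - ν ≠ -(2 * (k : ℝ) + 1))
    (h1 : (μ + 1) * ((μ + 1) * (μ + 3) - ν ^ 2) ≥ 1 / 8)
    (h2 : μ * (2 * Real.exp 1 - 1) -
        (1 / 4) * Real.exp 1 * (Real.exp 1 - 1) * |(μ - 1) ^ 2 - ν ^ 2| ≥
      (Real.exp 1) ^ 3 - (Real.exp 1) ^ 2 + 13 * Real.exp 1 / 4 - 4) :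
    memKe (fun z => z + ∑' n : ℕ, (-1/4 : ℂ) ^ (n + 1) /
      (((n : ℂ) + 2) * poch (((μ - ν + 3) / 2 : ℝ) : ℂ) (n + 1) *
        poch (((μ + ν + 3) / 2 : ℝ) : ℂ) (n + 1)) * z ^ (n + 2)) := by
  have hE1 : (2.71:ℝ) < Real.exp 1 := lt_trans (by norm_num) Real.exp_one_gt_d9
  have hE0 : (0:ℝ) < Real.exp 1 := Real.exp_pos 1
  have hab : (0:ℝ) ≤ |(μ - 1)^2 - ν^2| := abs_nonneg _
  have hterm : (0:ℝ) ≤ (1/4) * Real.exp 1 * (Real.exp 1 - 1) * |(μ - 1)^2 - ν^2| := by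
    apply mul_nonneg _ hab
    apply mul_nonneg (by positivity) (by linarith)
  have hrhs : (0:ℝ) < (Real.exp 1)^3 - (Real.exp 1)^2 + 13 * Real.exp 1 / 4 - 4 := by
    nlinarith [hE1, hE0, mul_pos hE0 hE0, sq_nonneg (Real.exp 1 - 2.71)]
  have hμ : 0 < μ := by
    by_contra hc
    push_neg at hc
    have h3 : (0:ℝ) ≤ (-μ) * (2 * Real.exp 1 - 1) :=
      mul_nonneg (neg_nonneg.2 hc) (by linarith)
    nlinarith [h2, hterm, hrhs]
  have hν : ν^2 < (μ+1)*(μ+3) := by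
    by_contra hc
    push_neg at hc
    have h3 : (μ+1) * ((μ+1)*(μ+3) - ν^2) ≤ 0 :=
      mul_nonpos_of_nonneg_of_nonpos (by linarith) (by linarith)
    linarith [h1]
  have hx : 0 < (μ - ν + 3)/2 := by
    by_contra hc
    push_neg at hc
    have h3 : μ + 3 ≤ ν := by linarith
    nlinarith [hν, hμ, h3]
  have hy : 0 < (μ + ν + 3)/2 := by
    by_contra hc
    push_neg at hc
    have h3 : ν ≤ -(μ + 3) := by linarith
    nlinarith [hν, hμ, h3]
  have hxy : 3/2 ≤ ((μ - ν + 3)/2) * ((μ + ν + 3)/2) := by nlinarith [hν, hμ]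
  have hsum : 3 ≤ (μ - ν + 3)/2 + (μ + ν + 3)/2 := by linarith
  exact mainKe _ _ hx hy hxy hsum
end

section
/- Let μ, ν ∈ ℝ be such that μ+ν and μ−ν are not negative odd integers, (μ+1)((μ+1)(μ+3) − ν²) ≥ 1/8, and μ(2e−1) − (1/4)e(e−1)|(μ−1)² − ν²| ≥ e³ − e² + 13e/4 − 4. Then the normalized Lommel function h_{μ,ν} belongs to the class S*_e of exponential starlike functions. -/
open Complex Metric Set

namespace LommelAux

/-! ### A majorant sequence -/

/-- majorant for the Lommel coefficients -/
noncomputable def wb (n : ℕ) : ℝ := (1/4)^n / ((n.factorial : ℝ))^2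

lemma wb_nonneg (n : ℕ) : 0 ≤ wb n := by unfold wb; positivity

lemma one_le_fact (n : ℕ) : (1:ℝ) ≤ (n.factorial : ℝ) := by
  exact_mod_cast Nat.one_le_iff_ne_zero.2 n.factorial_ne_zero

lemma wb_le (n : ℕ) : wb n ≤ (1/4)^n := by
  unfold wb
  have h := one_le_fact n
  have : (1:ℝ) ≤ ((n.factorial : ℝ))^2 := by nlinarith
  calc (1/4:ℝ)^n / ((n.factorial : ℝ))^2 ≤ (1/4)^n / 1 := by gcongr
    _ = (1/4)^n := by ring

lemma two_le_fact (n : ℕ) : (2:ℝ) ≤ ((n+2).factorial : ℝ) := by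
  have : 2 ≤ (n+2).factorial := le_trans (by omega) (n+2).self_le_factorial
  exact_mod_cast this

lemma wb_succ_succ (n : ℕ) : wb (n+2) ≤ (1/64) * (1/4)^n := by
  unfold wb
  have h2 := two_le_fact n
  have h4 : (4:ℝ) ≤ ((n+2).factorial : ℝ)^2 := by nlinarith
  calc (1/4:ℝ)^(n+2) / (((n+2).factorial : ℝ))^2 ≤ (1/4)^(n+2) / 4 := by
        gcongr
    _ = (1/64) * (1/4)^n := by rw [pow_add]; ring

lemma nwb_succ_succ (n : ℕ) : ((n:ℝ)+2) * wb (n+2) ≤ (1/32) * (1/4)^n := by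
  unfold wb
  have h2 := two_le_fact n
  have hself : ((n:ℝ)+2) ≤ ((n+2).factorial : ℝ) := by
    exact_mod_cast (n+2).self_le_factorial
  have hn2 : (0:ℝ) < (n:ℝ)+2 := by positivity
  have h4 : 2*((n:ℝ)+2) ≤ ((n+2).factorial : ℝ)^2 := by nlinarith
  have hp : (0:ℝ) ≤ (1/4:ℝ)^(n+2) := by positivity
  calc ((n:ℝ)+2) * ((1/4:ℝ)^(n+2) / (((n+2).factorial : ℝ))^2)
      ≤ ((n:ℝ)+2) * ((1/4)^(n+2) / (2*((n:ℝ)+2))) := by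
        gcongr
    _ = (1/4)^(n+2) / 2 := by field_simp
    _ = (1/32) * (1/4)^n := by rw [pow_add]; ring

lemma summable_wb : Summable wb :=
  Summable.of_nonneg_of_le wb_nonneg wb_le (summable_geometric_of_lt_one (by norm_num) (by norm_num))

lemma summable_wb_shift (k : ℕ) : Summable (fun n => wb (n + k)) :=
  (summable_nat_add_iff k).2 summable_wb

lemma sum_wb_tail : ∑' n : ℕ, wb (n+1) ≤ 13/48 := by
  rw [Summable.tsum_eq_zero_add (summable_wb_shift 1)]
  have h1 : ∑' n : ℕ, wb (n+1+1) ≤ ∑' n : ℕ, (1/64) * (1/4:ℝ)^n := by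
    refine Summable.tsum_le_tsum (fun n => wb_succ_succ n) (summable_wb_shift 2) ?_
    exact (summable_geometric_of_lt_one (by norm_num) (by norm_num)).mul_left _
  rw [tsum_mul_left, tsum_geometric_of_lt_one (by norm_num) (by norm_num)] at h1
  have h0 : wb (0+1) = 1/4 := by unfold wb; norm_num
  rw [h0]
  norm_num at h1 ⊢
  linarith

lemma nwb_nonneg (n : ℕ) : 0 ≤ (n:ℝ) * wb n := mul_nonneg (by positivity) (wb_nonneg n)

lemma summable_nwb : Summable (fun n : ℕ => (n:ℝ) * wb n) := by
  refine Summable.of_nonneg_of_le nwb_nonneg (fun n => ?_)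
    (by simpa [pow_one] using summable_pow_mul_geometric_of_norm_lt_one (R := ℝ) 1 (r := 1/4) (by norm_num))
  have : (n:ℝ) * wb n ≤ (n:ℝ) * (1/4)^n := by
    have := wb_le n
    gcongr
  simpa [pow_one] using this

lemma sum_nwb : ∑' n : ℕ, (n:ℝ) * wb n ≤ 7/24 := by
  have hs1' : Summable (fun n : ℕ => (((n+1:ℕ)):ℝ) * wb (n+1)) :=
    (summable_nat_add_iff (f := fun n : ℕ => (n:ℝ) * wb n) 1).2 summable_nwb
  rw [Summable.tsum_eq_zero_add summable_nwb, Summable.tsum_eq_zero_add hs1']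
  have h2 : ∑' n : ℕ, (((n+1+1:ℕ)):ℝ) * wb (n+1+1) ≤ ∑' n : ℕ, (1/32) * (1/4:ℝ)^n := by
    refine Summable.tsum_le_tsum (fun n => ?_) ((summable_nat_add_iff (f := fun n : ℕ => (n:ℝ) * wb n) 2).2 summable_nwb) ?_
    · have := nwb_succ_succ n
      push_cast
      rw [show (n:ℝ)+1+1 = (n:ℝ)+2 by ring]
      exact this
    · exact (summable_geometric_of_lt_one (by norm_num) (by norm_num)).mul_left _
  rw [tsum_mul_left, tsum_geometric_of_lt_one (by norm_num) (by norm_num)] at h2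
  have h0 : wb (0+1) = 1/4 := by unfold wb; norm_num
  norm_num [h0] at h2 ⊢
  linarith

/-! ### Pochhammer bounds -/

lemma fact_le_prod {a : ℝ} (ha : 1 ≤ a) (m : ℕ) :
    (m.factorial : ℝ) ≤ ∏ k ∈ Finset.range m, (a + k) := by
  induction m with
  | zero => simp
  | succ n ih =>
    rw [Finset.prod_range_succ, Nat.factorial_succ]
    push_cast
    have h1 : (1:ℝ) + n ≤ a + n := by linarith
    have h2 : (0:ℝ) ≤ (n.factorial : ℝ) := by positivity
    have h3 : (0:ℝ) ≤ ∏ k ∈ Finset.range n, (a + k) := by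
      refine Finset.prod_nonneg fun k _ => ?_
      have : (0:ℝ) ≤ (k:ℝ) := by positivity
      linarith
    calc ((n:ℝ)+1) * (n.factorial : ℝ) = (n.factorial : ℝ) * ((1:ℝ) + n) := by ring
      _ ≤ (∏ k ∈ Finset.range n, (a + k)) * (a + n) :=
          mul_le_mul ih h1 (by linarith) h3

lemma poch_real (a : ℝ) (m : ℕ) :
    poch (a : ℂ) m = ((∏ k ∈ Finset.range m, (a + k) : ℝ) : ℂ) := by
  rw [poch]
  push_cast
  rfl

lemma fact_le_norm_poch {a : ℝ} (ha : 1 ≤ a) (m : ℕ) :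
    (m.factorial : ℝ) ≤ ‖poch (a : ℂ) m‖ := by
  rw [poch_real, Complex.norm_real]
  exact le_trans (fact_le_prod ha m) (le_abs_self _)

/-! ### From the hypothesis to the parameter bounds -/

lemma param_ge_one {μ ν : ℝ}
    (h2 : μ * (2 * Real.exp 1 - 1) -
        (1 / 4) * Real.exp 1 * (Real.exp 1 - 1) * |(μ - 1) ^ 2 - ν ^ 2| ≥
      (Real.exp 1) ^ 3 - (Real.exp 1) ^ 2 + 13 * Real.exp 1 / 4 - 4) :
    1 ≤ (μ - ν + 3) / 2 ∧ 1 ≤ (μ + ν + 3) / 2 := by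
  set E := Real.exp 1 with hE
  have hEgt : (2.7182818283 : ℝ) < E := Real.exp_one_gt_d9
  have hElt : E < 2.7182818286 := Real.exp_one_lt_d9
  have habs0 : 0 ≤ |(μ - 1) ^ 2 - ν ^ 2| := abs_nonneg _
  have habs1 : ν ^ 2 - (μ - 1) ^ 2 ≤ |(μ - 1) ^ 2 - ν ^ 2| := by
    rw [abs_sub_comm]; exact le_abs_self _
  have hK : (0:ℝ) < (1/4) * E * (E - 1) := by nlinarith
  have hKabs : 0 ≤ (1/4) * E * (E - 1) * |(μ - 1) ^ 2 - ν ^ 2| := mul_nonneg hK.le habs0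
  have hR : (0:ℝ) < E ^ 3 - E ^ 2 + 13 * E / 4 - 4 := by nlinarith
  have hμ : 0 < μ := by nlinarith
  have h3 : 0 < E ^ 2 - 3 * E + 1 := by nlinarith
  have hmain : (1/4) * E * (E - 1) * (ν ^ 2 - (μ - 1) ^ 2) ≤
      (1/4) * E * (E - 1) * |(μ - 1) ^ 2 - ν ^ 2| :=
    mul_le_mul_of_nonneg_left habs1 hK.le
  have hd : 0 ≤ μ * (E ^ 2 - 3 * E + 1) := mul_nonneg hμ.le h3.le
  have hfin : (1/4) * E * (E - 1) * ν ^ 2 ≤ (1/4) * E * (E - 1) * (μ + 1) ^ 2 := by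
    linarith [hmain, hd, hR, h2]
  have hν2 : ν ^ 2 ≤ (μ + 1) ^ 2 := le_of_mul_le_mul_left hfin hK
  have hge : -(μ+1) ≤ ν := by nlinarith
  have hle : ν ≤ μ + 1 := by nlinarith
  constructor <;> linarith

/-! ### The series -/

noncomputable def bc (a₁ a₂ : ℝ) (n : ℕ) : ℂ :=
  (-1/4 : ℂ) ^ (n + 1) / (poch ((a₁ : ℝ) : ℂ) (n + 1) * poch ((a₂ : ℝ) : ℂ) (n + 1))

noncomputable def dc (a₁ a₂ : ℝ) : ℕ → ℂ := fun n => Nat.rec 1 (fun m _ => bc a₁ a₂ m) n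

@[simp] lemma dc_zero (a₁ a₂ : ℝ) : dc a₁ a₂ 0 = 1 := rfl

@[simp] lemma dc_succ (a₁ a₂ : ℝ) (n : ℕ) : dc a₁ a₂ (n+1) = bc a₁ a₂ n := rfl

noncomputable def Gc (a₁ a₂ : ℝ) (z : ℂ) : ℂ := ∑' n : ℕ, dc a₁ a₂ n * z ^ n

noncomputable def Dc (a₁ a₂ : ℝ) (z : ℂ) : ℂ := ∑' n : ℕ, dc a₁ a₂ n * ((n : ℂ) * z ^ (n - 1))

section Params

variable {a₁ a₂ : ℝ} (h₁ : 1 ≤ a₁) (h₂ : 1 ≤ a₂)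
include h₁ h₂

lemma norm_bc_le (n : ℕ) : ‖bc a₁ a₂ n‖ ≤ wb (n+1) := by
  have hPA := fact_le_norm_poch h₁ (n+1)
  have hPB := fact_le_norm_poch h₂ (n+1)
  have hfpos : (0:ℝ) < ((n+1).factorial : ℝ) := by positivity
  have hden : ((n+1).factorial : ℝ)^2 ≤ ‖poch ((a₁ : ℝ) : ℂ) (n+1)‖ * ‖poch ((a₂ : ℝ) : ℂ) (n+1)‖ := by
    rw [sq]
    exact mul_le_mul hPA hPB hfpos.le (norm_nonneg _)
  rw [bc, norm_div, norm_mul, norm_pow]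
  have hnum : ‖(-1/4 : ℂ)‖ = 1/4 := by
    rw [norm_div, norm_neg, norm_one]
    simp
  rw [hnum]
  unfold wb
  gcongr

lemma norm_dc_le (n : ℕ) : ‖dc a₁ a₂ n‖ ≤ wb n := by
  cases n with
  | zero => simp [wb]
  | succ m => rw [dc_succ]; exact norm_bc_le h₁ h₂ m

lemma dc_term_le {z : ℂ} (hz : ‖z‖ ≤ 1) (n k : ℕ) : ‖dc a₁ a₂ n * z ^ k‖ ≤ wb n := by
  rw [norm_mul, norm_pow]
  calc ‖dc a₁ a₂ n‖ * ‖z‖ ^ k ≤ wb n * 1 ^ k := by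
        gcongr
        · exact wb_nonneg n
        · exact norm_dc_le h₁ h₂ n
    _ = wb n := by simp

lemma summable_dc_pow {z : ℂ} (hz : ‖z‖ ≤ 1) : Summable (fun n => dc a₁ a₂ n * z ^ n) :=
  Summable.of_norm_bounded summable_wb (fun n => dc_term_le h₁ h₂ hz n n)

lemma summable_dc_pow' {z : ℂ} (hz : ‖z‖ ≤ 1) : Summable (fun n => dc a₁ a₂ n * z ^ (n+1)) :=
  Summable.of_norm_bounded summable_wb (fun n => dc_term_le h₁ h₂ hz n (n+1))

omit h₁ h₂ in
lemma Gc_zero : Gc a₁ a₂ 0 = 1 := by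
  rw [Gc, tsum_eq_single 0 (fun n hn => by simp [zero_pow hn])]
  simp

set_option maxHeartbeats 1000000 in
lemma Gc_sub_one {z : ℂ} (hz : ‖z‖ ≤ 1) : ‖Gc a₁ a₂ z - 1‖ ≤ 13/48 := by
  have hshift : Summable (fun n => dc a₁ a₂ (n+1) * z ^ (n+1)) :=
    (summable_nat_add_iff 1).2 (summable_dc_pow h₁ h₂ hz)
  have : Gc a₁ a₂ z = 1 + ∑' n : ℕ, dc a₁ a₂ (n+1) * z ^ (n+1) := by
    rw [Gc, Summable.tsum_eq_zero_add (summable_dc_pow h₁ h₂ hz)]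
    simp
  rw [this, add_sub_cancel_left]
  have hsn : Summable (fun n => ‖dc a₁ a₂ (n+1) * z ^ (n+1)‖) :=
    Summable.of_nonneg_of_le (fun n => norm_nonneg _)
      (fun n => dc_term_le h₁ h₂ hz (n+1) (n+1)) (summable_wb_shift 1)
  refine le_trans (norm_tsum_le_tsum_norm hsn) (le_trans ?_ sum_wb_tail)
  exact Summable.tsum_le_tsum (fun n => dc_term_le h₁ h₂ hz (n+1) (n+1)) hsn (summable_wb_shift 1)

lemma Gc_norm_ge {z : ℂ} (hz : ‖z‖ ≤ 1) : 35/48 ≤ ‖Gc a₁ a₂ z‖ := by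
  have h := Gc_sub_one h₁ h₂ hz
  have h2 := abs_norm_sub_norm_le (Gc a₁ a₂ z) (1 : ℂ)
  rw [norm_one] at h2
  have := abs_le.1 h2
  linarith [this.1]

lemma Gc_ne_zero {z : ℂ} (hz : ‖z‖ ≤ 1) : Gc a₁ a₂ z ≠ 0 := by
  intro h0
  have := Gc_norm_ge h₁ h₂ hz
  rw [h0, norm_zero] at this
  linarith

lemma dc_deriv_term_le {z : ℂ} (hz : ‖z‖ ≤ 1) (n : ℕ) :
    ‖dc a₁ a₂ n * ((n : ℂ) * z ^ (n-1))‖ ≤ (n:ℝ) * wb n := by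
  rw [norm_mul, norm_mul, norm_pow, Complex.norm_natCast]
  calc ‖dc a₁ a₂ n‖ * ((n:ℝ) * ‖z‖ ^ (n-1)) ≤ wb n * ((n:ℝ) * 1) := by
        gcongr
        all_goals first
          | exact norm_dc_le h₁ h₂ n
          | exact pow_le_one₀ (norm_nonneg z) hz
          | exact wb_nonneg n
          | positivity
    _ = (n:ℝ) * wb n := by ring

lemma hasDerivAt_Gc {z : ℂ} (hz : z ∈ ball (0:ℂ) 1) :
    HasDerivAt (Gc a₁ a₂) (Dc a₁ a₂ z) z := by
  have := hasDerivAt_tsum_of_isPreconnected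
    (u := fun n : ℕ => (n:ℝ) * (1/4)^n)
    (g := fun n z => dc a₁ a₂ n * z ^ n)
    (g' := fun n z => dc a₁ a₂ n * ((n : ℂ) * z ^ (n-1)))
    (by simpa [pow_one] using
      summable_pow_mul_geometric_of_norm_lt_one (R := ℝ) 1 (r := 1/4) (by norm_num))
    isOpen_ball ((convex_ball (0:ℂ) 1).isPreconnected)
    (fun n y _ => (hasDerivAt_pow n y).const_mul (dc a₁ a₂ n))
    (fun n y hy => ?_) (mem_ball_self one_pos)
    (summable_dc_pow h₁ h₂ (by norm_num)) hz
  · exact this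
  · have hy1 : ‖y‖ ≤ 1 := (mem_ball_zero_iff.1 hy).le
    calc ‖dc a₁ a₂ n * ((n : ℂ) * y ^ (n-1))‖ ≤ (n:ℝ) * wb n := dc_deriv_term_le h₁ h₂ hy1 n
      _ ≤ (n:ℝ) * (1/4)^n := by
          gcongr
          exact wb_le n

lemma Dc_norm_le {z : ℂ} (hz : ‖z‖ ≤ 1) : ‖Dc a₁ a₂ z‖ ≤ 7/24 := by
  have hsn : Summable (fun n => ‖dc a₁ a₂ n * ((n : ℂ) * z ^ (n-1))‖) :=
    Summable.of_nonneg_of_le (fun n => norm_nonneg _) (dc_deriv_term_le h₁ h₂ hz) summable_nwb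
  exact le_trans (norm_tsum_le_tsum_norm hsn)
    (le_trans (Summable.tsum_le_tsum (dc_deriv_term_le h₁ h₂ hz) hsn summable_nwb) sum_nwb)

end Params

end LommelAux

/-! ### Main theorem -/

/-- Sufficient condition for the normalized Lommel function `h_{μ,ν}` to be
exponential starlike. -/
theorem lommel_exponential_starlike (μ ν : ℝ)
    (hodd : ∀ k : ℕ, μ + ν ≠ -(2 * (k : ℝ) + 1) ∧ μ - ν ≠ -(2 * (k : ℝ) + 1))
    (h1 : (μ + 1) * ((μ + 1) * (μ + 3) - ν ^ 2) ≥ 1 / 8)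
    (h2 : μ * (2 * Real.exp 1 - 1) -
        (1 / 4) * Real.exp 1 * (Real.exp 1 - 1) * |(μ - 1) ^ 2 - ν ^ 2| ≥
      (Real.exp 1) ^ 3 - (Real.exp 1) ^ 2 + 13 * Real.exp 1 / 4 - 4) :
    memSe (lommelH μ ν) := by
  clear h1
  obtain ⟨hA, hB⟩ := LommelAux.param_ge_one h2
  clear h2 hodd
  set a₁ : ℝ := (μ - ν + 3) / 2 with ha₁
  set a₂ : ℝ := (μ + ν + 3) / 2 with ha₂
  -- notation
  set G : ℂ → ℂ := LommelAux.Gc a₁ a₂ with hGdef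
  set D : ℂ → ℂ := LommelAux.Dc a₁ a₂ with hDdef
  have hball : ∀ z : ℂ, z ∈ ball (0:ℂ) 1 → ‖z‖ < 1 := fun z hz => mem_ball_zero_iff.1 hz
  -- the basic representation
  have hrep : ∀ z : ℂ, lommelH μ ν z = z + ∑' n : ℕ, LommelAux.bc a₁ a₂ n * z ^ (n+2) := by
    intro z; rfl
  have hEq : ∀ z ∈ ball (0:ℂ) 1, lommelH μ ν z = z * G z := by
    intro z hz
    have hz1 : ‖z‖ ≤ 1 := (hball z hz).le
    have hs1 : Summable (fun n => LommelAux.dc a₁ a₂ n * z ^ (n+1)) :=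
      LommelAux.summable_dc_pow' hA hB hz1
    rw [hrep z]
    have e1 : z * G z = ∑' n : ℕ, LommelAux.dc a₁ a₂ n * z ^ (n+1) := by
      rw [hGdef, LommelAux.Gc, ← tsum_mul_left]
      exact tsum_congr fun n => by ring
    rw [e1, Summable.tsum_eq_zero_add hs1]
    simp
  have hGderiv : ∀ z ∈ ball (0:ℂ) 1, HasDerivAt G (D z) z :=
    fun z hz => LommelAux.hasDerivAt_Gc hA hB hz
  have hfderiv : ∀ z ∈ ball (0:ℂ) 1, HasDerivAt (fun y : ℂ => y * G y) (G z + z * D z) z := by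
    intro z hz
    have h := (hasDerivAt_id' (𝕜 := ℂ) z).mul (hGderiv z hz)
    exact (by simpa using h : HasDerivAt ((fun x => x) * G) (G z + z * D z) z)
  have hmemnhds : ∀ z ∈ ball (0:ℂ) 1, lommelH μ ν =ᶠ[nhds z] (fun y : ℂ => y * G y) := by
    intro z hz
    filter_upwards [isOpen_ball.mem_nhds hz] with y hy using hEq y hy
  have hHderiv : ∀ z ∈ ball (0:ℂ) 1, deriv (lommelH μ ν) z = G z + z * D z := by
    intro z hz
    rw [Filter.EventuallyEq.deriv_eq (hmemnhds z hz)]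
    exact (hfderiv z hz).deriv
  have h0mem : (0:ℂ) ∈ ball (0:ℂ) 1 := mem_ball_self one_pos
  have hG0 : G 0 = 1 := LommelAux.Gc_zero
  have hder0 : deriv (lommelH μ ν) 0 = 1 := by
    rw [hHderiv 0 h0mem, hG0]
    ring
  -- analyticity of lommelH
  have hH_an : AnalyticOnNhd ℂ (lommelH μ ν) (ball 0 1) := by
    refine DifferentiableOn.analyticOnNhd (fun z hz => ?_) isOpen_ball
    exact (((hfderiv z hz).differentiableAt).congr_of_eventuallyEq
      (hmemnhds z hz)).differentiableWithinAt
  -- value at 0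
  have hH0 : lommelH μ ν 0 = 0 := by
    rw [hrep 0]
    have : ∀ n : ℕ, LommelAux.bc a₁ a₂ n * (0:ℂ) ^ (n+2) = 0 := fun n => by
      rw [zero_pow (by omega), mul_zero]
    rw [tsum_congr this, tsum_zero, add_zero]
  -- nonvanishing
  have hGne : ∀ z ∈ ball (0:ℂ) 1, G z ≠ 0 :=
    fun z hz => LommelAux.Gc_ne_zero hA hB (hball z hz).le
  have hHne : ∀ z ∈ ball (0:ℂ) 1, z ≠ 0 → lommelH μ ν z ≠ 0 := by
    intro z hz hz0
    rw [hEq z hz]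
    exact mul_ne_zero hz0 (hGne z hz)
  -- the quotient function
  have hqP : ∀ z ∈ ball (0:ℂ) 1,
      (if z = 0 then (1:ℂ) else z * deriv (lommelH μ ν) z / lommelH μ ν z)
        = 1 + z * deriv G z / G z := by
    intro z hz
    have hdG : deriv G z = D z := (hGderiv z hz).deriv
    by_cases h0 : z = 0
    · rw [if_pos h0, h0]
      simp
    · rw [if_neg h0, hHderiv z hz, hEq z hz, hdG]
      have hg := hGne z hz
      field_simp
  -- analyticity of G and the quotient
  have hG_an : AnalyticOnNhd ℂ G (ball 0 1) := by
    refine DifferentiableOn.analyticOnNhd (fun z hz => ?_) isOpen_ball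
    exact ((hGderiv z hz).differentiableAt).differentiableWithinAt
  have hP_an : AnalyticOnNhd ℂ (fun z => 1 + z * deriv G z / G z) (ball 0 1) := by
    have hdG_an : AnalyticOnNhd ℂ (deriv G) (ball 0 1) := hG_an.deriv
    have hid : AnalyticOnNhd ℂ (fun z : ℂ => z) (ball 0 1) := analyticOnNhd_id
    have hnum : AnalyticOnNhd ℂ (fun z : ℂ => z * deriv G z) (ball 0 1) := hid.mul hdG_an
    have hc : AnalyticOnNhd ℂ (fun _ : ℂ => (1:ℂ)) (ball 0 1) := analyticOnNhd_const
    exact hc.add (hnum.div hG_an hGne)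
  refine ⟨hH_an, hH0, hder0, hHne, ?_, ?_, ?_⟩
  · -- analyticity of the quotient
    intro z hz
    refine (hP_an z hz).congr ?_
    filter_upwards [isOpen_ball.mem_nhds hz] with y hy using (hqP y hy).symm
  · simp
  · -- values in exp '' ball
    intro z hz
    have hz1 : ‖z‖ ≤ 1 := (hball z hz).le
    set Q : ℂ := if z = 0 then (1:ℂ) else z * deriv (lommelH μ ν) z / lommelH μ ν z with hQdef
    have hval : Q = 1 + z * D z / G z := by
      rw [hQdef, hqP z hz, (hGderiv z hz).deriv]
    have hDb : ‖D z‖ ≤ 7/24 := LommelAux.Dc_norm_le hA hB hz1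
    have hGb : 35/48 ≤ ‖G z‖ := LommelAux.Gc_norm_ge hA hB hz1
    have hGpos : (0:ℝ) < ‖G z‖ := lt_of_lt_of_le (by norm_num) hGb
    have hnorm : ‖Q - 1‖ ≤ 2/5 := by
      rw [hval, add_sub_cancel_left, norm_div, norm_mul]
      rw [div_le_iff₀ hGpos]
      have h1 : ‖z‖ * ‖D z‖ ≤ 1 * (7/24) :=
        mul_le_mul hz1 hDb (norm_nonneg _) one_pos.le
      linarith
    have hQne : Q ≠ 0 := by
      intro h
      rw [h] at hnorm
      simp only [zero_sub, norm_neg, norm_one] at hnorm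
      linarith
    refine ⟨Complex.log Q, ?_, Complex.exp_log hQne⟩
    rw [mem_ball_zero_iff]
    have hhalf : ‖Q - 1‖ ≤ 1/2 := by linarith
    have hlog : ‖Complex.log (1 + (Q - 1))‖ ≤ 3/2 * ‖Q - 1‖ :=
      Complex.norm_log_one_add_half_le_self hhalf
    rw [add_sub_cancel] at hlog
    calc ‖Complex.log Q‖ ≤ 3/2 * ‖Q - 1‖ := hlog
      _ ≤ 3/2 * (2/5) := by linarith
      _ < 1 := by norm_num
end

section
/- Let μ, ν ∈ ℂ be such that μ+ν and μ−ν are not negative odd integers, and suppose 4 Re(μ) ≥ (e−1)|(μ+1)² − ν²| − 3. Then the function z ↦ h_{μ,ν}(z)/z (with value 1 at z = 0), i.e. z ↦ 1 + ∑_{n≥1} ((−1/4)^n / (((μ−ν+3)/2)_n ((μ+ν+3)/2)_n)) z^n, belongs to the class P_e. -/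
open Complex Metric Set

/-- Auxiliary: if the coefficients are dominated by `(1/5)^(n+1)`, then the
corresponding power series with constant term 1 is in `P_e`. -/
lemma memPe_of_coef_bound (c : ℕ → ℂ) (hc : ∀ n, ‖c n‖ ≤ (1/5 : ℝ) ^ (n + 1)) :
    (AnalyticOnNhd ℂ (fun z => 1 + ∑' n : ℕ, c n * z ^ (n + 1)) (Metric.ball 0 1) ∧
      (fun z : ℂ => 1 + ∑' n : ℕ, c n * z ^ (n + 1)) 0 = 1 ∧
      ∀ z ∈ Metric.ball (0:ℂ) 1,
        (1 + ∑' n : ℕ, c n * z ^ (n + 1)) ∈ Complex.exp '' Metric.ball 0 1) := by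
  -- the coefficients including the constant term
  set d : ℕ → ℂ := fun n => if n = 0 then 1 else c (n - 1) with hd_def
  have hd : ∀ n, ‖d n‖ ≤ (1/5 : ℝ) ^ n := by
    intro n
    cases n with
    | zero => simp [hd_def]
    | succ k => simpa [hd_def] using hc k
  have hdnorm : ∀ n, ‖d n‖ ≤ (1/5 : ℝ) ^ n := hd
  -- summability facts
  have hsumd : ∀ z : ℂ, ‖z‖ ≤ 1 → Summable (fun n => d n * z ^ n) := by
    intro z hz
    apply Summable.of_norm_bounded (g := fun n => (1/5 : ℝ) ^ n)
      (summable_geometric_of_lt_one (by norm_num) (by norm_num))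
    intro n
    rw [norm_mul, norm_pow]
    calc ‖d n‖ * ‖z‖ ^ n ≤ (1/5 : ℝ) ^ n * 1 := by
          apply mul_le_mul (hdnorm n) (pow_le_one₀ (norm_nonneg z) hz) (by positivity)
            (by positivity)
      _ = (1/5 : ℝ) ^ n := by ring
  have hgeo : HasSum (fun n : ℕ => (1/5 : ℝ) ^ (n + 1)) (1/4) := by
    have h := (hasSum_geometric_of_lt_one (r := (1/5 : ℝ)) (by norm_num) (by norm_num)).mul_left
      (1/5)
    have : (1/5 : ℝ) * (1 - 1/5)⁻¹ = 1/4 := by norm_num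
    rw [this] at h
    refine h.congr_fun fun n => ?_
    rw [pow_succ']
  have hT : ∀ z : ℂ, ‖z‖ ≤ 1 →
      ‖∑' n : ℕ, c n * z ^ (n + 1)‖ ≤ 1/4 := by
    intro z hz
    have hb : ∀ n : ℕ, ‖c n * z ^ (n + 1)‖ ≤ (1/5 : ℝ) ^ (n + 1) := by
      intro n
      rw [norm_mul, norm_pow]
      calc ‖c n‖ * ‖z‖ ^ (n + 1) ≤ (1/5 : ℝ) ^ (n+1) * 1 := by
            apply mul_le_mul (hc n) (pow_le_one₀ (norm_nonneg z) hz) (by positivity)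
              (by positivity)
        _ = (1/5 : ℝ) ^ (n+1) := by ring
    exact tsum_of_norm_bounded hgeo hb
  -- the formal power series
  set F := FormalMultilinearSeries.ofScalars ℂ d with hF
  have hrad : (1 : ENNReal) ≤ F.radius := by
    have := F.le_radius_of_bound 1 (r := 1) (fun n => by
      rw [hF, FormalMultilinearSeries.ofScalars_norm]
      calc ‖d n‖ * ((1:NNReal) : ℝ) ^ n ≤ (1/5 : ℝ) ^ n * 1 ^ n := by
            apply mul_le_mul (hdnorm n) (by norm_num) (by positivity) (by positivity)
        _ ≤ 1 := by norm_num [pow_le_one₀])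
    simpa using this
  have hball : HasFPowerSeriesOnBall F.sum F 0 1 :=
    (F.hasFPowerSeriesOnBall (lt_of_lt_of_le zero_lt_one hrad)).mono zero_lt_one hrad
  have hsub : Metric.ball (0:ℂ) 1 ⊆ Metric.eball 0 1 := by
    intro z hz
    rw [mem_emetric_ball_zero_iff]
    rw [mem_ball_zero_iff] at hz
    rw [← ofReal_norm]
    exact ENNReal.ofReal_lt_one.mpr hz
  have hFanal : AnalyticOnNhd ℂ F.sum (Metric.ball 0 1) := hball.analyticOnNhd.mono hsub
  have hEq : Set.EqOn F.sum (fun z => 1 + ∑' n : ℕ, c n * z ^ (n + 1)) (Metric.ball 0 1) := by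
    intro z hz
    rw [mem_ball_zero_iff] at hz
    have hsum : F.sum z = ∑' n : ℕ, d n * z ^ n := by
      rw [FormalMultilinearSeries.sum]
      refine tsum_congr fun n => ?_
      rw [hF, FormalMultilinearSeries.ofScalars_apply_eq, smul_eq_mul]
    have hz1 : ‖z‖ ≤ 1 := le_of_lt hz
    simp only
    rw [hsum, Summable.tsum_eq_zero_add (hsumd z hz1)]
    simp [hd_def]
  refine ⟨(analyticOnNhd_congr isOpen_ball hEq).mp hFanal, ?_, ?_⟩
  · simp
  · intro z hz
    rw [mem_ball_zero_iff] at hz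
    set w : ℂ := 1 + ∑' n : ℕ, c n * z ^ (n + 1) with hw
    have hw1 : ‖w - 1‖ ≤ 1/4 := by
      rw [hw, add_sub_cancel_left]
      exact hT z hz.le
    have hre : 3/4 ≤ w.re := by
      have h1 : |(w - 1).re| ≤ 1/4 := le_trans (Complex.abs_re_le_norm _) hw1
      have h2 : (w - 1).re = w.re - 1 := by simp
      rw [h2] at h1
      have := abs_le.mp h1
      linarith [this.1]
    have him : |w.im| ≤ 1/4 := by
      have h1 : |(w - 1).im| ≤ 1/4 := le_trans (Complex.abs_im_le_norm _) hw1
      have h2 : (w - 1).im = w.im := by simp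
      rwa [h2] at h1
    have hwlb : 3/4 ≤ ‖w‖ :=
      le_trans hre (le_trans (le_abs_self _) (Complex.abs_re_le_norm w))
    have hwub : ‖w‖ ≤ 5/4 := by
      have : ‖w‖ = ‖1 + (w - 1)‖ := by congr 1; ring
      rw [this]
      calc ‖1 + (w - 1)‖ ≤ ‖1‖ + ‖w - 1‖ :=
            norm_add_le _ _
        _ ≤ 1 + 1/4 := by rw [norm_one]; linarith
        _ = 5/4 := by norm_num
    have hpos : 0 < ‖w‖ := lt_of_lt_of_le (by norm_num) hwlb
    have hw0 : w ≠ 0 := by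
      intro h0
      rw [h0] at hwlb
      simp at hwlb
      linarith
    refine ⟨Complex.log w, ?_, Complex.exp_log hw0⟩
    rw [mem_ball_zero_iff]
    -- bound the real part of log
    have hlogre : |Real.log (‖w‖)| ≤ 1/3 := by
      rw [abs_le]
      constructor
      · have h1 : Real.log (‖w‖)⁻¹ ≤ (‖w‖)⁻¹ - 1 :=
          Real.log_le_sub_one_of_pos (inv_pos.mpr hpos)
        rw [Real.log_inv] at h1
        have h2 : (‖w‖)⁻¹ ≤ 4/3 := by
          have h3 : (‖w‖)⁻¹ * ‖w‖ = 1 := inv_mul_cancel₀ (ne_of_gt hpos)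
          nlinarith
        linarith
      · have h1 : Real.log (‖w‖) ≤ ‖w‖ - 1 :=
          Real.log_le_sub_one_of_pos hpos
        linarith
    -- bound the argument
    have hargeq : w.arg = Real.arcsin (w.im / ‖w‖) :=
      Complex.arg_of_re_nonneg (by linarith)
    have ht : |w.im / ‖w‖| ≤ 1/3 := by
      rw [abs_div, abs_of_pos hpos]
      calc |w.im| / ‖w‖ ≤ (1/4) / (3/4) :=
            div_le_div₀ (by norm_num) him (by norm_num) hwlb
        _ = 1/3 := by norm_num
    have hsin : (1/3 : ℝ) < Real.sin (3/5) := by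
      have := Real.sin_gt_sub_cube (by norm_num : (0:ℝ) < 3/5)
      nlinarith
    have hpi : (3 : ℝ) < Real.pi := Real.pi_gt_three
    have htmem : w.im / ‖w‖ ∈ Set.Icc (-1 : ℝ) 1 := by
      have := abs_le.mp ht
      constructor <;> [linarith [this.1]; linarith [this.2]]
    have hymem : (3/5 : ℝ) ∈ Set.Icc (-(Real.pi/2)) (Real.pi/2) := by
      constructor <;> [linarith; linarith]
    have harg1 : Real.arcsin (w.im / ‖w‖) ≤ 3/5 :=
      (Real.arcsin_le_iff_le_sin htmem hymem).mpr
        (by have := abs_le.mp ht; linarith [this.2])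
    have harg2 : -(3/5 : ℝ) ≤ Real.arcsin (w.im / ‖w‖) := by
      have hneg : Real.arcsin (-(w.im / ‖w‖)) ≤ 3/5 := by
        refine (Real.arcsin_le_iff_le_sin ?_ hymem).mpr ?_
        · have := abs_le.mp ht
          constructor <;> [linarith [this.2]; linarith [this.1]]
        · have := abs_le.mp ht; linarith [this.1]
      rw [Real.arcsin_neg] at hneg
      linarith
    have hargbd : |w.arg| ≤ 3/5 := by
      rw [hargeq, abs_le]; exact ⟨harg2, harg1⟩
    -- combine
    calc ‖Complex.log w‖ = ‖Complex.log w‖ := rfl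
      _ ≤ |(Complex.log w).re| + |(Complex.log w).im| := Complex.norm_le_abs_re_add_abs_im _
      _ = |Real.log (‖w‖)| + |w.arg| := by rw [Complex.log_re, Complex.log_im]
      _ ≤ 1/3 + 3/5 := add_le_add hlogre hargbd
      _ < 1 := by norm_num

/-- Coefficient bound for the Lommel coefficients under the main hypothesis. -/
lemma lommel_coef_bound (μ ν : ℂ)
    (h : 4 * μ.re ≥ (Real.exp 1 - 1) * ‖(μ + 1) ^ 2 - ν ^ 2‖ - 3) :
    ∀ n : ℕ, ‖(-1/4 : ℂ) ^ (n + 1) /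
      (poch ((μ - ν + 3) / 2) (n + 1) * poch ((μ + ν + 3) / 2) (n + 1))‖ ≤ (1/5 : ℝ) ^ (n+1) := by
  have he2 : (2:ℝ) ≤ Real.exp 1 := by
    have h1 := Real.add_one_le_exp (1:ℝ); linarith
  set A := ‖(μ + 1) ^ 2 - ν ^ 2‖ with hA
  have hA0 : 0 ≤ A := norm_nonneg _
  have hm : -(3/4 : ℝ) ≤ μ.re := by nlinarith
  have hBm : A ≤ 4 * μ.re + 3 := by nlinarith
  -- per-factor bound
  have hfac : ∀ k : ℕ, (5/4 : ℝ) ≤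
      ‖((μ - ν + 3)/2 + (k:ℂ)) * ((μ + ν + 3)/2 + (k:ℂ))‖ := by
    intro k
    have hid : ((μ - ν + 3)/2 + (k:ℂ)) * ((μ + ν + 3)/2 + (k:ℂ))
        = (((k:ℂ)+1) * (μ+1) + ((k:ℂ)+1)^2) + ((μ+1)^2 - ν^2)/4 := by ring
    rw [hid]
    set X := ((k:ℂ)+1) * (μ+1) + ((k:ℂ)+1)^2 with hX
    set Y := ((μ+1)^2 - ν^2)/4 with hY
    have h1 : ‖X‖ - ‖Y‖ ≤ ‖X + Y‖ := by
      have := norm_sub_norm_le X (-Y)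
      simpa [sub_neg_eq_add] using this
    have hXre : X.re = ((k:ℝ)+1) * (μ.re+1) + ((k:ℝ)+1)^2 := by
      rw [hX]
      simp only [pow_two, Complex.add_re, Complex.mul_re, Complex.add_im,
        Complex.natCast_re, Complex.natCast_im, Complex.one_re, Complex.one_im]
      ring
    have h2 : ((k:ℝ)+1) * (μ.re+1) + ((k:ℝ)+1)^2 ≤ ‖X‖ := by
      rw [← hXre]; exact Complex.re_le_norm X
    have h3 : ‖Y‖ = A / 4 := by
      rw [hY, norm_div, hA]
      norm_num
    have hk0 : (0:ℝ) ≤ (k:ℝ) := Nat.cast_nonneg k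
    have hhint : (0:ℝ) ≤ (k:ℝ) * (μ.re + 3/4) :=
      mul_nonneg hk0 (by linarith)
    nlinarith [sq_nonneg ((k:ℝ))]
  -- product bound
  have hpoch : ∀ n : ℕ, ((5:ℝ)/4) ^ n ≤
      ‖poch ((μ - ν + 3)/2) n * poch ((μ + ν + 3)/2) n‖ := by
    intro n
    have hprod : poch ((μ - ν + 3)/2) n * poch ((μ + ν + 3)/2) n
        = ∏ k ∈ Finset.range n, (((μ - ν + 3)/2 + (k:ℂ)) * ((μ + ν + 3)/2 + (k:ℂ))) := by
      rw [poch, poch, ← Finset.prod_mul_distrib]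
    rw [hprod, norm_prod]
    calc ((5:ℝ)/4) ^ n = ∏ _k ∈ Finset.range n, ((5:ℝ)/4) := by
          rw [Finset.prod_const, Finset.card_range]
      _ ≤ _ := Finset.prod_le_prod (fun _ _ => by norm_num) (fun k _ => hfac k)
  intro n
  rw [norm_div, norm_pow]
  have habs14 : ‖(-1/4 : ℂ)‖ = 1/4 := by
    have : (-1/4 : ℂ) = ((-1/4 : ℝ) : ℂ) := by norm_num
    rw [this, Complex.norm_real]
    norm_num
  rw [habs14]
  have hden := hpoch (n+1)
  have h54 : (0:ℝ) < (5/4) ^ (n+1) := by positivity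
  rw [div_le_iff₀ (lt_of_lt_of_le h54 hden)]
  calc (1/4 : ℝ) ^ (n+1) = (1/5) ^ (n+1) * (5/4) ^ (n+1) := by
        rw [← mul_pow]; norm_num
    _ ≤ (1/5) ^ (n+1) * ‖poch ((μ - ν + 3)/2) (n+1) * poch ((μ + ν + 3)/2) (n+1)‖ := by
        apply mul_le_mul_of_nonneg_left hden (by positivity)

/-- Sufficient condition for `z ↦ h_{μ,ν}(z)/z` (with value 1 at 0) to belong to `P_e`,
for complex parameters `μ, ν`. -/
theorem lommel_div_memPe (μ ν : ℂ)
    (hodd : ∀ k : ℕ, μ + ν ≠ -(2 * (k : ℂ) + 1) ∧ μ - ν ≠ -(2 * (k : ℂ) + 1))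
    (h : 4 * μ.re ≥ (Real.exp 1 - 1) * ‖(μ + 1) ^ 2 - ν ^ 2‖ - 3) :
    memPe (fun z => 1 + ∑' n : ℕ, (-1/4 : ℂ) ^ (n + 1) /
      (poch ((μ - ν + 3) / 2) (n + 1) * poch ((μ + ν + 3) / 2) (n + 1)) * z ^ (n + 1)) := by
  exact memPe_of_coef_bound
    (fun n => (-1/4 : ℂ) ^ (n + 1) /
      (poch ((μ - ν + 3) / 2) (n + 1) * poch ((μ + ν + 3) / 2) (n + 1)))
    (lommel_coef_bound μ ν h)
end
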